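/- arXiv:1412.7666 — 7 statements merged into one kernel-verified Lean document; each statement's English description precedes it below -/
import Mathlib

section
/- The ring (R_n, ∗) of degree-n components of formal power series in variables x_0, x_1, x_2, …, with product defined on monomials by x_{i_1,…,i_n} ∗ x_{j_1,…,j_n} = x_{i_1+j_1,…,i_n+j_n} (indices written in weakly increasing order) and extended bilinearly, has no zero divisors. -/
def MonFun (n : ℕ) (d : Fin n →₀ ℕ) : Prop := Monotone fun i => d i

noncomputable def Rn (n : ℕ) : Subring (MvPowerSeries (Fin n) ℂ) where
  carrier := {f | ∀ d : Fin n →₀ ℕ, ¬ MonFun n d → MvPowerSeries.coeff d f = 0}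
  zero_mem' := by intro d _; simp
  one_mem' := by
    intro d hd
    rw [MvPowerSeries.coeff_one]
    rw [if_neg]
    intro h
    exact hd (by subst h; intro a b _; simp [MonFun])
  add_mem' := by
    intro a b ha hb d hd
    rw [map_add, ha d hd, hb d hd, add_zero]
  neg_mem' := by
    intro a ha d hd
    rw [map_neg, ha d hd, neg_zero]
  mul_mem' := by
    intro a b ha hb d hd
    rw [MvPowerSeries.coeff_mul]
    apply Finset.sum_eq_zero
    intro p hp
    rw [Finset.HasAntidiagonal.mem_antidiagonal] at hp
    by_cases h1 : MonFun n p.1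
    · by_cases h2 : MonFun n p.2
      · exact absurd (by
          subst hp
          intro i j hij
          simpa using add_le_add (h1 hij) (h2 hij)) hd
      · rw [hb p.2 h2, mul_zero]
    · rw [ha p.1 h1, zero_mul]

theorem stmt2 (n : ℕ) : ∀ a b : Rn n, a * b = 0 → a = 0 ∨ b = 0 := by
  intro a b hab
  have : (a : MvPowerSeries (Fin n) ℂ) * b = 0 := by
    exact_mod_cast congrArg (Subtype.val) hab
  rcases mul_eq_zero.mp this with h | h
  · exact Or.inl (Subtype.ext h)
  · exact Or.inr (Subtype.ext h)
end

section
/- For a fixed standard Young tableau P of shape λ ⊢ n, the map b_St : 𝔔 ↦ (q_{P,Q(𝔔)}, Π(𝔔 − q_{P,Q(𝔔)})) is a bijection between the set of reverse plane partitions of shape λ and the product of the set of all P-pedestals {q_{P,Q} : Q a standard Young tableau of shape λ} with the set of partitions into at most n parts. -/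
/-- The type of nodes (cells) of a Young diagram. -/
abbrev Cell (μ : YoungDiagram) : Type := {c : ℕ × ℕ // c ∈ μ.cells}

/-- `T` is a standard Young tableau of shape `μ` (with `n = |μ|` nodes):
a bijection from the nodes to `Fin n` increasing in both coordinates,
i.e. compatible with the natural partial (product) order on nodes. -/
def IsSYT (μ : YoungDiagram) (n : ℕ) (T : Cell μ ≃ Fin n) : Prop :=
  ∀ a b : Cell μ, a.1 ≤ b.1 → T a ≤ T b

/-- A reverse plane partition of shape `μ`: a filling by non-negative
integers weakly increasing along rows and columns. -/
def IsRPP (μ : YoungDiagram) (f : Cell μ → ℕ) : Prop :=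
  ∀ a b : Cell μ, a.1 ≤ b.1 → f a ≤ f b

/-- `l` (0-indexed) is a `(P,Q)`-disagreement position: the `(l+1)`-st node in
`Q`-order precedes the `l`-th node in `P`-order. -/
def disag {S : Type} {n : ℕ} (P Q : S ≃ Fin n) (l : ℕ) : Prop :=
  ∃ h : l + 1 < n, P (Q.symm ⟨l + 1, h⟩) < P (Q.symm ⟨l, Nat.lt_of_succ_lt h⟩)

open Classical in
/-- The `P`-pedestal of `Q`: `q_{P,Q}(α_k)` is the number of
`(P,Q)`-disagreement positions `l < k`, where `α_k` is the `k`-th node in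
`Q`-order. -/
noncomputable def ped {S : Type} {n : ℕ} (P Q : S ≃ Fin n) (s : S) : ℕ :=
  ((Finset.range (Q s : ℕ)).filter fun l => disag P Q l).card

/-- `Q` is the linear order induced by the filling `f` with `P`-tie-breaking:
`a` comes before `b` iff `f a < f b`, or `f a = f b` and `a ≺_P b`. -/
def Compat {S : Type} {n : ℕ} (P : S ≃ Fin n) (f : S → ℕ) (Q : S ≃ Fin n) : Prop :=
  ∀ a b : S, Q a < Q b ↔ (f a < f b ∨ (f a = f b ∧ P a < P b))

open Classical in
/-- The tableau `Q(𝔔)` induced by the filling `f = 𝔔` with `P`-tie-breaking. -/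
noncomputable def QOf {S : Type} {n : ℕ} (P : S ≃ Fin n) (f : S → ℕ) : S ≃ Fin n :=
  if h : ∃ Q : S ≃ Fin n, Compat P f Q then h.choose else P

/-- The map `b_St : 𝔔 ↦ (q_{P,Q(𝔔)}, Π(𝔔 − q_{P,Q(𝔔)}))`; the partition
`Π(R)` with at most `n` parts is recorded as the multiset of the `n` values
of `R` (zero parts included). -/
noncomputable def bSt {S : Type} [Fintype S] {n : ℕ} (P : S ≃ Fin n) (f : S → ℕ) :
    (S → ℕ) × Multiset ℕ :=
  (ped P (QOf P f), Finset.univ.val.map fun a => f a - ped P (QOf P f) a)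

section Aux
open Classical Finset

variable {S : Type} {n : ℕ}

noncomputable def pcount (P Q : S ≃ Fin n) (k : ℕ) : ℕ :=
  ((Finset.range k).filter fun l => disag P Q l).card

lemma ped_eq (P Q : S ≃ Fin n) (s : S) : ped P Q s = pcount P Q (Q s) := rfl

lemma pcount_mono (P Q : S ≃ Fin n) {k j : ℕ} (h : k ≤ j) : pcount P Q k ≤ pcount P Q j :=
  Finset.card_le_card (Finset.filter_subset_filter _ (Finset.range_subset_range.mpr h))

lemma pcount_succ (P Q : S ≃ Fin n) (l : ℕ) :
    pcount P Q (l + 1) = pcount P Q l + (if disag P Q l then 1 else 0) := by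
  unfold pcount
  rw [Finset.range_add_one, Finset.filter_insert]
  split
  · rw [Finset.card_insert_of_notMem (by simp)]
  · simp

lemma chainP (P Q : S ≃ Fin n) :
    ∀ (j i : ℕ) (hi : i < n) (hj : j < n), i < j →
      (∀ l, i ≤ l → l < j → ¬ disag P Q l) →
      P (Q.symm ⟨i, hi⟩) < P (Q.symm ⟨j, hj⟩) := by
  intro j
  induction j with
  | zero => intro i hi hj hij; omega
  | succ j ih =>
    intro i hi hj hij hnd
    have hjn : j < n := Nat.lt_of_succ_lt hj
    have hstep : P (Q.symm ⟨j, hjn⟩) < P (Q.symm ⟨j + 1, hj⟩) := by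
      have hnd' := hnd j (by omega) (by omega)
      simp only [disag, not_exists, not_lt] at hnd'
      refine lt_of_le_of_ne (hnd' hj) ?_
      intro hEq
      have : Q.symm ⟨j, hjn⟩ = Q.symm ⟨j + 1, hj⟩ := P.injective hEq
      have : (⟨j, hjn⟩ : Fin n) = ⟨j + 1, hj⟩ := Q.symm.injective this
      simp [Fin.ext_iff] at this
    rcases Nat.lt_or_ge i j with h | h
    · exact lt_trans (ih i hi hjn h (fun l hl hl' => hnd l hl (by omega))) hstep
    · have : i = j := by omega
      subst this
      exact hstep

lemma compat_step {P Q : S ≃ Fin n} {f : S → ℕ} (hC : Compat P f Q) (l : ℕ) (h : l + 1 < n) :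
    f (Q.symm ⟨l, Nat.lt_of_succ_lt h⟩) + (if disag P Q l then 1 else 0) ≤ f (Q.symm ⟨l + 1, h⟩) := by
  have hQ : Q (Q.symm ⟨l, Nat.lt_of_succ_lt h⟩) < Q (Q.symm ⟨l + 1, h⟩) := by
    simp [Fin.lt_def]
  have hlex := (hC _ _).mp hQ
  split
  · rename_i hd
    obtain ⟨h', hPlt⟩ := hd
    rcases hlex with h1 | ⟨h1, h2⟩
    · omega
    · exact absurd h2 (not_lt.mpr (le_of_lt hPlt))
  · rcases hlex with h1 | ⟨h1, h2⟩ <;> omega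

lemma compat_accum {P Q : S ≃ Fin n} {f : S → ℕ} (hC : Compat P f Q)
    (k : ℕ) (hk : k < n) :
    ∀ (j : ℕ) (hj : j < n), k ≤ j →
      f (Q.symm ⟨k, hk⟩) + (pcount P Q j - pcount P Q k) ≤ f (Q.symm ⟨j, hj⟩) := by
  intro j
  induction j with
  | zero =>
    intro hj hkj
    have : k = 0 := by omega
    subst this
    simp
  | succ j ih =>
    intro hj hkj
    rcases Nat.lt_or_ge k (j + 1) with h | h
    · have hjn : j < n := Nat.lt_of_succ_lt hj
      have h1 := ih hjn (by omega)
      have h2 := compat_step hC j hj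
      have h3 := pcount_succ P Q j
      have h4 := pcount_mono P Q (show k ≤ j by omega)
      by_cases hd : disag P Q j <;> simp [hd] at h2 h3 <;> omega
    · have : k = j + 1 := by omega
      subst this
      simp

lemma ped_le {P Q : S ≃ Fin n} {f : S → ℕ} (hC : Compat P f Q) (s : S) : ped P Q s ≤ f s := by
  have h0 : (0 : ℕ) < n := (Q s).pos
  have h := compat_accum hC 0 h0 (Q s) (Q s).isLt (Nat.zero_le _)
  rw [Fin.eta, Q.symm_apply_apply] at h
  have h2 : pcount P Q 0 = 0 := by simp [pcount]
  rw [ped_eq]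
  omega

lemma diff_mono {P Q : S ≃ Fin n} {f : S → ℕ} (hC : Compat P f Q) :
    Monotone fun k : Fin n => f (Q.symm k) - ped P Q (Q.symm k) := by
  intro k j hkj
  have hped : ∀ i : Fin n, ped P Q (Q.symm i) = pcount P Q i := by
    intro i; rw [ped_eq, Q.apply_symm_apply]
  have h1 := compat_accum hC k k.isLt j j.isLt hkj
  rw [Fin.eta, Fin.eta] at h1
  have h2 := ped_le hC (Q.symm k)
  have h3 := pcount_mono P Q (show (k : ℕ) ≤ j from hkj)
  simp only [hped] at h2 ⊢
  omega

lemma compat_forward (P Q : S ≃ Fin n) {r : Fin n → ℕ} (hr : Monotone r) {a b : S}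
    (h : Q a < Q b) :
    (ped P Q a + r (Q a) < ped P Q b + r (Q b)) ∨
      (ped P Q a + r (Q a) = ped P Q b + r (Q b) ∧ P a < P b) := by
  have h1 : pcount P Q (Q a) ≤ pcount P Q (Q b) := pcount_mono _ _ h.le
  have h2 : r (Q a) ≤ r (Q b) := hr h.le
  rw [ped_eq, ped_eq]
  by_cases heq : pcount P Q (Q a) + r (Q a) = pcount P Q (Q b) + r (Q b)
  · right
    refine ⟨heq, ?_⟩
    have hpc : pcount P Q (Q a) = pcount P Q (Q b) := by omega
    have hfe : (Finset.range (Q a : ℕ)).filter (fun l => disag P Q l)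
        = (Finset.range (Q b : ℕ)).filter (fun l => disag P Q l) :=
      Finset.eq_of_subset_of_card_le
        (Finset.filter_subset_filter _ (Finset.range_subset_range.mpr h.le)) (le_of_eq hpc.symm)
    have hnd : ∀ l, (Q a : ℕ) ≤ l → l < (Q b : ℕ) → ¬ disag P Q l := by
      intro l hl hl' hd
      have hm : l ∈ (Finset.range (Q b : ℕ)).filter (fun l => disag P Q l) :=
        Finset.mem_filter.mpr ⟨Finset.mem_range.mpr hl', hd⟩
      rw [← hfe] at hm
      have := Finset.mem_range.mp (Finset.mem_filter.mp hm).1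
      omega
    have hchain := chainP P Q (Q b) (Q a) (Q a).isLt (Q b).isLt h hnd
    simpa using hchain
  · left
    omega

lemma lex_asymm {x y : ℕ} {p q : Fin n}
    (h1 : x < y ∨ (x = y ∧ p < q))
    (h2 : y < x ∨ (y = x ∧ q < p)) : False := by
  rcases h1 with h1 | ⟨h1, h1'⟩ <;> rcases h2 with h2 | ⟨h2, h2'⟩
  · omega
  · omega
  · omega
  · exact absurd h2' (not_lt.mpr h1'.le)

lemma compat_ped_add (P Q : S ≃ Fin n) {r : Fin n → ℕ} (hr : Monotone r) :
    Compat P (fun s => ped P Q s + r (Q s)) Q := by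
  intro a b
  constructor
  · exact fun h => compat_forward P Q hr h
  · intro hrhs
    rcases lt_trichotomy (Q a) (Q b) with h | h | h
    · exact h
    · have hab : a = b := Q.injective h
      subst hab
      rcases hrhs with h1 | ⟨h1, h2⟩
      · omega
      · exact absurd h2 (lt_irrefl _)
    · exact absurd hrhs (fun hr' => lex_asymm hr' (compat_forward P Q hr h))

lemma compat_ped (P Q : S ≃ Fin n) : Compat P (ped P Q) Q := by
  have := compat_ped_add P Q (r := fun _ => 0) monotone_const
  simpa using this

lemma compat_unique {P Q Q' : S ≃ Fin n} {f : S → ℕ}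
    (hC : Compat P f Q) (hC' : Compat P f Q') : Q = Q' := by
  have key : ∀ a b : S, Q a < Q b ↔ Q' a < Q' b := by
    intro a b; rw [hC a b, ← hC' a b]
  have hmono : StrictMono fun i : Fin n => Q' (Q.symm i) := by
    intro i j hij
    have : Q (Q.symm i) < Q (Q.symm j) := by simpa using hij
    exact (key _ _).mp this
  have hid : StrictMono (id : Fin n → Fin n) := strictMono_id
  have hrange : Set.range (fun i : Fin n => Q' (Q.symm i)) = Set.range (id : Fin n → Fin n) := by
    rw [Set.range_id]
    exact Set.range_eq_univ.mpr fun j => ⟨Q (Q'.symm j), by simp⟩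
  haveI : WellFoundedLT (Fin n) := inferInstance
  have := (StrictMono.range_inj (β := Fin n) (γ := Fin n) hmono hid).mp hrange
  ext a
  have h2 : Q' a = Q a := by simpa using congrFun this (Q a)
  exact congrArg Fin.val h2.symm

lemma natlex {x y u v : ℕ} (hx : x < n) (hy : y < n) :
    x + u * n < y + v * n ↔ (u < v ∨ (u = v ∧ x < y)) := by
  constructor
  · intro h
    rcases Nat.lt_trichotomy u v with h' | h' | h'
    · exact Or.inl h'
    · subst h'
      exact Or.inr ⟨rfl, by omega⟩
    · exfalso
      have hle : (v + 1) * n ≤ u * n := Nat.mul_le_mul_right n h'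
      rw [add_one_mul] at hle
      omega
  · rintro (h | ⟨rfl, h⟩)
    · have hle : (u + 1) * n ≤ v * n := Nat.mul_le_mul_right n h
      rw [add_one_mul] at hle
      omega
    · omega

lemma compat_exists (P : S ≃ Fin n) (f : S → ℕ) : ∃ Q : S ≃ Fin n, Compat P f Q := by
  set key : Fin n → ℕ := fun k => (k : ℕ) + f (P.symm k) * n with hkey
  have hinj : Function.Injective key := by
    intro i j h
    simp only [hkey] at h
    have hi := i.isLt
    have hj := j.isLt
    have : ((i : ℕ) + f (P.symm i) * n) % n = ((j : ℕ) + f (P.symm j) * n) % n := by rw [h]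
    rw [Nat.add_mul_mod_self_right, Nat.add_mul_mod_self_right,
      Nat.mod_eq_of_lt hi, Nat.mod_eq_of_lt hj] at this
    exact Fin.ext this
  set σ := Tuple.sort key with hσ
  have hmono : StrictMono (key ∘ σ) :=
    (Tuple.monotone_sort key).strictMono_of_injective (hinj.comp σ.injective)
  refine ⟨P.trans σ.symm, ?_⟩
  intro a b
  have hQa : σ (σ.symm (P a)) = P a := σ.apply_symm_apply _
  have hQb : σ (σ.symm (P b)) = P b := σ.apply_symm_apply _
  have hiff : σ.symm (P a) < σ.symm (P b) ↔ key (P a) < key (P b) := by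
    rw [← hmono.lt_iff_lt (a := σ.symm (P a)) (b := σ.symm (P b))]
    simp only [Function.comp_apply, hQa, hQb]
  have hkeya : key (P a) = (P a : ℕ) + f a * n := by simp [hkey]
  have hkeyb : key (P b) = (P b : ℕ) + f b * n := by simp [hkey]
  calc (P.trans σ.symm) a < (P.trans σ.symm) b
      ↔ σ.symm (P a) < σ.symm (P b) := Iff.rfl
    _ ↔ key (P a) < key (P b) := hiff
    _ ↔ (f a < f b ∨ (f a = f b ∧ P a < P b)) := by
        rw [hkeya, hkeyb, natlex (P a).isLt (P b).isLt]
        simp only [Fin.lt_def]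

lemma compat_QOf (P : S ≃ Fin n) (f : S → ℕ) : Compat P f (QOf P f) := by
  have hex := compat_exists P f
  unfold QOf
  rw [dif_pos hex]
  exact hex.choose_spec

lemma QOf_eq (P : S ≃ Fin n) {f : S → ℕ} {Q : S ≃ Fin n} (hC : Compat P f Q) : QOf P f = Q :=
  compat_unique (compat_QOf P f) hC

lemma syt_of_compat {μ : YoungDiagram} {P Q : Cell μ ≃ Fin n} {f : Cell μ → ℕ}
    (hP : IsSYT μ n P) (hf : IsRPP μ f) (hC : Compat P f Q) : IsSYT μ n Q := by
  intro a b hab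
  rcases eq_or_ne a b with rfl | hne
  · exact le_refl _
  · have hfle : f a ≤ f b := hf a b hab
    have hPlt : P a < P b := lt_of_le_of_ne (hP a b hab) (fun h => hne (P.injective h))
    have hQ : Q a < Q b := by
      rw [hC a b]
      rcases Nat.lt_or_ge (f a) (f b) with h | h
      · exact Or.inl h
      · exact Or.inr ⟨le_antisymm hfle h, hPlt⟩
    exact hQ.le

lemma multiset_map_univ (u : Fin n → ℕ) :
    ((Finset.univ.val.map u : Multiset ℕ)) = ↑(List.ofFn u) := by
  rw [List.ofFn_eq_map, Fin.univ_def]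
  rfl

lemma mono_eq_of_map_univ_eq {u v : Fin n → ℕ} (hu : Monotone u) (hv : Monotone v)
    (h : (Finset.univ.val.map u : Multiset ℕ) = Finset.univ.val.map v) : u = v := by
  rw [multiset_map_univ, multiset_map_univ, Multiset.coe_eq_coe] at h
  exact List.ofFn_injective (List.Perm.eq_of_sortedLE (hu.sortedLE_ofFn) (hv.sortedLE_ofFn) h)

lemma map_univ_comp [Fintype S] (Q : S ≃ Fin n) (h : S → ℕ) :
    ((Finset.univ : Finset S).val.map h : Multiset ℕ)
      = (Finset.univ : Finset (Fin n)).val.map (fun k => h (Q.symm k)) := by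
  rw [← Finset.map_univ_equiv Q.symm, Finset.map_val, Multiset.map_map]
  rfl

lemma exists_mono_ofMultiset {m : Multiset ℕ} (hm : Multiset.card m = n) :
    ∃ r : Fin n → ℕ, Monotone r ∧ ((Finset.univ.val.map r : Multiset ℕ)) = m := by
  set L := m.sort (· ≤ ·) with hL
  have hlen : L.length = n := by rw [hL, Multiset.length_sort, hm]
  refine ⟨fun k => L.get (Fin.cast hlen.symm k), ?_, ?_⟩
  · intro i j hij
    exact (Multiset.pairwise_sort m (· ≤ ·)).rel_get_of_le hij
  · rw [multiset_map_univ]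
    have hofn : List.ofFn (fun k : Fin n => L.get (Fin.cast hlen.symm k)) = L := by
      apply List.ext_getElem
      · simp [hlen]
      · intro i h1 h2
        simp [List.getElem_ofFn]
    rw [hofn, hL, Multiset.sort_eq]

end Aux


/-- for a fixed standard tableau `P` of shape `λ ⊢ n`, the map
`b_St` is a bijection from the set of reverse plane partitions of shape `λ`
onto the product of the set of `P`-pedestals with the set of partitions into
at most `n` parts (recorded as multisets of `n` natural numbers). -/
theorem stmt4 (μ : YoungDiagram) (n : ℕ) (hn : μ.card = n)
    (P : Cell μ ≃ Fin n) (hP : IsSYT μ n P) :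
    Set.BijOn (bSt P) {f : Cell μ → ℕ | IsRPP μ f}
      (({g : Cell μ → ℕ | ∃ Q : Cell μ ≃ Fin n, IsSYT μ n Q ∧ g = ped P Q}) ×ˢ
        {m : Multiset ℕ | Multiset.card m = n}) := by
  classical
  have hcardS : Fintype.card (Cell μ) = n := by
    rw [Fintype.card_coe]
    exact hn
  refine ⟨?_, ?_, ?_⟩
  · -- MapsTo
    intro f hf
    have hC := compat_QOf P f
    rw [Set.mem_prod]
    constructor
    · exact ⟨QOf P f, syt_of_compat hP hf hC, rfl⟩
    · simp only [bSt, Set.mem_setOf_eq, Multiset.card_map]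
      show Finset.univ.card = n
      rw [Finset.card_univ, hcardS]
  · -- InjOn
    intro f1 h1 f2 h2 heq
    have hC1 := compat_QOf P f1
    have hC2 := compat_QOf P f2
    have hped : ped P (QOf P f1) = ped P (QOf P f2) := congrArg Prod.fst heq
    have hQeq : QOf P f2 = QOf P f1 :=
      compat_unique (compat_ped P (QOf P f2)) (hped ▸ compat_ped P (QOf P f1))
    have hC2' : Compat P f2 (QOf P f1) := hQeq ▸ hC2
    have h5 := congrArg Prod.snd heq
    simp only [bSt] at h5
    rw [hQeq] at h5
    rw [map_univ_comp (QOf P f1), map_univ_comp (QOf P f1)] at h5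
    have hfun := mono_eq_of_map_univ_eq (diff_mono hC1) (diff_mono hC2') h5
    funext s
    have h6 := congrFun hfun ((QOf P f1) s)
    simp only [Equiv.symm_apply_apply] at h6
    have l1 := ped_le hC1 s
    have l2 := ped_le hC2' s
    omega
  · -- SurjOn
    rintro ⟨g, m⟩ hgm
    rw [Set.mem_prod] at hgm
    obtain ⟨⟨Q, hQsyt, rfl⟩, hm⟩ := hgm
    obtain ⟨r, hrmono, hrm⟩ := exists_mono_ofMultiset hm
    have hC : Compat P (fun s => ped P Q s + r (Q s)) Q := compat_ped_add P Q hrmono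
    have hQOf : QOf P (fun s => ped P Q s + r (Q s)) = Q := QOf_eq P hC
    refine ⟨fun s => ped P Q s + r (Q s), ?_, ?_⟩
    · show IsRPP μ _
      intro a b hab
      rcases eq_or_ne a b with rfl | hne
      · exact le_refl _
      · have hQle : Q a ≤ Q b := hQsyt a b hab
        have hp : ped P Q a ≤ ped P Q b := by
          rw [ped_eq, ped_eq]
          exact pcount_mono P Q hQle
        exact Nat.add_le_add hp (hrmono hQle)
    · simp only [bSt, hQOf]
      refine Prod.ext rfl ?_
      show ((Finset.univ.val.map fun a => (ped P Q a + r (Q a)) - ped P Q a) : Multiset ℕ) = m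
      have hsimp : (fun a : Cell μ => (ped P Q a + r (Q a)) - ped P Q a) = fun a => r (Q a) := by
        funext a; omega
      rw [hsimp, map_univ_comp Q]
      have hrq : (fun k : Fin n => r (Q (Q.symm k))) = r := by
        funext k; rw [Equiv.apply_symm_apply]
      rw [hrq, hrm]
end

section
/- In the ring (R_n, ∗), the identity s̄_λ(x) = 𝔥_P(x) ∗ s̄_{(n)}(x) holds for every standard Young tableau P of shape λ, where s̄_λ is the generating function of reverse plane partitions of shape λ, 𝔥_P is the pedestal polynomial of P, and s̄_{(n)} is the generating function of weakly increasing n-tuples. -/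
/-- The weakly increasing tuple of the `n` values of a filling `f` of `μ`
(the exponent tuple of the monomial `Π_{α} x_{f(α)}` under
`φ_n : x_{i_1,…,i_n} ↦ y_1^{i_1}⋯y_n^{i_n}`). -/
noncomputable def tup (μ : YoungDiagram) (n : ℕ) (f : Cell μ → ℕ) : Fin n → ℕ :=
  fun i => (Multiset.sort (μ.cells.attach.val.map f) (· ≤ ·)).getD i 0

/-- The image under `φ_n` of the "wrong" Schur function
`s̄_λ = Σ_{𝔔 RPP of shape λ} Π_{α∈λ} x_{𝔔(α)}`: the coefficient of `y^d` is
the number of reverse plane partitions of shape `λ` whose sorted value tuple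
is `d`. -/
noncomputable def sbar (μ : YoungDiagram) (n : ℕ) : MvPowerSeries (Fin n) ℂ :=
  fun d => ((Set.ncard {f : Cell μ → ℕ | IsRPP μ f ∧ ∀ i : Fin n, tup μ n f i = d i} : ℕ) : ℂ)

/-- The image under `φ_n` of the pedestal polynomial
`𝔥_P = Σ_{Q ∈ st_λ} Π_{α∈λ} x_{q_{P,Q}(α)}`. -/
noncomputable def hpSeries (μ : YoungDiagram) (n : ℕ) (P : Cell μ ≃ Fin n) :
    MvPowerSeries (Fin n) ℂ :=
  fun d => ((Set.ncard {Q : Cell μ ≃ Fin n |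
    IsSYT μ n Q ∧ ∀ i : Fin n, tup μ n (ped P Q) i = d i} : ℕ) : ℂ)

/-- The image under `φ_n` of `s̄_{(n)} = Σ_{i_1 ≤ ⋯ ≤ i_n} x_{i_1,…,i_n}`. -/
noncomputable def sOne (n : ℕ) : MvPowerSeries (Fin n) ℂ :=
  fun d => if Monotone (fun i : Fin n => d i) then (1 : ℂ) else 0

namespace Stmt7

variable {μ : YoungDiagram} {n : ℕ}

/-- Sorted tuple of a monotone composition. -/
lemma tup_eq (hn : μ.card = n) (Q : Cell μ ≃ Fin n) (g : Fin n → ℕ) (hg : Monotone g)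
    (f : Cell μ → ℕ) (hf : ∀ a, f a = g (Q a)) (i : Fin n) : tup μ n f i = g i := by
  have hm : μ.cells.attach.val.map f = (List.ofFn g : List ℕ) := by
    rw [← Finset.univ_eq_attach]
    have h1 : (Finset.univ.val.map (⇑Q) : Multiset (Fin n)) = Finset.univ.val := by
      have := congrArg Finset.val (Finset.map_univ_equiv Q)
      simpa [Finset.map_val] using this
    calc (Finset.univ.val : Multiset (Cell μ)).map f
        = Finset.univ.val.map (g ∘ ⇑Q) := by
          congr 1; funext a; exact hf a
      _ = (Finset.univ.val.map ⇑Q).map g := by rw [Multiset.map_map]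
      _ = (Finset.univ.val : Multiset (Fin n)).map g := by rw [h1]
      _ = (List.ofFn g : List ℕ) := by
          rw [List.ofFn_eq_map, Fin.univ_def]
          rfl
  have hsorted : (List.ofFn g).Pairwise (· ≤ ·) := (List.sortedLE_ofFn_iff.2 hg).pairwise
  have hs : Multiset.sort ((List.ofFn g : List ℕ) : Multiset ℕ) (· ≤ ·) = List.ofFn g := by
    apply List.Perm.eq_of_pairwise' (Multiset.pairwise_sort _ _) hsorted
    exact Multiset.coe_eq_coe.mp (by rw [Multiset.sort_eq])
  have hi : (i : ℕ) < (List.ofFn g).length := by simp [i.isLt]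
  rw [tup, hm, hs, List.getD_eq_getElem _ _ hi, List.getElem_ofFn]



variable (P : Cell μ ≃ Fin n)

def key (f : Cell μ → ℕ) (a : Cell μ) : Lex (ℕ × Fin n) := toLex (f a, P a)

lemma key_injective (f : Cell μ → ℕ) : Function.Injective (key P f) := by
  intro a b h
  have h2 : P a = P b := congrArg (fun x => (ofLex x).2) h
  exact P.injective h2

lemma key_le_iff {f : Cell μ → ℕ} {a b : Cell μ} :
    key P f a ≤ key P f b ↔ f a < f b ∨ (f a = f b ∧ P a ≤ P b) := Prod.Lex.le_iff

lemma key_lt_iff {f : Cell μ → ℕ} {a b : Cell μ} :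
    key P f a < key P f b ↔ f a < f b ∨ (f a = f b ∧ P a < P b) := Prod.Lex.lt_iff

lemma cardCell (hn : μ.card = n) : Fintype.card (Cell μ) = n := by
  simpa [Fintype.card_coe] using hn

noncomputable def keyImg (f : Cell μ → ℕ) : Finset (Lex (ℕ × Fin n)) :=
  Finset.image (key P f) Finset.univ

lemma keyImg_card (hn : μ.card = n) (f : Cell μ → ℕ) : (keyImg P f).card = n := by
  rw [keyImg, Finset.card_image_of_injective _ (key_injective P f), Finset.card_univ,
    cardCell hn]

lemma key_mem_keyImg (f : Cell μ → ℕ) (a : Cell μ) : key P f a ∈ keyImg P f := by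
  simp [keyImg]

noncomputable def keyEquiv (f : Cell μ → ℕ) : Cell μ ≃ {x // x ∈ keyImg P f} :=
  Equiv.ofBijective (fun a => ⟨key P f a, key_mem_keyImg P f a⟩) (by
    constructor
    · intro a b h
      exact key_injective P f (congrArg Subtype.val h)
    · rintro ⟨x, hx⟩
      rw [keyImg, Finset.mem_image] at hx
      obtain ⟨a, _, ha⟩ := hx
      exact ⟨a, Subtype.ext ha⟩)

noncomputable def sortQ (hn : μ.card = n) (f : Cell μ → ℕ) : Cell μ ≃ Fin n :=
  (keyEquiv P f).trans ((keyImg P f).orderIsoOfFin (keyImg_card P hn f)).symm.toEquiv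

lemma sortQ_le_iff (hn : μ.card = n) (f : Cell μ → ℕ) {a b : Cell μ} :
    sortQ P hn f a ≤ sortQ P hn f b ↔ key P f a ≤ key P f b := by
  have h : sortQ P hn f a ≤ sortQ P hn f b ↔ keyEquiv P f a ≤ keyEquiv P f b :=
    ((keyImg P f).orderIsoOfFin (keyImg_card P hn f)).symm.le_iff_le
  exact h.trans Subtype.mk_le_mk

lemma sortQ_lt_iff (hn : μ.card = n) (f : Cell μ → ℕ) {a b : Cell μ} :
    sortQ P hn f a < sortQ P hn f b ↔ key P f a < key P f b := by
  rw [lt_iff_le_not_ge, lt_iff_le_not_ge, sortQ_le_iff P hn f, sortQ_le_iff P hn f]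

lemma sortQ_unique (hn : μ.card = n) (f : Cell μ → ℕ) (Q : Cell μ ≃ Fin n)
    (hQ : ∀ a b, Q a < Q b → key P f a < key P f b) : sortQ P hn f = Q := by
  have hle : ∀ a b : Cell μ, Q a ≤ Q b ↔ key P f a ≤ key P f b := by
    intro a b
    constructor
    · intro h
      rcases eq_or_ne a b with rfl | hne
      · exact le_refl _
      · exact le_of_lt (hQ a b (lt_of_le_of_ne h (fun he => hne (Q.injective he))))
    · intro h
      by_contra hc
      exact absurd h (not_le.mpr (hQ b a (not_le.mp hc)))
  set σ := sortQ P hn f with hσ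
  let g : Fin n ≃ Fin n := σ.symm.trans Q
  have hg : ∀ i j : Fin n, g i ≤ g j ↔ i ≤ j := by
    intro i j
    show Q (σ.symm i) ≤ Q (σ.symm j) ↔ i ≤ j
    rw [hle, ← sortQ_le_iff P hn f]
    simp [hσ]
  let GO : Fin n ≃o Fin n := { g with map_rel_iff' := fun {i j} => hg i j }
  have hGO : GO = OrderIso.refl (Fin n) := Subsingleton.elim _ _
  have hgid : ∀ i, g i = i := by
    intro i
    have := congrArg (fun (e : Fin n ≃o Fin n) => e i) hGO
    exact this
  apply Equiv.ext
  intro a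
  have := hgid (σ a)
  simpa [g] using this.symm

open Classical in
noncomputable def eped {S : Type} {m : ℕ} (P' Q : S ≃ Fin m) (k : ℕ) : ℕ :=
  ((Finset.range k).filter fun l => disag P' Q l).card

lemma ped_eq {S : Type} {m : ℕ} (P' Q : S ≃ Fin m) (s : S) : ped P' Q s = eped P' Q (Q s) := rfl

lemma eped_mono {S : Type} {m : ℕ} (P' Q : S ≃ Fin m) : Monotone (eped P' Q) := by
  intro k l h
  classical
  unfold eped
  apply Finset.card_le_card
  apply Finset.filter_subset_filter _ (Finset.range_subset_range.2 h)

open Classical in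
lemma eped_succ {S : Type} {m : ℕ} (P' Q : S ≃ Fin m) (k : ℕ) :
    eped P' Q (k + 1) = eped P' Q k + (if disag P' Q k then 1 else 0) := by
  unfold eped
  rw [Finset.card_filter, Finset.card_filter, Finset.sum_range_succ]

lemma eped_zero {S : Type} {m : ℕ} (P' Q : S ≃ Fin m) : eped P' Q 0 = 0 := by
  simp [eped]

lemma not_disag_of_eped_eq {S : Type} {m : ℕ} (P' Q : S ≃ Fin m) {k l mm : ℕ}
    (hkl : k ≤ l) (hlm : l < mm) (he : eped P' Q k = eped P' Q mm) : ¬ disag P' Q l := by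
  intro hd
  have h1 : eped P' Q k ≤ eped P' Q l := eped_mono P' Q hkl
  have h2 : eped P' Q (l + 1) ≤ eped P' Q mm := eped_mono P' Q hlm
  have h3 := eped_succ P' Q l
  rw [if_pos hd] at h3
  omega

lemma step_not_disag {S : Type} (P' Q : S ≃ Fin n) {l : ℕ} (hl : l + 1 < n)
    (hnd : ¬ disag P' Q l) :
    P' (Q.symm ⟨l, Nat.lt_of_succ_lt hl⟩) < P' (Q.symm ⟨l + 1, hl⟩) := by
  have h1 : ¬ (P' (Q.symm ⟨l + 1, hl⟩) < P' (Q.symm ⟨l, Nat.lt_of_succ_lt hl⟩)) :=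
    fun h => hnd ⟨hl, h⟩
  have hne : Q.symm ⟨l, Nat.lt_of_succ_lt hl⟩ ≠ Q.symm ⟨l + 1, hl⟩ := by
    intro h
    have := Q.symm.injective h
    simp [Fin.ext_iff] at this
  exact lt_of_le_of_ne (not_lt.mp h1) (fun h => hne (P'.injective h))

lemma chainP {S : Type} (P' Q : S ≃ Fin n) {k mm : ℕ} (hm : mm < n) (hkm : k < mm)
    (hnd : ∀ l, k ≤ l → l < mm → ¬ disag P' Q l) :
    P' (Q.symm ⟨k, hkm.trans hm⟩) < P' (Q.symm ⟨mm, hm⟩) := by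
  induction mm with
  | zero => omega
  | succ m ih =>
    rcases eq_or_lt_of_le (Nat.lt_succ_iff.mp hkm) with rfl | hlt
    · exact step_not_disag P' Q hm (hnd k le_rfl (Nat.lt_succ_self k))
    · have hm' : m < n := Nat.lt_of_succ_lt hm
      have h1 := ih hm' hlt (fun l ha hb => hnd l ha (Nat.lt_succ_of_lt hb))
      exact h1.trans (step_not_disag P' Q hm (hnd m (le_of_lt hlt) (Nat.lt_succ_self m)))



variable (hn : μ.card = n)

lemma sortQ_symm_f_mono (f : Cell μ → ℕ) :
    Monotone (fun i : Fin n => f ((sortQ P hn f).symm i)) := by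
  intro i j hij
  have h : key P f ((sortQ P hn f).symm i) ≤ key P f ((sortQ P hn f).symm j) := by
    rw [← sortQ_le_iff P hn f]
    simpa using hij
  rcases (key_le_iff P).1 h with h | h
  · exact le_of_lt h
  · exact le_of_eq h.1

lemma tup_sortQ (f : Cell μ → ℕ) (i : Fin n) :
    tup μ n f i = f ((sortQ P hn f).symm i) :=
  tup_eq hn (sortQ P hn f) _ (sortQ_symm_f_mono P hn f) f (fun a => by simp) i

lemma sortQ_SYT (hP : IsSYT μ n P) (f : Cell μ → ℕ) (hf : IsRPP μ f) :
    IsSYT μ n (sortQ P hn f) := by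
  intro a b hab
  rw [sortQ_le_iff P hn f, key_le_iff]
  rcases lt_or_eq_of_le (hf a b hab) with h | h
  · exact Or.inl h
  · exact Or.inr ⟨h, hP a b hab⟩

lemma disag_sortQ (f : Cell μ → ℕ) {k : ℕ} (hk : k + 1 < n)
    (hd : disag P (sortQ P hn f) k) :
    f ((sortQ P hn f).symm ⟨k, Nat.lt_of_succ_lt hk⟩) < f ((sortQ P hn f).symm ⟨k + 1, hk⟩) := by
  obtain ⟨h, hlt⟩ := hd
  have hkey : key P f ((sortQ P hn f).symm ⟨k, Nat.lt_of_succ_lt hk⟩)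
      ≤ key P f ((sortQ P hn f).symm ⟨k + 1, hk⟩) := by
    rw [← sortQ_le_iff P hn f]
    simp [Fin.mk_le_mk]
  rcases (key_le_iff P).1 hkey with h2 | h2
  · exact h2
  · exact absurd h2.2 (not_le.mpr hlt)

variable (d : Fin n →₀ ℕ)

def Aset : Set (Cell μ → ℕ) := {f | IsRPP μ f ∧ ∀ i : Fin n, tup μ n f i = d i}

def Gset : Set (Cell μ ≃ Fin n) :=
  {Q | IsSYT μ n Q ∧ (∀ i : Fin n, eped P Q i ≤ d i) ∧
    Monotone fun i : Fin n => d i - eped P Q i}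

lemma forward_bounds (f : Cell μ → ℕ) (hf1 : IsRPP μ f) (hf2 : ∀ i : Fin n, tup μ n f i = d i)
    (k : ℕ) (hk : k < n) :
    eped P (sortQ P hn f) k ≤ d ⟨k, hk⟩ ∧
      ∀ j (hj : j < n), j ≤ k →
        d ⟨j, hj⟩ - eped P (sortQ P hn f) j ≤ d ⟨k, hk⟩ - eped P (sortQ P hn f) k := by
  set Q := sortQ P hn f with hQdef
  have hdf : ∀ (l : ℕ) (hl : l < n), d ⟨l, hl⟩ = f (Q.symm ⟨l, hl⟩) := by
    intro l hl
    rw [← hf2 ⟨l, hl⟩, tup_sortQ P hn f]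
  induction k with
  | zero =>
    refine ⟨by rw [eped_zero]; omega, ?_⟩
    intro j hj hj0
    have : j = 0 := Nat.le_zero.mp hj0
    subst this
    rfl
  | succ k ih =>
    have hk' : k < n := Nat.lt_of_succ_lt hk
    obtain ⟨ih1, ih2⟩ := ih hk'
    have hsucc := eped_succ P Q k
    have hstep : eped P Q (k+1) ≤ d ⟨k+1, hk⟩ ∧
        d ⟨k, hk'⟩ - eped P Q k ≤ d ⟨k+1, hk⟩ - eped P Q (k+1) := by
      by_cases hdis : disag P Q k
      · rw [if_pos hdis] at hsucc
        have hlt : d ⟨k, hk'⟩ < d ⟨k+1, hk⟩ := by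
          rw [hdf k hk', hdf (k+1) hk]
          exact disag_sortQ P hn f hk hdis
        constructor <;> omega
      · rw [if_neg hdis] at hsucc
        have hle : d ⟨k, hk'⟩ ≤ d ⟨k+1, hk⟩ := by
          rw [hdf k hk', hdf (k+1) hk]
          exact sortQ_symm_f_mono P hn f (show (⟨k, hk'⟩ : Fin n) ≤ ⟨k+1, hk⟩ by
            simp [Fin.mk_le_mk])
        constructor <;> omega
    refine ⟨hstep.1, ?_⟩
    intro j hj hjk
    rcases Nat.lt_succ_iff_lt_or_eq.mp (Nat.lt_succ_of_le hjk) with h | h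
    · exact le_trans (ih2 j hj (Nat.lt_succ_iff.mp h)) hstep.2
    · subst h
      rfl

noncomputable def mainEquiv (hP : IsSYT μ n P) : ↥(Aset (μ := μ) (n := n) d) ≃ ↥(Gset P d) where
  toFun x := ⟨sortQ P hn x.1, by
    obtain ⟨f, hf1, hf2⟩ := x
    refine ⟨sortQ_SYT P hn hP f hf1, ?_, ?_⟩
    · intro i
      have := (forward_bounds P hn d f hf1 hf2 i i.isLt).1
      simpa using this
    · intro i j hij
      have := (forward_bounds P hn d f hf1 hf2 j j.isLt).2 i i.isLt hij
      simpa using this⟩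
  invFun y := ⟨fun a => d (y.1 a), by
    obtain ⟨Q, hQ1, hQ2, hQ3⟩ := y
    have hd_mono : Monotone (fun i : Fin n => d i) := by
      intro i j hij
      have e1 := eped_mono P Q (show (i : ℕ) ≤ (j : ℕ) from hij)
      have e2 : d i - eped P Q i ≤ d j - eped P Q j := hQ3 hij
      have e3 := hQ2 i
      have e4 := hQ2 j
      show d i ≤ d j
      omega
    refine ⟨fun a b hab => hd_mono (hQ1 a b hab), fun i => ?_⟩
    exact tup_eq hn Q (fun i => d i) hd_mono _ (fun a => rfl) i⟩
  left_inv x := by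
    apply Subtype.ext
    funext a
    obtain ⟨f, hf1, hf2⟩ := x
    show d (sortQ P hn f a) = f a
    rw [← hf2 (sortQ P hn f a), tup_sortQ P hn f]
    simp
  right_inv y := by
    apply Subtype.ext
    obtain ⟨Q, hQ1, hQ2, hQ3⟩ := y
    show sortQ P hn (fun a => d (Q a)) = Q
    have hd_mono : Monotone (fun i : Fin n => d i) := by
      intro i j hij
      have e1 := eped_mono P Q (show (i : ℕ) ≤ (j : ℕ) from hij)
      have e2 : d i - eped P Q i ≤ d j - eped P Q j := hQ3 hij
      have e3 := hQ2 i
      have e4 := hQ2 j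
      show d i ≤ d j
      omega
    apply sortQ_unique
    intro a b hab
    rw [key_lt_iff]
    rcases lt_or_eq_of_le (hd_mono (le_of_lt hab)) with h | h
    · exact Or.inl h
    · refine Or.inr ⟨h, ?_⟩
      have heq : eped P Q (Q a) = eped P Q (Q b) := by
        have h5 : d (Q a) = d (Q b) := h
        have e1 := eped_mono P Q (show ((Q a : ℕ)) ≤ (Q b : ℕ) from le_of_lt hab)
        have e2 : d (Q a) - eped P Q (Q a) ≤ d (Q b) - eped P Q (Q b) := hQ3 (le_of_lt hab)
        have e3 := hQ2 (Q a)
        have e4 := hQ2 (Q b)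
        omega
      have hnd : ∀ l, (Q a : ℕ) ≤ l → l < (Q b : ℕ) → ¬ disag P Q l :=
        fun l h1 h2 => not_disag_of_eped_eq P Q h1 h2 heq
      have hchain := chainP P Q (Q b).isLt (show ((Q a : ℕ)) < (Q b : ℕ) from hab) hnd
      simpa using hchain

lemma card_A_eq_G (hn' : μ.card = n) (hP : IsSYT μ n P) :
    (Aset (μ := μ) (n := n) d).ncard = (Gset P d).ncard := by
  rw [← Nat.card_coe_set_eq, ← Nat.card_coe_set_eq]
  exact Nat.card_congr (mainEquiv P hn' d hP)



lemma tup_ped (hn' : μ.card = n) (Q : Cell μ ≃ Fin n) (i : Fin n) :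
    tup μ n (ped P Q) i = eped P Q i :=
  tup_eq hn' Q (fun j : Fin n => eped P Q (j : ℕ))
    (fun j k h => eped_mono P Q (show (j : ℕ) ≤ (k : ℕ) from h)) _
    (fun a => ped_eq P Q a) i

lemma nat_card_sigma {ι : Type*} [Fintype ι] (g : ι → Type*) [∀ i, Finite (g i)] :
    Nat.card ((i : ι) × g i) = ∑ i, Nat.card (g i) := by
  letI : ∀ i, Fintype (g i) := fun i => Fintype.ofFinite _
  rw [Nat.card_eq_fintype_card, Fintype.card_sigma]
  exact Finset.sum_congr rfl (fun i _ => (Nat.card_eq_fintype_card).symm)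

def Cset (p : (Fin n →₀ ℕ) × (Fin n →₀ ℕ)) : Set (Cell μ ≃ Fin n) :=
  {Q | IsSYT μ n Q ∧ (∀ i : Fin n, eped P Q i = p.1 i) ∧ Monotone fun i : Fin n => p.2 i}

noncomputable def tF (Q : Cell μ ≃ Fin n) : Fin n →₀ ℕ :=
  Finsupp.equivFunOnFinite.symm (fun i : Fin n => eped P Q (i : ℕ))

lemma mem_G_of_mem_C {p : (Fin n →₀ ℕ) × (Fin n →₀ ℕ)} (hp : p ∈ Finset.HasAntidiagonal.antidiagonal d)
    {Q : Cell μ ≃ Fin n} (hQ : Q ∈ Cset P p) : Q ∈ Gset P d := by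
  obtain ⟨hQ1, hQ2, hQ3⟩ := hQ
  have hpd : p.1 + p.2 = d := Finset.HasAntidiagonal.mem_antidiagonal.mp hp
  have hpt : ∀ i : Fin n, p.1 i + p.2 i = d i := by
    intro i
    have := DFunLike.congr_fun hpd i
    simpa [Finsupp.add_apply] using this
  refine ⟨hQ1, fun i => ?_, fun i j hij => ?_⟩
  · have h1 := hpt i
    have h2 := hQ2 i
    omega
  · have h1 : p.2 i ≤ p.2 j := hQ3 hij
    have h2 := hpt i
    have h3 := hpt j
    have h4 := hQ2 i
    have h5 := hQ2 j
    show d i - eped P Q (i : ℕ) ≤ d j - eped P Q (j : ℕ)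
    omega

lemma sum_C_eq_G : ∑ p ∈ Finset.HasAntidiagonal.antidiagonal d, (Cset P p).ncard = (Gset P d).ncard := by
  have hG : (Gset P d).ncard = Nat.card ↥(Gset P d) := (Nat.card_coe_set_eq _).symm
  have hC : ∀ p, (Cset P p).ncard = Nat.card ↥(Cset P p) :=
    fun p => (Nat.card_coe_set_eq _).symm
  simp only [hC, hG]
  rw [← Finset.sum_coe_sort (Finset.HasAntidiagonal.antidiagonal d) (fun p => Nat.card ↥(Cset P p))]
  rw [← nat_card_sigma (fun p : ↥(Finset.HasAntidiagonal.antidiagonal d) => ↥(Cset P p.1))]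
  apply Nat.card_congr
  apply Equiv.ofBijective
    (f := fun x => (⟨x.2.1, mem_G_of_mem_C P d x.1.2 x.2.2⟩ : ↥(Gset P d)))
  constructor
  · rintro ⟨⟨p, hp⟩, ⟨Q, hQ⟩⟩ ⟨⟨p', hp'⟩, ⟨Q', hQ'⟩⟩ hxy
    have hQQ : Q = Q' := congrArg Subtype.val hxy
    subst hQQ
    have hp1 : p.1 = p'.1 := by
      ext i
      exact (hQ.2.1 i).symm.trans (hQ'.2.1 i)
    have hpp : p = p' := by
      have h1 : p.1 + p.2 = d := Finset.HasAntidiagonal.mem_antidiagonal.mp hp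
      have h2 : p'.1 + p'.2 = d := Finset.HasAntidiagonal.mem_antidiagonal.mp hp'
      rw [← hp1] at h2
      exact Prod.ext hp1 (add_left_cancel (h1.trans h2.symm))
    subst hpp
    rfl
  · rintro ⟨Q, hQ1, hQ2, hQ3⟩
    refine ⟨⟨⟨(tF P Q, d - tF P Q), ?_⟩, ⟨Q, hQ1, fun i => ?_, fun i j hij => ?_⟩⟩,
      Subtype.ext rfl⟩
    · rw [Finset.HasAntidiagonal.mem_antidiagonal]
      ext i
      have h := hQ2 i
      simp only [Finsupp.add_apply, Finsupp.tsub_apply, tF,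
        Finsupp.coe_equivFunOnFinite_symm]
      omega
    · simp [tF]
    · show (d - tF P Q) i ≤ (d - tF P Q) j
      simp only [Finsupp.tsub_apply, tF, Finsupp.coe_equivFunOnFinite_symm]
      exact hQ3 hij

end Stmt7

/-- in `(R_n, ∗)` (realized inside `ℂ[[y_1,…,y_n]]` via the
injective ring homomorphism `φ_n`), `s̄_λ = 𝔥_P ∗ s̄_{(n)}` for every standard
Young tableau `P` of shape `λ`. -/
theorem stmt7 (μ : YoungDiagram) (n : ℕ) (hn : μ.card = n)
    (P : Cell μ ≃ Fin n) (hP : IsSYT μ n P) :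
    sbar μ n = hpSeries μ n P * sOne n := by
  classical
  funext d
  have hmul : (hpSeries μ n P * sOne n) d
      = ∑ p ∈ Finset.HasAntidiagonal.antidiagonal d, hpSeries μ n P p.1 * sOne n p.2 :=
    MvPowerSeries.coeff_mul (n := d) (φ := hpSeries μ n P) (ψ := sOne n)
  have hterm : ∀ p ∈ Finset.HasAntidiagonal.antidiagonal d,
      hpSeries μ n P p.1 * sOne n p.2 = (((Stmt7.Cset P p).ncard : ℕ) : ℂ) := by
    intro p _
    by_cases hm : Monotone fun i : Fin n => p.2 i
    · have hs : sOne n p.2 = 1 := if_pos hm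
      rw [hs, mul_one, hpSeries]
      norm_cast
      congr 1
      ext Q
      simp only [Set.mem_setOf_eq, Stmt7.Cset]
      constructor
      · rintro ⟨h1, h2⟩
        exact ⟨h1, fun i => by rw [← Stmt7.tup_ped P hn Q i]; exact h2 i, hm⟩
      · rintro ⟨h1, h2, -⟩
        exact ⟨h1, fun i => by rw [Stmt7.tup_ped P hn Q i]; exact h2 i⟩
    · have hs : sOne n p.2 = 0 := if_neg hm
      rw [hs, mul_zero]
      have hempty : Stmt7.Cset P p = ∅ := by
        ext Q
        simp only [Stmt7.Cset, Set.mem_setOf_eq, Set.mem_empty_iff_false, iff_false]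
        rintro ⟨-, -, h3⟩
        exact hm h3
      rw [hempty]
      simp
  rw [hmul, Finset.sum_congr rfl hterm, ← Nat.cast_sum]
  have hkey : (Stmt7.Aset (μ := μ) (n := n) d).ncard
      = ∑ p ∈ Finset.HasAntidiagonal.antidiagonal d, (Stmt7.Cset P p).ncard :=
    (Stmt7.card_A_eq_G P d hn hP).trans (Stmt7.sum_C_eq_G P d).symm
  show (((Stmt7.Aset (μ := μ) (n := n) d).ncard : ℕ) : ℂ) = _
  rw [hkey]
end

section
/- The pedestal polynomial 𝔥_P(x) = Σ_{Q ∈ st_λ} Π_{α∈λ} x_{q_{P,Q}(α)} does not depend on the choice of the standard Young tableau P of shape λ: for any two standard tableaux P, P' of shape λ, 𝔥_P(x) = 𝔥_{P'}(x). -/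
open Classical in
/-- The pedestal polynomial `𝔥_P = Σ_Q Π_α x_{q_{P,Q}(α)}`, in commuting
variables `x_0, x_1, x_2, …`. -/
noncomputable def hp (μ : YoungDiagram) (n : ℕ) (P : Cell μ ≃ Fin n) : MvPolynomial ℕ ℤ :=
  ∑ Q ∈ Finset.univ.filter (fun Q : Cell μ ≃ Fin n => IsSYT μ n Q),
    ∏ c ∈ μ.cells.attach, MvPolynomial.X (ped P Q c)

open Classical in
noncomputable def Mon {n : ℕ} (σ : Fin n ≃ Fin n) : MvPolynomial ℕ ℤ :=
  ∏ j : Fin n, MvPolynomial.X (ped σ (Equiv.refl (Fin n)) j)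

example {μ : YoungDiagram} {n : ℕ} (P Q : Cell μ ≃ Fin n) (c : Cell μ) :
    ped P Q c = ped (Q.symm.trans P) (Equiv.refl _) (Q c) := rfl

open Classical in
lemma hp_eq {μ : YoungDiagram} {n : ℕ} (P : Cell μ ≃ Fin n) :
    hp μ n P = ∑ Q ∈ Finset.univ.filter (fun Q : Cell μ ≃ Fin n => IsSYT μ n Q),
      Mon (Q.symm.trans P) := by
  unfold hp Mon
  refine Finset.sum_congr rfl fun Q _ => ?_
  have h1 : μ.cells.attach = (Finset.univ : Finset (Cell μ)) := rfl
  rw [h1]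
  exact Equiv.prod_comp Q (fun j => MvPolynomial.X (ped (Q.symm.trans P) (Equiv.refl _) j))

lemma fin_swap_lt_iff {n : ℕ} {x y u v : Fin n} (hxy : (x:ℕ)+1 = y)
    (h1 : ¬(u = x ∧ v = y)) (h2 : ¬(u = y ∧ v = x)) :
    Equiv.swap x y u < Equiv.swap x y v ↔ u < v := by
  simp only [Equiv.swap_apply_def]
  split_ifs <;>
    simp only [Fin.le_def, Fin.lt_def, Fin.ext_iff, not_and] at * <;> omega

lemma Mon_trans_swap {n : ℕ} (σ : Fin n ≃ Fin n) {x y : Fin n} (hxy : (x:ℕ)+1 = y)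
    (hadj : ¬ ((σ.symm x : ℕ) = (σ.symm y : ℕ) + 1 ∨ (σ.symm y : ℕ) = (σ.symm x : ℕ) + 1)) :
    Mon (σ.trans (Equiv.swap x y)) = Mon σ := by
  classical
  push_neg at hadj
  unfold Mon
  refine Finset.prod_congr rfl fun j _ => ?_
  congr 1
  unfold ped
  congr 1
  refine Finset.filter_congr fun l _ => ?_
  unfold disag
  refine exists_congr fun h => ?_
  simp only [Equiv.refl_symm, Equiv.refl_apply, Equiv.trans_apply]
  refine fin_swap_lt_iff hxy ?_ ?_
  · rintro ⟨h1, h2⟩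
    have e1 : σ.symm x = ⟨l+1, h⟩ := by rw [← h1, Equiv.symm_apply_apply]
    have e2 : σ.symm y = ⟨l, Nat.lt_of_succ_lt h⟩ := by rw [← h2, Equiv.symm_apply_apply]
    exact absurd (by rw [e1, e2]) hadj.1
  · rintro ⟨h1, h2⟩
    have e1 : σ.symm y = ⟨l+1, h⟩ := by rw [← h1, Equiv.symm_apply_apply]
    have e2 : σ.symm x = ⟨l, Nat.lt_of_succ_lt h⟩ := by rw [← h2, Equiv.symm_apply_apply]
    exact absurd (by rw [e1, e2]) hadj.2

lemma key_equiv {S : Type} {n : ℕ} (P Q : S ≃ Fin n) (x y : Fin n) :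
    (Q.trans (Equiv.swap (Q (P.symm x)) (Q (P.symm y)))).symm.trans (P.trans (Equiv.swap x y))
      = Q.symm.trans P := by
  ext j
  simp only [Equiv.trans_apply, Equiv.symm_trans_apply, Equiv.symm_symm]
  rcases eq_or_ne j (Q (P.symm x)) with rfl | hx
  · rw [Equiv.symm_swap, Equiv.swap_apply_left, Equiv.symm_apply_apply,
      Equiv.apply_symm_apply, Equiv.swap_apply_right, Equiv.symm_apply_apply,
      Equiv.apply_symm_apply]
  · rcases eq_or_ne j (Q (P.symm y)) with rfl | hy
    · rw [Equiv.symm_swap, Equiv.swap_apply_right, Equiv.symm_apply_apply,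
        Equiv.apply_symm_apply, Equiv.swap_apply_left, Equiv.symm_apply_apply,
        Equiv.apply_symm_apply]
    · rw [Equiv.symm_swap, Equiv.swap_apply_of_ne_of_ne hx hy]
      rw [Equiv.swap_apply_of_ne_of_ne]
      · intro hcon
        exact hx (by rw [← hcon, Equiv.symm_apply_apply, Equiv.apply_symm_apply])
      · intro hcon
        exact hy (by rw [← hcon, Equiv.symm_apply_apply, Equiv.apply_symm_apply])

lemma fin_swap_le {n : ℕ} {x y u v : Fin n} (hxy : (x:ℕ)+1 = y) (huv : u ≤ v)
    (h1 : ¬(u = x ∧ v = y)) : Equiv.swap x y u ≤ Equiv.swap x y v := by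
  simp only [Equiv.swap_apply_def]
  split_ifs <;>
    simp only [Fin.le_def, Fin.lt_def, Fin.ext_iff, not_and] at * <;> omega

lemma mono_swap {S : Type} {le : S → S → Prop} {n : ℕ} {T : S ≃ Fin n}
    (hT : ∀ a b, le a b → T a ≤ T b)
    {x y : Fin n} (hxy : (x:ℕ)+1 = y)
    (hab : ¬ le (T.symm x) (T.symm y)) :
    ∀ a b, le a b → (T.trans (Equiv.swap x y)) a ≤ (T.trans (Equiv.swap x y)) b := by
  intro c d hcd
  have h1 : T c ≤ T d := hT c d hcd
  have h2 : ¬(T c = x ∧ T d = y) := by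
    rintro ⟨hc, hd⟩
    exact hab (by rwa [← hc, ← hd, Equiv.symm_apply_apply, Equiv.symm_apply_apply])
  exact fin_swap_le hxy h1 h2

open Classical in
lemma hp_swap {μ : YoungDiagram} {n : ℕ} (P : Cell μ ≃ Fin n)
    {x y : Fin n} (hxy : (x:ℕ)+1 = y)
    (hab : ¬ (P.symm x).1 ≤ (P.symm y).1) (hba : ¬ (P.symm y).1 ≤ (P.symm x).1) :
    hp μ n P = hp μ n (P.trans (Equiv.swap x y)) := by
  classical
  set a := P.symm x with ha
  set b := P.symm y with hb
  set ψ : (Cell μ ≃ Fin n) → (Cell μ ≃ Fin n) := fun Q =>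
    if ((Q a : ℕ) + 1 = (Q b : ℕ) ∨ (Q b : ℕ) + 1 = (Q a : ℕ)) then
      Q.trans (Equiv.swap (Q a) (Q b)) else Q with hψ
  have hψa : ∀ Q : Cell μ ≃ Fin n,
      ((Q a : ℕ) + 1 = (Q b : ℕ) ∨ (Q b : ℕ) + 1 = (Q a : ℕ)) →
      ψ Q = Q.trans (Equiv.swap (Q a) (Q b)) := by
    intro Q h; rw [hψ]; simp only [if_pos h]
  have hψn : ∀ Q : Cell μ ≃ Fin n,
      ¬((Q a : ℕ) + 1 = (Q b : ℕ) ∨ (Q b : ℕ) + 1 = (Q a : ℕ)) → ψ Q = Q := by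
    intro Q h; rw [hψ]; simp only [if_neg h]
  -- ψ preserves SYT
  have hSYT : ∀ Q : Cell μ ≃ Fin n, IsSYT μ n Q → IsSYT μ n (ψ Q) := by
    intro Q hQ
    by_cases h : ((Q a : ℕ) + 1 = (Q b : ℕ) ∨ (Q b : ℕ) + 1 = (Q a : ℕ))
    · rw [hψa Q h]
      rcases h with h1 | h2
      · exact mono_swap hQ h1 (by rw [Equiv.symm_apply_apply, Equiv.symm_apply_apply]; exact hab)
      · rw [Equiv.swap_comm]
        exact mono_swap hQ h2 (by rw [Equiv.symm_apply_apply, Equiv.symm_apply_apply]; exact hba)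
    · rw [hψn Q h]; exact hQ
  -- ψ is an involution
  have hinv : ∀ Q : Cell μ ≃ Fin n, ψ (ψ Q) = Q := by
    intro Q
    by_cases h : ((Q a : ℕ) + 1 = (Q b : ℕ) ∨ (Q b : ℕ) + 1 = (Q a : ℕ))
    · have e1 : ψ Q = Q.trans (Equiv.swap (Q a) (Q b)) := hψa Q h
      have ea : (ψ Q) a = Q b := by rw [e1]; exact Equiv.swap_apply_left _ _
      have eb : (ψ Q) b = Q a := by rw [e1]; exact Equiv.swap_apply_right _ _
      have h' : (((ψ Q) a : ℕ) + 1 = ((ψ Q) b : ℕ) ∨ ((ψ Q) b : ℕ) + 1 = ((ψ Q) a : ℕ)) := by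
        rw [ea, eb]; tauto
      rw [hψa (ψ Q) h', ea, eb, e1]
      ext c
      simp only [Equiv.trans_apply]
      have hcc : Equiv.swap (Q b) (Q a) = Equiv.swap (Q a) (Q b) := Equiv.swap_comm _ _
      rw [hcc]
      exact congrArg Fin.val (Equiv.swap_apply_self (Q a) (Q b) (Q c))
    · rw [hψn Q h, hψn Q h]
  -- monomial equality
  have hmon : ∀ Q : Cell μ ≃ Fin n,
      Mon (Q.symm.trans P) = Mon ((ψ Q).symm.trans (P.trans (Equiv.swap x y))) := by
    intro Q
    by_cases h : ((Q a : ℕ) + 1 = (Q b : ℕ) ∨ (Q b : ℕ) + 1 = (Q a : ℕ))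
    · rw [hψa Q h, ha, hb, key_equiv]
    · rw [hψn Q h, ← Equiv.trans_assoc]
      refine (Mon_trans_swap _ hxy ?_).symm
      have e1 : (Q.symm.trans P).symm x = Q a := by
        simp [Equiv.symm_trans_apply, ha]
      have e2 : (Q.symm.trans P).symm y = Q b := by
        simp [Equiv.symm_trans_apply, hb]
      rw [e1, e2]
      omega
  rw [hp_eq, hp_eq]
  refine Finset.sum_nbij' ψ ψ ?_ ?_ ?_ ?_ ?_
  · intro Q hQ
    simp only [Finset.mem_filter, Finset.mem_univ, true_and] at *
    exact hSYT Q hQ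
  · intro Q hQ
    simp only [Finset.mem_filter, Finset.mem_univ, true_and] at *
    exact hSYT Q hQ
  · intro Q _; exact hinv Q
  · intro Q _; exact hinv Q
  · intro Q _; exact hmon Q

open Classical in
noncomputable def InvSet {μ : YoungDiagram} {n : ℕ} (P P' : Cell μ ≃ Fin n) :
    Finset (Cell μ × Cell μ) :=
  Finset.univ.filter fun p => P p.1 < P p.2 ∧ P' p.2 < P' p.1

lemma eq_id_of_no_descent {n : ℕ} (f : Fin n ≃ Fin n)
    (h : ∀ x y : Fin n, (x:ℕ)+1 = (y:ℕ) → f x ≤ f y) : ∀ j, f j = j := by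
  have mono : ∀ k (hk : k + 1 < n), k ≤ (f ⟨k, Nat.lt_of_succ_lt hk⟩ : ℕ) →
      k + 1 ≤ (f ⟨k+1, hk⟩ : ℕ) := by
    intro k hk ih
    have hle : (f ⟨k, Nat.lt_of_succ_lt hk⟩ : ℕ) ≤ (f ⟨k+1, hk⟩ : ℕ) :=
      h ⟨k, Nat.lt_of_succ_lt hk⟩ ⟨k+1, hk⟩ rfl
    have hne : (f ⟨k, Nat.lt_of_succ_lt hk⟩ : ℕ) ≠ (f ⟨k+1, hk⟩ : ℕ) := by
      intro hEq
      have := f.injective (Fin.ext hEq)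
      simp [Fin.ext_iff] at this
    omega
  have key : ∀ j : Fin n, (j : ℕ) ≤ f j := by
    intro j
    obtain ⟨k, hk⟩ := j
    induction k with
    | zero => exact Nat.zero_le _
    | succ m ih => exact mono m hk (ih (Nat.lt_of_succ_lt hk))
  have hsum : ∑ j : Fin n, ((f j : ℕ)) = ∑ j : Fin n, (j : ℕ) :=
    Equiv.sum_comp f (fun j => (j : ℕ))
  have := (Finset.sum_eq_sum_iff_of_le (fun i _ => key i)).mp hsum.symm
  intro j
  exact Fin.ext ((this j (Finset.mem_univ j)).symm)

lemma step_data {μ : YoungDiagram} {n : ℕ} (P P' : Cell μ ≃ Fin n)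
    (hP : IsSYT μ n P) (hP' : IsSYT μ n P') (hne : ¬ ∀ c, P c = P' c) :
    ∃ x y : Fin n, ∃ hxy : (x:ℕ)+1 = (y:ℕ),
      ¬ (P.symm x).1 ≤ (P.symm y).1 ∧ ¬ (P.symm y).1 ≤ (P.symm x).1 ∧
      (P.symm x, P.symm y) ∈ InvSet P P' ∧
      InvSet (P.trans (Equiv.swap x y)) P' ⊆ (InvSet P P').erase (P.symm x, P.symm y) := by
  push_neg at hne
  obtain ⟨c₀, hc₀⟩ := hne
  set f := P.symm.trans P' with hf
  have hdesc : ∃ x y : Fin n, (x:ℕ)+1 = (y:ℕ) ∧ f y < f x := by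
    by_contra hcon
    push_neg at hcon
    have hid := eq_id_of_no_descent f hcon
    have := hid (P c₀)
    rw [hf] at this
    simp only [Equiv.trans_apply, Equiv.symm_apply_apply] at this
    exact hc₀ this.symm
  obtain ⟨x, y, hxy, hlt⟩ := hdesc
  have hfx : f x = P' (P.symm x) := rfl
  have hfy : f y = P' (P.symm y) := rfl
  rw [hfx, hfy] at hlt
  have hPx : P (P.symm x) = x := P.apply_symm_apply x
  have hPy : P (P.symm y) = y := P.apply_symm_apply y
  have hxy' : x < y := by rw [Fin.lt_def]; omega
  have hab : ¬ (P.symm x).1 ≤ (P.symm y).1 := by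
    intro h
    exact absurd (hP' _ _ h) (not_le.mpr hlt)
  have hba : ¬ (P.symm y).1 ≤ (P.symm x).1 := by
    intro h
    have := hP _ _ h
    rw [hPx, hPy] at this
    exact absurd this (not_le.mpr hxy')
  refine ⟨x, y, hxy, hab, hba, ?_, ?_⟩
  · simp only [InvSet, Finset.mem_filter, Finset.mem_univ, true_and]
    exact ⟨by rw [hPx, hPy]; exact hxy', hlt⟩
  · intro p hpmem
    rw [InvSet, Finset.mem_filter] at hpmem
    simp only [InvSet, Finset.mem_filter, Finset.mem_univ, true_and,
      Equiv.trans_apply] at hpmem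
    obtain ⟨h1, h2⟩ := hpmem
    have hc1 : ¬(P p.1 = x ∧ P p.2 = y) := by
      rintro ⟨e1, e2⟩
      rw [e1, e2, Equiv.swap_apply_left, Equiv.swap_apply_right] at h1
      exact absurd h1 (not_lt.mpr (le_of_lt hxy'))
    have hc2 : ¬(P p.1 = y ∧ P p.2 = x) := by
      rintro ⟨e1, e2⟩
      have hp1 : p.1 = P.symm y := by rw [← e1, Equiv.symm_apply_apply]
      have hp2 : p.2 = P.symm x := by rw [← e2, Equiv.symm_apply_apply]
      rw [hp1, hp2] at h2
      exact absurd h2 (not_lt.mpr (le_of_lt hlt))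
    have h1' : P p.1 < P p.2 := (fin_swap_lt_iff hxy hc1 hc2).mp h1
    rw [Finset.mem_erase]
    constructor
    · intro hcon
      apply hc1
      rw [hcon]
      exact ⟨hPx, hPy⟩
    · simp only [InvSet, Finset.mem_filter, Finset.mem_univ, true_and]
      exact ⟨h1', h2⟩

lemma main_aux {μ : YoungDiagram} {n : ℕ} :
    ∀ N (P P' : Cell μ ≃ Fin n), IsSYT μ n P → IsSYT μ n P' →
      (InvSet P P').card ≤ N → hp μ n P = hp μ n P' := by
  intro N
  induction N with
  | zero =>
    intro P P' hP hP' hcard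
    by_cases hPP' : ∀ c, P c = P' c
    · rw [Equiv.ext hPP']
    · obtain ⟨x, y, hxy, hab, hba, hmem, _⟩ := step_data P P' hP hP' hPP'
      have : 0 < (InvSet P P').card := Finset.card_pos.mpr ⟨_, hmem⟩
      omega
  | succ N ih =>
    intro P P' hP hP' hcard
    by_cases hPP' : ∀ c, P c = P' c
    · rw [Equiv.ext hPP']
    · obtain ⟨x, y, hxy, hab, hba, hmem, hsub⟩ := step_data P P' hP hP' hPP'
      have hstep : hp μ n P = hp μ n (P.trans (Equiv.swap x y)) := hp_swap P hxy hab hba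
      have hSYT2 : IsSYT μ n (P.trans (Equiv.swap x y)) := mono_swap hP hxy hab
      have hcard2 : (InvSet (P.trans (Equiv.swap x y)) P').card ≤ N := by
        have h1 := Finset.card_le_card hsub
        rw [Finset.card_erase_of_mem hmem] at h1
        omega
      rw [hstep]
      exact ih (P.trans (Equiv.swap x y)) P' hSYT2 hP' hcard2

/-- the pedestal polynomial does not depend on the choice of the
standard Young tableau `P`. -/
theorem stmt8 (μ : YoungDiagram) (n : ℕ) (hn : μ.card = n)
    (P P' : Cell μ ≃ Fin n) (hP : IsSYT μ n P) (hP' : IsSYT μ n P') :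
    hp μ n P = hp μ n P' :=
  main_aux (InvSet P P').card P P' hP hP' le_rfl
end

section
/- For any standard Young tableau P of shape λ ⊢ n, the polynomial π_λ(x) := Σ_{Q ∈ st_λ} x^{|q_{P,Q}|}, where |q_{P,Q}| = Σ_{α∈λ} q_{P,Q}(α), does not depend on the choice of P. -/
/-- Volume of a filling of `μ`. -/
noncomputable def vol (μ : YoungDiagram) (f : Cell μ → ℕ) : ℕ :=
  ∑ c ∈ μ.cells.attach, f c

open Classical in
/-- `π_λ(x) = Σ_{Q ∈ st_λ} x^{|q_{P,Q}|}`. -/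
noncomputable def piP (μ : YoungDiagram) (n : ℕ) (P : Cell μ ≃ Fin n) : Polynomial ℤ :=
  ∑ Q ∈ Finset.univ.filter (fun Q : Cell μ ≃ Fin n => IsSYT μ n Q),
    Polynomial.X ^ vol μ (ped P Q)

/- ### Helper lemmas -/

lemma swap_val {n : ℕ} (a b x : Fin n) :
    ((Equiv.swap a b x : Fin n) : ℕ) = if x = a then (b:ℕ) else if x = b then (a:ℕ) else x := by
  rw [Equiv.swap_apply_def]; split_ifs <;> rfl

lemma swap_lt_swap_iff {n : ℕ} {a b : Fin n} (hab : (a:ℕ)+1 = (b:ℕ)) (u v : Fin n)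
    (h1 : ¬(u = a ∧ v = b)) (h2 : ¬(u = b ∧ v = a)) :
    (Equiv.swap a b u < Equiv.swap a b v ↔ u < v) := by
  rw [Fin.lt_def, Fin.lt_def, swap_val, swap_val]
  split_ifs <;> simp_all [Fin.ext_iff] <;> omega

lemma swap_lt_of_lt {n : ℕ} {a b : Fin n} (hab : (a:ℕ)+1 = (b:ℕ)) {u v : Fin n}
    (huv : u < v) (h1 : ¬(u = a ∧ v = b)) : Equiv.swap a b u < Equiv.swap a b v := by
  refine (swap_lt_swap_iff hab u v h1 ?_).mpr huv
  rintro ⟨rfl, rfl⟩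
  rw [Fin.lt_def] at huv; omega

/-- The fundamental involution on tableaux. -/
def Phi (μ : YoungDiagram) (n : ℕ) (c d : Cell μ) (Q : Cell μ ≃ Fin n) : Cell μ ≃ Fin n :=
  if ((Q c : ℕ) + 1 = (Q d : ℕ)) ∨ ((Q d : ℕ) + 1 = (Q c : ℕ)) then (Equiv.swap c d).trans Q else Q

lemma Phi_Phi (μ : YoungDiagram) (n : ℕ) (c d : Cell μ) (Q : Cell μ ≃ Fin n) :
    Phi μ n c d (Phi μ n c d Q) = Q := by
  by_cases h : ((Q c : ℕ) + 1 = (Q d : ℕ)) ∨ ((Q d : ℕ) + 1 = (Q c : ℕ))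
  · have e1 : Phi μ n c d Q = (Equiv.swap c d).trans Q := if_pos h
    have h2 : ((((Equiv.swap c d).trans Q) c : ℕ) + 1 = ((((Equiv.swap c d).trans Q)) d : ℕ)) ∨
        ((((Equiv.swap c d).trans Q) d : ℕ) + 1 = (((Equiv.swap c d).trans Q) c : ℕ)) := by
      simp only [Equiv.trans_apply, Equiv.swap_apply_left, Equiv.swap_apply_right]
      exact h.symm
    have e2 : Phi μ n c d ((Equiv.swap c d).trans Q)
        = (Equiv.swap c d).trans ((Equiv.swap c d).trans Q) := if_pos h2
    rw [e1, e2]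
    ext x
    simp [Equiv.trans_apply, Equiv.swap_apply_self]
  · have e1 : Phi μ n c d Q = Q := if_neg h
    rw [e1, e1]

lemma Phi_SYT (μ : YoungDiagram) (n : ℕ) (c d : Cell μ)
    (hcd1 : ¬ c.1 ≤ d.1) (hcd2 : ¬ d.1 ≤ c.1)
    (Q : Cell μ ≃ Fin n) (hQ : IsSYT μ n Q) : IsSYT μ n (Phi μ n c d Q) := by
  by_cases h : ((Q c : ℕ) + 1 = (Q d : ℕ)) ∨ ((Q d : ℕ) + 1 = (Q c : ℕ))
  · have e1 : Phi μ n c d Q = (Equiv.swap c d).trans Q := if_pos h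
    rw [e1]
    intro x y hxy
    rcases eq_or_ne x y with rfl | hne
    · exact le_refl _
    have hinjQ : ∀ u v : Cell μ, u ≠ v → (Q u : ℕ) ≠ (Q v : ℕ) := fun u v huv hval =>
      huv (Q.injective (Fin.ext hval))
    have hxyQ : (Q x : ℕ) ≤ Q y := hQ x y hxy
    simp only [Equiv.trans_apply, Fin.le_def]
    by_cases hxc : x = c
    · by_cases hyd : y = d
      · rw [hxc, hyd] at hxy
        exact absurd hxy hcd1
      · have hyc : y ≠ c := by rw [hxc] at hne; exact fun hh => hne hh.symm
        rw [hxc, Equiv.swap_apply_left, Equiv.swap_apply_of_ne_of_ne hyc hyd]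
        have h2 := hinjQ y c hyc
        rw [hxc] at hxyQ
        rcases h with h | h <;> omega
    · by_cases hxd : x = d
      · by_cases hyc : y = c
        · rw [hxd, hyc] at hxy
          exact absurd hxy hcd2
        · have hyd : y ≠ d := by rw [hxd] at hne; exact fun hh => hne hh.symm
          rw [hxd, Equiv.swap_apply_right, Equiv.swap_apply_of_ne_of_ne hyc hyd]
          have h2 := hinjQ y d hyd
          rw [hxd] at hxyQ
          rcases h with h | h <;> omega
      · rw [Equiv.swap_apply_of_ne_of_ne hxc hxd]
        by_cases hyc : y = c
        · rw [hyc, Equiv.swap_apply_left]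
          have h2 := hinjQ x c hxc
          rw [hyc] at hxyQ
          rcases h with h | h <;> omega
        · by_cases hyd : y = d
          · rw [hyd, Equiv.swap_apply_right]
            have h2 := hinjQ x d hxd
            rw [hyd] at hxyQ
            rcases h with h | h <;> omega
          · rw [Equiv.swap_apply_of_ne_of_ne hyc hyd]
            exact hxyQ
  · have e1 : Phi μ n c d Q = Q := if_neg h
    rw [e1]
    exact hQ

lemma ped_congr {S : Type} {n : ℕ} (P₁ P₂ Q₁ Q₂ : S ≃ Fin n)
    (hdis : ∀ l, disag P₁ Q₁ l ↔ disag P₂ Q₂ l) (s₁ s₂ : S) (hq : (Q₁ s₁ : ℕ) = (Q₂ s₂ : ℕ)) :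
    ped P₁ Q₁ s₁ = ped P₂ Q₂ s₂ := by
  rw [ped, ped, hq]
  congr 1
  ext l
  simp only [Finset.mem_filter]
  exact and_congr_right fun _ => hdis l

lemma Phi_vol (μ : YoungDiagram) (n : ℕ) (a b : Fin n) (hab : (a:ℕ)+1 = (b:ℕ))
    (P Q : Cell μ ≃ Fin n) :
    vol μ (ped (P.trans (Equiv.swap a b)) (Phi μ n (P.symm a) (P.symm b) Q)) = vol μ (ped P Q) := by
  set c := P.symm a with hc
  set d := P.symm b with hd
  have hPc : P c = a := P.apply_symm_apply a
  have hPd : P d = b := P.apply_symm_apply b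
  by_cases h : ((Q c : ℕ) + 1 = (Q d : ℕ)) ∨ ((Q d : ℕ) + 1 = (Q c : ℕ))
  · rw [Phi, if_pos h]
    have hword : ∀ k : Fin n,
        (P.trans (Equiv.swap a b)) (((Equiv.swap c d).trans Q).symm k) = P (Q.symm k) := by
      intro k
      simp only [Equiv.symm_trans_apply, Equiv.trans_apply, Equiv.symm_swap]
      set x := Q.symm k with hx
      rcases eq_or_ne x c with hxc | hxc
      · rw [hxc, Equiv.swap_apply_left, hPd, hPc, Equiv.swap_apply_right]
      · rcases eq_or_ne x d with hxd | hxd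
        · rw [hxd, Equiv.swap_apply_right, hPc, hPd, Equiv.swap_apply_left]
        · have ha' : P x ≠ a := fun hh => hxc (by rw [← hPc] at hh; exact P.injective hh)
          have hb' : P x ≠ b := fun hh => hxd (by rw [← hPd] at hh; exact P.injective hh)
          rw [Equiv.swap_apply_of_ne_of_ne hxc hxd, Equiv.swap_apply_of_ne_of_ne ha' hb']
    have hdis : ∀ l, disag (P.trans (Equiv.swap a b)) ((Equiv.swap c d).trans Q) l ↔ disag P Q l :=
      fun l => exists_congr fun hl => by rw [hword, hword]
    have hped : ∀ x : Cell μ,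
        ped (P.trans (Equiv.swap a b)) ((Equiv.swap c d).trans Q) x = ped P Q (Equiv.swap c d x) :=
      fun x => ped_congr _ _ _ _ hdis x (Equiv.swap c d x) (by rw [Equiv.trans_apply])
    calc vol μ (ped (P.trans (Equiv.swap a b)) ((Equiv.swap c d).trans Q))
        = ∑ x ∈ μ.cells.attach, ped P Q (Equiv.swap c d x) := by
          rw [vol]; exact Finset.sum_congr rfl fun x _ => hped x
      _ = vol μ (ped P Q) := by
          rw [vol, ← Finset.univ_eq_attach]
          exact Equiv.sum_comp (Equiv.swap c d) (ped P Q)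
  · rw [Phi, if_neg h]
    have hdis : ∀ l, disag (P.trans (Equiv.swap a b)) Q l ↔ disag P Q l := by
      intro l
      refine exists_congr fun hl => ?_
      simp only [Equiv.trans_apply]
      refine swap_lt_swap_iff hab _ _ ?_ ?_
      · rintro ⟨h1, h2⟩
        have e1 : Q.symm ⟨l+1, hl⟩ = c := by rw [hc, ← h1, Equiv.symm_apply_apply]
        have e2 : Q.symm ⟨l, Nat.lt_of_succ_lt hl⟩ = d := by rw [hd, ← h2, Equiv.symm_apply_apply]
        have f1 : (Q c : ℕ) = l + 1 := by rw [← e1, Q.apply_symm_apply]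
        have f2 : (Q d : ℕ) = l := by rw [← e2, Q.apply_symm_apply]
        exact h (Or.inr (by omega))
      · rintro ⟨h1, h2⟩
        have e1 : Q.symm ⟨l+1, hl⟩ = d := by rw [hd, ← h1, Equiv.symm_apply_apply]
        have e2 : Q.symm ⟨l, Nat.lt_of_succ_lt hl⟩ = c := by rw [hc, ← h2, Equiv.symm_apply_apply]
        have f1 : (Q d : ℕ) = l + 1 := by rw [← e1, Q.apply_symm_apply]
        have f2 : (Q c : ℕ) = l := by rw [← e2, Q.apply_symm_apply]
        exact h (Or.inl (by omega))
    rw [vol, vol]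
    exact Finset.sum_congr rfl fun x _ => ped_congr _ _ _ _ hdis x x rfl

open Classical in
lemma piP_swap (μ : YoungDiagram) (n : ℕ) (a b : Fin n) (hab : (a:ℕ)+1 = (b:ℕ))
    (P : Cell μ ≃ Fin n)
    (hcd1 : ¬ (P.symm a).1 ≤ (P.symm b).1) (hcd2 : ¬ (P.symm b).1 ≤ (P.symm a).1) :
    piP μ n P = piP μ n (P.trans (Equiv.swap a b)) := by
  rw [piP, piP]
  refine Finset.sum_bij' (fun Q _ => Phi μ n (P.symm a) (P.symm b) Q)
    (fun Q _ => Phi μ n (P.symm a) (P.symm b) Q) ?_ ?_ ?_ ?_ ?_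
  · intro Q hQ
    rw [Finset.mem_filter] at hQ ⊢
    exact ⟨Finset.mem_univ _, Phi_SYT μ n _ _ hcd1 hcd2 Q hQ.2⟩
  · intro Q hQ
    rw [Finset.mem_filter] at hQ ⊢
    exact ⟨Finset.mem_univ _, Phi_SYT μ n _ _ hcd1 hcd2 Q hQ.2⟩
  · intro Q hQ
    exact Phi_Phi μ n _ _ Q
  · intro Q hQ
    exact Phi_Phi μ n _ _ Q
  · intro Q hQ
    rw [Phi_vol μ n a b hab P Q]

/-- inversion count between two orders -/
def Nmeas (n : ℕ) (σ : Fin n → Fin n) : ℕ :=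
  (Finset.univ.filter (fun p : Fin n × Fin n => p.1 < p.2 ∧ σ p.2 < σ p.1)).card

lemma Nmeas_swap {n : ℕ} (σ : Fin n → Fin n) (a b : Fin n) (hab : (a:ℕ)+1 = (b:ℕ))
    (hdesc : σ b < σ a) :
    Nmeas n (fun k => σ (Equiv.swap a b k)) < Nmeas n σ := by
  have hablt : a < b := by rw [Fin.lt_def]; omega
  set B := (Finset.univ.filter (fun p : Fin n × Fin n => p.1 < p.2 ∧ σ p.2 < σ p.1)) with hB
  have hmem : (a, b) ∈ B := by
    rw [hB, Finset.mem_filter]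
    exact ⟨Finset.mem_univ _, hablt, hdesc⟩
  have hcard : Nmeas n (fun k => σ (Equiv.swap a b k)) = (B.erase (a, b)).card := by
    rw [Nmeas]
    refine Finset.card_bij' (fun p _ => (Equiv.swap a b p.1, Equiv.swap a b p.2))
      (fun p _ => (Equiv.swap a b p.1, Equiv.swap a b p.2)) ?_ ?_ ?_ ?_
    · intro p hp
      rw [Finset.mem_filter] at hp
      obtain ⟨-, hp1, hp2⟩ := hp
      have hp2' : σ (Equiv.swap a b p.2) < σ (Equiv.swap a b p.1) := hp2
      have hpair : ¬(p.1 = a ∧ p.2 = b) := by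
        rintro ⟨e1, e2⟩
        rw [e1, e2, Equiv.swap_apply_right, Equiv.swap_apply_left] at hp2'
        exact lt_asymm hp2' hdesc
      rw [Finset.mem_erase, hB, Finset.mem_filter]
      refine ⟨?_, Finset.mem_univ _, swap_lt_of_lt hab hp1 hpair, hp2'⟩
      intro hh
      have e1 : Equiv.swap a b p.1 = a := congrArg Prod.fst hh
      have e2 : Equiv.swap a b p.2 = b := congrArg Prod.snd hh
      have e1' : p.1 = b := by
        have h3 := congrArg (Equiv.swap a b) e1
        rwa [Equiv.swap_apply_self, Equiv.swap_apply_left] at h3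
      have e2' : p.2 = a := by
        have h3 := congrArg (Equiv.swap a b) e2
        rwa [Equiv.swap_apply_self, Equiv.swap_apply_right] at h3
      rw [e1', e2'] at hp1
      exact lt_asymm hp1 hablt
    · intro p hp
      rw [Finset.mem_erase, hB, Finset.mem_filter] at hp
      obtain ⟨hne, -, hp1, hp2⟩ := hp
      have hpair : ¬(p.1 = a ∧ p.2 = b) := by
        rintro ⟨e1, e2⟩
        exact hne (Prod.ext e1 e2)
      rw [Finset.mem_filter]
      refine ⟨Finset.mem_univ _, swap_lt_of_lt hab hp1 hpair, ?_⟩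
      show σ (Equiv.swap a b (Equiv.swap a b p.2)) < σ (Equiv.swap a b (Equiv.swap a b p.1))
      rw [Equiv.swap_apply_self, Equiv.swap_apply_self]
      exact hp2
    · intro p hp
      simp [Equiv.swap_apply_self]
    · intro p hp
      simp [Equiv.swap_apply_self]
  have hfin : (B.erase (a, b)).card < B.card := Finset.card_erase_lt_of_mem hmem
  rw [hcard]
  exact hfin

/-- `π_λ(x) = Σ_{Q ∈ st_λ} x^{|q_{P,Q}|}` does not depend on `P`. -/
theorem stmt9 (μ : YoungDiagram) (n : ℕ) (hn : μ.card = n)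
    (P P' : Cell μ ≃ Fin n) (hP : IsSYT μ n P) (hP' : IsSYT μ n P') :
    piP μ n P = piP μ n P' := by
  suffices H : ∀ m : ℕ, ∀ P : Cell μ ≃ Fin n, IsSYT μ n P →
      Nmeas n (fun k => P' (P.symm k)) < m → piP μ n P = piP μ n P' by
    exact H (Nmeas n (fun k => P' (P.symm k)) + 1) P hP (Nat.lt_succ_self _)
  intro m
  induction m with
  | zero => exact fun P hPs h => absurd h (Nat.not_lt_zero _)
  | succ m ih =>
    intro P hPs hlt
    set σ : Fin n → Fin n := fun k => P' (P.symm k) with hσ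
    by_cases hdesc : ∃ l, ∃ h : l + 1 < n, σ ⟨l+1, h⟩ < σ ⟨l, Nat.lt_of_succ_lt h⟩
    · obtain ⟨l, h, hlt2⟩ := hdesc
      set a : Fin n := ⟨l, Nat.lt_of_succ_lt h⟩ with ha
      set b : Fin n := ⟨l+1, h⟩ with hb
      have hab : (a:ℕ)+1 = (b:ℕ) := rfl
      set c := P.symm a with hc
      set d := P.symm b with hd
      have hPc : P c = a := P.apply_symm_apply a
      have hPd : P d = b := P.apply_symm_apply b
      have hcd1 : ¬ c.1 ≤ d.1 := by
        intro hle
        have h1 : P' c ≤ P' d := hP' c d hle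
        exact absurd h1 (not_le.mpr hlt2)
      have hcd2 : ¬ d.1 ≤ c.1 := by
        intro hle
        have h1 : P d ≤ P c := hPs d c hle
        rw [hPc, hPd, Fin.le_def] at h1
        omega
      have hswap := piP_swap μ n a b hab P hcd1 hcd2
      set P2 := P.trans (Equiv.swap a b) with hP2def
      have hP2 : IsSYT μ n P2 := by
        intro x y hxy
        rcases eq_or_ne x y with rfl | hne
        · exact le_refl _
        have hxy' : P x < P y :=
          lt_of_le_of_ne (hPs x y hxy) (fun hh => hne (P.injective hh))
        have h1 : ¬(P x = a ∧ P y = b) := by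
          rintro ⟨e1, e2⟩
          have ex : x = c := by rw [hc, ← e1, Equiv.symm_apply_apply]
          have ey : y = d := by rw [hd, ← e2, Equiv.symm_apply_apply]
          rw [ex, ey] at hxy
          exact hcd1 hxy
        have := swap_lt_of_lt hab hxy' h1
        simp only [hP2def, Equiv.trans_apply]
        exact le_of_lt this
      have hless : Nmeas n (fun k => P' (P2.symm k)) < Nmeas n σ := by
        have hfun : (fun k => P' (P2.symm k)) = fun k => σ (Equiv.swap a b k) := by
          funext k
          simp only [hσ, hP2def]
          simp [Equiv.symm_trans_apply, Equiv.symm_swap]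
        rw [hfun]
        exact Nmeas_swap σ a b hab hlt2
      rw [hswap]
      exact ih P2 hP2 (lt_of_lt_of_le hless (Nat.lt_succ_iff.mp hlt))
    · push_neg at hdesc
      have hPP : P = P' := by
        have hstep : ∀ (l : ℕ) (h : l + 1 < n),
            σ ⟨l, Nat.lt_of_succ_lt h⟩ ≤ σ ⟨l+1, h⟩ := fun l h => hdesc l h
        have key : ∀ (k : ℕ) (i : Fin n) (h : (i:ℕ) + k < n), σ i ≤ σ ⟨(i:ℕ) + k, h⟩ := by
          intro k
          induction k with
          | zero => intro i h; exact le_of_eq (congrArg σ (Fin.ext (by simp)))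
          | succ k ihk =>
            intro i h
            have h1 : (i:ℕ) + k < n := by omega
            exact le_trans (ihk i h1) (hstep ((i:ℕ) + k) h)
        have hmono : Monotone σ := by
          intro i j hij
          have hij' : (i:ℕ) ≤ (j:ℕ) := hij
          have hj : j = ⟨(i:ℕ) + ((j:ℕ) - (i:ℕ)), by omega⟩ := Fin.ext (by simp only [Fin.val_mk]; omega)
          rw [hj]
          exact key _ i _
        have hinj : Function.Injective σ := by
          intro x y hxy
          have := congrArg P'.symm hxy
          simp only [hσ, Equiv.symm_apply_apply] at this
          exact P.symm.injective this
        have hsm : StrictMono σ := hmono.strictMono_of_injective hinj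
        have hsurj : Function.Surjective σ := fun k =>
          ⟨P (P'.symm k), by simp [hσ]⟩
        have hrange : Set.range σ = Set.range (id : Fin n → Fin n) := by
          rw [Set.range_id, Set.range_eq_univ.mpr hsurj]
        have hid : σ = id := (hsm.range_inj strictMono_id).mp hrange
        refine Equiv.ext fun x => ?_
        have hx := congrFun hid (P x)
        simp only [hσ, Equiv.symm_apply_apply, id_eq] at hx
        exact hx.symm
      rw [hPP]
end

section
/- For every Young diagram λ with n nodes and any standard tableau P of shape λ, the generating function identity Σ_{k≥0} r_λ(k) x^k = π_λ(x) / ((1−x)(1−x²)⋯(1−xⁿ)) holds as formal power series, where r_λ(k) is the number of reverse plane partitions of shape λ with volume k and π_λ(x) = Σ_{Q ∈ st_λ} x^{|q_{P,Q}|}. -/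
open Finset

section SortSec
variable {C : Type} [Fintype C] {n : ℕ}

/-- Sorting equiv for an injective key. -/
noncomputable def sortEquiv (key : C → ℕ) (hinj : Function.Injective key)
    (hC : Fintype.card C = n) : C ≃ Fin n := by
  have hs : (Finset.univ.image key).card = n := by
    rw [Finset.card_image_of_injective _ hinj, Finset.card_univ, hC]
  exact Equiv.ofBijective
    (fun c => ((Finset.univ.image key).orderIsoOfFin hs).symm
      ⟨key c, Finset.mem_image_of_mem key (Finset.mem_univ c)⟩)
    (by
      rw [Fintype.bijective_iff_injective_and_card]
      refine ⟨fun a b hab => ?_, by simp [hC]⟩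
      have := ((Finset.univ.image key).orderIsoOfFin hs).symm.injective hab
      exact hinj (Subtype.ext_iff.mp this))

lemma sortEquiv_lt_iff (key : C → ℕ) (hinj : Function.Injective key)
    (hC : Fintype.card C = n) (c d : C) :
    sortEquiv key hinj hC c < sortEquiv key hinj hC d ↔ key c < key d := by
  simp only [sortEquiv, Equiv.ofBijective_apply, OrderIso.lt_iff_lt]
  exact Subtype.mk_lt_mk

lemma equiv_fin_eq_of_lt_iff (Q Q' : C ≃ Fin n)
    (h : ∀ c d, Q c < Q d ↔ Q' c < Q' d) : Q = Q' := by
  have hmono : StrictMono (fun i => Q' (Q.symm i)) := by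
    intro i j hij
    have : Q (Q.symm i) < Q (Q.symm j) := by simpa using hij
    exact (h _ _).mp this
  have hmono2 : StrictMono (fun i => Q (Q'.symm i)) := by
    intro i j hij
    have : Q' (Q'.symm i) < Q' (Q'.symm j) := by simpa using hij
    exact (h _ _).mpr this
  have key : ∀ i : Fin n, Q' (Q.symm i) = i := by
    have hsurj : Function.Surjective (fun i => Q' (Q.symm i)) :=
      (Q.symm.trans Q').surjective
    set E := StrictMono.orderIsoOfSurjective _ hmono hsurj with hEdef
    have hE : E = OrderIso.refl (Fin n) := Subsingleton.elim _ _
    intro i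
    have : E i = i := by rw [hE]; rfl
    have h2 : (E : Fin n → Fin n) i = i := this
    rw [hEdef, StrictMono.coe_orderIsoOfSurjective] at h2
    exact h2
  ext c
  have := key (Q c)
  simp only [Equiv.symm_apply_apply] at this
  exact congrArg Fin.val this.symm

lemma sortEquiv_unique (key : C → ℕ) (hinj : Function.Injective key)
    (hC : Fintype.card C = n) (Q : C ≃ Fin n)
    (h : ∀ c d, Q c < Q d ↔ key c < key d) : Q = sortEquiv key hinj hC := by
  refine equiv_fin_eq_of_lt_iff _ _ (fun c d => ?_)
  rw [h, sortEquiv_lt_iff]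

end SortSec


open Finset

/-- Number of monotone `g : Fin n → ℕ` with given sum. -/
noncomputable def pn (n m : ℕ) : ℕ := Nat.card {g : Fin n → ℕ // Monotone g ∧ ∑ i, g i = m}

lemma finite_mono_sum (n a k : ℕ) (p : (Fin n → ℕ) → Prop) :
    Finite {g : Fin n → ℕ // p g ∧ ∑ i, g i + a = k} := by
  refine Finite.of_injective (fun g => (fun i => (⟨g.1 i, ?_⟩ : Fin (k+1)))) ?_
  · have h1 : g.1 i ≤ ∑ j, g.1 j := Finset.single_le_sum (fun j _ => Nat.zero_le _) (mem_univ i)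
    have := g.2.2
    omega
  · intro g g' hgg
    ext i
    exact congrArg Fin.val (congrFun hgg i)

lemma finite_mono_sum' (n k : ℕ) : Finite {g : Fin n → ℕ // Monotone g ∧ ∑ i, g i = k} := by
  haveI := finite_mono_sum n 0 k Monotone
  exact Finite.of_equiv {g : Fin n → ℕ // Monotone g ∧ ∑ i, g i + 0 = k}
    (Equiv.subtypeEquivRight fun g => by constructor <;> rintro ⟨h1, h2⟩ <;> exact ⟨h1, by omega⟩)

lemma pn_zero (m : ℕ) : pn 0 m = if m = 0 then 1 else 0 := by
  unfold pn
  split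
  · subst ‹m = 0›
    rw [Nat.card_eq_one_iff_unique]
    refine ⟨⟨fun a b => ?_⟩, ⟨⟨fun i => i.elim0, fun a _ _ => a.elim0, by simp⟩⟩⟩
    ext i
    exact i.elim0
  · rw [Nat.card_eq_zero]
    left
    constructor
    rintro ⟨g, _, hsum⟩
    simp at hsum
    omega

/-- monotone functions on `Fin (n+1)` with `g 0 = 0` correspond to monotone functions on `Fin n`. -/
def consEquiv (n M : ℕ) :
    {g : Fin (n+1) → ℕ // (Monotone g ∧ ∑ i, g i = M) ∧ g 0 = 0} ≃
      {h : Fin n → ℕ // Monotone h ∧ ∑ i, h i = M} where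
  toFun g := ⟨fun i => g.1 i.succ, by
    obtain ⟨⟨hm, hs⟩, h0⟩ := g.2
    refine ⟨fun i j hij => hm (by simpa using hij), ?_⟩
    show ∑ i : Fin n, g.1 i.succ = M
    rw [Fin.sum_univ_succ] at hs
    omega⟩
  invFun h := ⟨Fin.cons 0 h.1, by
    obtain ⟨hm, hs⟩ := h.2
    have hmono : Monotone (Fin.cons 0 h.1 : Fin (n+1) → ℕ) := by
      intro a b hab
      induction a using Fin.cases with
      | zero => simp
      | succ a =>
        induction b using Fin.cases with
        | zero =>
          simp only [Fin.le_zero_iff] at hab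
          exact absurd hab (Fin.succ_ne_zero a)
        | succ b =>
          simp only [Fin.cons_succ]
          exact hm (by simpa [Fin.succ_le_succ_iff] using hab)
    refine ⟨⟨hmono, ?_⟩, by simp⟩
    rw [Fin.sum_univ_succ]
    simpa using hs⟩
  left_inv g := by
    ext i
    induction i using Fin.cases with
    | zero => simp [g.2.2]
    | succ i => simp
  right_inv h := by ext i; simp

/-- monotone functions on `Fin (n+1)` with `g 0 ≠ 0` correspond to monotone functions with
sum smaller by `n+1`. -/
def shiftEquiv (n M : ℕ) :
    {g : Fin (n+1) → ℕ // (Monotone g ∧ ∑ i, g i = M + (n+1)) ∧ g 0 ≠ 0} ≃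
      {g : Fin (n+1) → ℕ // Monotone g ∧ ∑ i, g i = M} where
  toFun g := ⟨fun i => g.1 i - 1, by
    obtain ⟨⟨hm, hs⟩, h0⟩ := g.2
    have hpos : ∀ i, 1 ≤ g.1 i := fun i => by
      have := hm (Fin.zero_le i); omega
    refine ⟨fun i j hij => ?_, ?_⟩
    · show g.1 i - 1 ≤ g.1 j - 1
      have := hm hij; omega
    · show ∑ i : Fin (n+1), (g.1 i - 1) = M
      have h2 : ∑ i, (g.1 i - 1) + ∑ _i : Fin (n+1), 1 = ∑ i, g.1 i := by
        rw [← Finset.sum_add_distrib]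
        exact Finset.sum_congr rfl fun i _ => by have := hpos i; omega
      simp only [Finset.sum_const, card_univ, Fintype.card_fin, smul_eq_mul, mul_one] at h2
      omega⟩
  invFun g := ⟨fun i => g.1 i + 1, by
    obtain ⟨hm, hs⟩ := g.2
    refine ⟨⟨fun i j hij => ?_, ?_⟩, ?_⟩
    · show g.1 i + 1 ≤ g.1 j + 1
      have := hm hij; omega
    · show ∑ i : Fin (n+1), (g.1 i + 1) = M + (n+1)
      rw [Finset.sum_add_distrib]
      simp [hs]
    · show g.1 0 + 1 ≠ 0
      omega⟩
  left_inv g := by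
    ext i
    show (g.1 i - 1) + 1 = g.1 i
    have hpos : 1 ≤ g.1 i := by
      have := g.2.1.1 (Fin.zero_le i)
      have := g.2.2
      omega
    omega
  right_inv g := by
    ext i
    show (g.1 i + 1) - 1 = g.1 i
    omega

def splitEquiv {α : Type*} (p q : α → Prop) [DecidablePred q] :
    {x // p x} ≃ {x // p x ∧ q x} ⊕ {x // p x ∧ ¬ q x} where
  toFun x := if h : q x.1 then .inl ⟨x.1, x.2, h⟩ else .inr ⟨x.1, x.2, h⟩
  invFun y := y.elim (fun x => ⟨x.1, x.2.1⟩) (fun x => ⟨x.1, x.2.1⟩)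
  left_inv x := by by_cases h : q x.1 <;> simp [h]
  right_inv y := by
    rcases y with x | x
    · simp [x.2.2]
    · simp [x.2.2]

open Classical in
lemma pn_succ (n M : ℕ) :
    pn (n+1) (M + (n+1)) = pn n (M + (n+1)) + pn (n+1) M := by
  haveI := finite_mono_sum' (n+1) (M + (n+1))
  haveI := finite_mono_sum' n (M + (n+1))
  haveI := finite_mono_sum' (n+1) M
  haveI : Finite {g : Fin (n+1) → ℕ // (Monotone g ∧ ∑ i, g i = M + (n+1)) ∧ g 0 = 0} :=
    Finite.of_equiv _ (consEquiv n (M + (n+1))).symm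
  haveI : Finite {g : Fin (n+1) → ℕ // (Monotone g ∧ ∑ i, g i = M + (n+1)) ∧ g 0 ≠ 0} :=
    Finite.of_equiv _ (shiftEquiv n M).symm
  calc pn (n+1) (M + (n+1))
      = Nat.card ({g : Fin (n+1) → ℕ // (Monotone g ∧ ∑ i, g i = M + (n+1)) ∧ g 0 = 0} ⊕
          {g : Fin (n+1) → ℕ // (Monotone g ∧ ∑ i, g i = M + (n+1)) ∧ g 0 ≠ 0}) :=
        Nat.card_congr (splitEquiv _ (fun g : Fin (n+1) → ℕ => g 0 = 0))
    _ = pn n (M + (n+1)) + pn (n+1) M := by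
        rw [Nat.card_sum, Nat.card_congr (consEquiv n (M + (n+1))),
          Nat.card_congr (shiftEquiv n M)]
        rfl

lemma pn_succ_lt (n M : ℕ) (h : M < n + 1) : pn (n+1) M = pn n M := by
  refine Nat.card_congr ?_
  refine Equiv.trans (Equiv.subtypeEquivRight (q := fun g => (Monotone g ∧ ∑ i, g i = M) ∧ g 0 = 0)
    (fun g => ?_)) (consEquiv n M)
  constructor
  · rintro ⟨hm, hs⟩
    refine ⟨⟨hm, hs⟩, ?_⟩
    by_contra h0
    have hpos : ∀ i, 1 ≤ g i := fun i => by have := hm (Fin.zero_le i); omega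
    have : ∑ _i : Fin (n+1), 1 ≤ ∑ i, g i := Finset.sum_le_sum (fun i _ => hpos i)
    simp only [Finset.sum_const, Finset.card_univ, Fintype.card_fin, smul_eq_mul, mul_one] at this
    omega
  · rintro ⟨⟨hm, hs⟩, _⟩
    exact ⟨hm, hs⟩

noncomputable def mkpn (n : ℕ) : PowerSeries ℤ := PowerSeries.mk fun m => (pn n m : ℤ)

lemma mkpn_zero : mkpn 0 = 1 := by
  ext m
  simp [mkpn, pn_zero, PowerSeries.coeff_one]

lemma mkpn_step (n : ℕ) : mkpn (n+1) * (1 - PowerSeries.X ^ (n+1)) = mkpn n := by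
  ext m
  rw [mul_sub, mul_one, map_sub, PowerSeries.coeff_mul_X_pow']
  simp only [mkpn, PowerSeries.coeff_mk]
  split_ifs with h
  · obtain ⟨M, rfl⟩ : ∃ M, m = M + (n+1) := ⟨m - (n+1), by omega⟩
    have h2 : M + (n+1) - (n+1) = M := by omega
    rw [h2, pn_succ n M]
    push_cast
    ring
  · rw [sub_zero]
    exact_mod_cast pn_succ_lt n m (by omega)

lemma mkpn_prod (n : ℕ) :
    mkpn n * ∏ k ∈ Finset.range n, (1 - PowerSeries.X ^ (k+1)) = 1 := by
  induction n with
  | zero => simp [mkpn_zero]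
  | succ n ih =>
    rw [Finset.prod_range_succ,
      show mkpn (n+1) * ((∏ k ∈ Finset.range n, (1 - PowerSeries.X ^ (k+1))) *
          (1 - PowerSeries.X ^ (n+1))) =
        (mkpn (n+1) * (1 - PowerSeries.X ^ (n+1))) *
          ∏ k ∈ Finset.range n, (1 - PowerSeries.X ^ (k+1)) from by ring,
      mkpn_step, ih]

section Main
open Classical Finset

variable {μ : YoungDiagram} {n : ℕ}

lemma cell_card (hn : μ.card = n) : Fintype.card (Cell μ) = n := by
  rw [Fintype.card_coe]
  exact hn

/-- Encoding of the lexicographic pair `(f c, P c)` as a natural number. -/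
def keyf (P : Cell μ ≃ Fin n) (f : Cell μ → ℕ) (c : Cell μ) : ℕ := f c * (n+1) + (P c : ℕ)

lemma keyf_inj (P : Cell μ ≃ Fin n) (f : Cell μ → ℕ) : Function.Injective (keyf P f) := by
  intro c d h
  have hc : (P c : ℕ) < n + 1 := by have := (P c).isLt; omega
  have hd : (P d : ℕ) < n + 1 := by have := (P d).isLt; omega
  have hmod : (P c : ℕ) = (P d : ℕ) := by
    have h1 : ((P c : ℕ) + f c * (n+1)) % (n+1) = ((P d : ℕ) + f d * (n+1)) % (n+1) := by
      rw [Nat.add_comm ((P c : ℕ)), Nat.add_comm ((P d : ℕ))] at *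
      unfold keyf at h
      rw [h]
    rwa [Nat.add_mul_mod_self_right, Nat.add_mul_mod_self_right,
      Nat.mod_eq_of_lt hc, Nat.mod_eq_of_lt hd] at h1
  exact P.injective (Fin.val_injective hmod)

lemma keyf_lt_of_lt (P : Cell μ ≃ Fin n) (f : Cell μ → ℕ) {c d : Cell μ} (h : f c < f d) :
    keyf P f c < keyf P f d := by
  unfold keyf
  have hc : (P c : ℕ) < n + 1 := by have := (P c).isLt; omega
  calc f c * (n+1) + (P c : ℕ) < f c * (n+1) + (n+1) := by omega
    _ = (f c + 1) * (n+1) := by ring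
    _ ≤ f d * (n+1) := Nat.mul_le_mul_right _ (by omega)
    _ ≤ f d * (n+1) + (P d : ℕ) := Nat.le_add_right _ _

lemma keyf_lt_iff (P : Cell μ ≃ Fin n) (f : Cell μ → ℕ) (c d : Cell μ) :
    keyf P f c < keyf P f d ↔ f c < f d ∨ (f c = f d ∧ (P c : ℕ) < (P d : ℕ)) := by
  constructor
  · intro h
    rcases lt_trichotomy (f c) (f d) with h' | h' | h'
    · exact Or.inl h'
    · refine Or.inr ⟨h', ?_⟩
      unfold keyf at h
      rw [h'] at h
      omega
    · exact absurd (keyf_lt_of_lt P f h') (by omega)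
  · rintro (h | ⟨h1, h2⟩)
    · exact keyf_lt_of_lt P f h
    · unfold keyf
      rw [h1]
      omega

/-- The `Q`-ordering associated to a filling `f` : sort by value, ties broken by `P`. -/
noncomputable def Qf (hn : μ.card = n) (P : Cell μ ≃ Fin n) (f : Cell μ → ℕ) :
    Cell μ ≃ Fin n :=
  sortEquiv (keyf P f) (keyf_inj P f) (cell_card hn)

lemma Qf_lt_iff (hn : μ.card = n) (P : Cell μ ≃ Fin n) (f : Cell μ → ℕ) (c d : Cell μ) :
    Qf hn P f c < Qf hn P f d ↔ keyf P f c < keyf P f d :=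
  sortEquiv_lt_iff _ _ _ _ _

lemma ped_apply {S : Type} (P Q : S ≃ Fin n) (c : S) :
    ped P Q c = ((Finset.range (Q c : ℕ)).filter fun l => disag P Q l).card := rfl

lemma ped_mono {S : Type} (P Q : S ≃ Fin n) {c d : S} (h : (Q c : ℕ) ≤ (Q d : ℕ)) :
    ped P Q c ≤ ped P Q d :=
  Finset.card_le_card (Finset.filter_subset_filter _ (Finset.range_subset_range.2 h))

lemma ped_succ {S : Type} (P Q : S ≃ Fin n) (l : ℕ) (hl : l + 1 < n) :
    ped P Q (Q.symm ⟨l+1, hl⟩) =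
      ped P Q (Q.symm ⟨l, by omega⟩) + (if disag P Q l then 1 else 0) := by
  simp only [ped_apply, Equiv.apply_symm_apply]
  rw [Finset.range_add_one, Finset.filter_insert]
  split_ifs with h
  · rw [Finset.card_insert_of_notMem (by simp)]
  · rfl


lemma f_step (hn : μ.card = n) (P : Cell μ ≃ Fin n) {f : Cell μ → ℕ}
    (l : ℕ) (hl : l + 1 < n) :
    f ((Qf hn P f).symm ⟨l, by omega⟩) + (if disag P (Qf hn P f) l then 1 else 0) ≤
      f ((Qf hn P f).symm ⟨l+1, hl⟩) := by
  set Q := Qf hn P f with hQdef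
  set c := Q.symm ⟨l, by omega⟩ with hc
  set d := Q.symm ⟨l+1, hl⟩ with hd
  have hQ : Q c < Q d := by
    rw [hc, hd]
    simp only [Equiv.apply_symm_apply]
    exact Fin.mk_lt_mk.mpr (by omega)
  have hor := (keyf_lt_iff P f c d).mp ((Qf_lt_iff hn P f c d).mp hQ)
  split_ifs with hdis
  · obtain ⟨h', hlt⟩ := hdis
    have hPP : (P d : ℕ) < (P c : ℕ) := hlt
    rcases hor with h | ⟨heq, hP2⟩
    · omega
    · omega
  · rcases hor with h | ⟨heq, _⟩ <;> omega

lemma ped_le_s10 (hn : μ.card = n) (P : Cell μ ≃ Fin n) {f : Cell μ → ℕ}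
    (l : ℕ) (h : l < n) :
    ped P (Qf hn P f) ((Qf hn P f).symm ⟨l, h⟩) ≤ f ((Qf hn P f).symm ⟨l, h⟩) := by
  induction l with
  | zero => simp [ped_apply]
  | succ l ih =>
    rw [ped_succ P (Qf hn P f) l h]
    have h1 := f_step hn P (f := f) l h
    have h2 := ih (by omega)
    omega

lemma ped_le' (hn : μ.card = n) (P : Cell μ ≃ Fin n) {f : Cell μ → ℕ} (c : Cell μ) :
    ped P (Qf hn P f) c ≤ f c := by
  have := ped_le_s10 hn P (f := f) (Qf hn P f c : ℕ) (Qf hn P f c).isLt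
  simpa [Fin.eta] using this

/-- The complementary weakly increasing sequence extracted from a filling. -/
noncomputable def gOf (hn : μ.card = n) (P : Cell μ ≃ Fin n) (f : Cell μ → ℕ)
    (l : Fin n) : ℕ :=
  f ((Qf hn P f).symm l) - ped P (Qf hn P f) ((Qf hn P f).symm l)

lemma gOf_mono (hn : μ.card = n) (P : Cell μ ≃ Fin n) (f : Cell μ → ℕ) :
    Monotone (gOf hn P f) := by
  have step : ∀ (l : ℕ) (hl : l + 1 < n), gOf hn P f ⟨l, by omega⟩ ≤ gOf hn P f ⟨l+1, hl⟩ := by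
    intro l hl
    unfold gOf
    have h1 := f_step hn P (f := f) l hl
    have h2 := ped_succ P (Qf hn P f) l hl
    have h3 := ped_le_s10 hn P (f := f) l (by omega)
    omega
  have main : ∀ (b a : ℕ) (ha : a < n) (hb : b < n), a ≤ b →
      gOf hn P f ⟨a, ha⟩ ≤ gOf hn P f ⟨b, hb⟩ := by
    intro b
    induction b with
    | zero =>
      intro a ha hb hab
      have h0 : (⟨a, ha⟩ : Fin n) = ⟨0, hb⟩ := by ext; simpa using hab
      rw [h0]
    | succ b ih =>
      intro a ha hb hab
      rcases Nat.eq_or_lt_of_le hab with h | h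
      · subst h; exact le_rfl
      · exact le_trans (ih a ha (by omega) (by omega)) (step b hb)
  intro i j hij
  have := main (j : ℕ) (i : ℕ) i.isLt j.isLt hij
  simpa [Fin.eta] using this

lemma Qf_SYT (hn : μ.card = n) (P : Cell μ ≃ Fin n) (hP : IsSYT μ n P)
    {f : Cell μ → ℕ} (hf : IsRPP μ f) : IsSYT μ n (Qf hn P f) := by
  intro a b hab
  by_cases hab' : a = b
  · subst hab'; exact le_rfl
  · have hPab : (P a : ℕ) < (P b : ℕ) := by
      have h1 := hP a b hab
      have h2 : P a ≠ P b := fun h => hab' (P.injective h)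
      have := Fin.val_ne_of_ne h2
      omega
    have hfab : f a ≤ f b := hf a b hab
    have : keyf P f a < keyf P f b := by
      rw [keyf_lt_iff]
      rcases Nat.eq_or_lt_of_le hfab with h | h
      · exact Or.inr ⟨h, hPab⟩
      · exact Or.inl h
    exact le_of_lt ((Qf_lt_iff hn P f a b).mpr this)

lemma vol_eq_sum (f : Cell μ → ℕ) : vol μ f = ∑ c : Cell μ, f c := by
  rw [vol, Finset.attach_eq_univ]


lemma vol_decomp (hn : μ.card = n) (P : Cell μ ≃ Fin n) (f : Cell μ → ℕ) :
    vol μ f = (∑ l, gOf hn P f l) + vol μ (ped P (Qf hn P f)) := by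
  rw [vol_eq_sum f, vol_eq_sum (ped P (Qf hn P f))]
  rw [← Equiv.sum_comp (Qf hn P f).symm f, ← Equiv.sum_comp (Qf hn P f).symm (ped P (Qf hn P f))]
  rw [← Finset.sum_add_distrib]
  refine Finset.sum_congr rfl fun l _ => ?_
  have := ped_le' hn P (f := f) ((Qf hn P f).symm l)
  unfold gOf
  omega

/-- The filling associated to a pair of a standard tableau and a weakly increasing sequence. -/
noncomputable def fOf (P Q : Cell μ ≃ Fin n) (g : Fin n → ℕ) (c : Cell μ) : ℕ :=
  g (Q c) + ped P Q c

lemma fOf_RPP (P Q : Cell μ ≃ Fin n) (hQ : IsSYT μ n Q) {g : Fin n → ℕ} (hg : Monotone g) :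
    IsRPP μ (fOf P Q g) := by
  intro a b hab
  have h1 := hQ a b hab
  exact add_le_add (hg h1) (ped_mono P Q h1)

lemma vol_fOf (P Q : Cell μ ≃ Fin n) (g : Fin n → ℕ) :
    vol μ (fOf P Q g) = (∑ l, g l) + vol μ (ped P Q) := by
  rw [vol_eq_sum, vol_eq_sum]
  unfold fOf
  rw [Finset.sum_add_distrib, ← Equiv.sum_comp Q g]

lemma key_forward (P Q : Cell μ ≃ Fin n) {g : Fin n → ℕ} (hg : Monotone g)
    {c d : Cell μ} (hcd : Q c < Q d) :
    keyf P (fOf P Q g) c < keyf P (fOf P Q g) d := by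
  have hgle : g (Q c) ≤ g (Q d) := hg hcd.le
  have hpedle : ped P Q c ≤ ped P Q d := ped_mono P Q (le_of_lt hcd)
  have hfle : fOf P Q g c ≤ fOf P Q g d := add_le_add hgle hpedle
  rcases Nat.eq_or_lt_of_le hfle with heq | hlt
  swap
  · exact keyf_lt_of_lt P _ hlt
  have hped_eq : ped P Q c = ped P Q d := by
    unfold fOf at heq
    omega
  have claim : ∀ j : ℕ, ∀ hj : j < n, (Q c : ℕ) < j → j ≤ (Q d : ℕ) →
      (P c : ℕ) < (P (Q.symm ⟨j, hj⟩) : ℕ) := by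
    intro j
    induction j with
    | zero => intro hj h1 h2; omega
    | succ j ih =>
      intro hj h1 h2
      have hnd : ¬ disag P Q j := by
        intro hdis
        have hsub1 : (Finset.range (Q c : ℕ)).filter (fun l => disag P Q l) ⊆
            (Finset.range j).filter (fun l => disag P Q l) :=
          Finset.filter_subset_filter _ (Finset.range_subset_range.2 (by omega))
        have hsub2 : insert j ((Finset.range j).filter (fun l => disag P Q l)) ⊆
            (Finset.range (Q d : ℕ)).filter (fun l => disag P Q l) := by
          intro x hx
          rcases Finset.mem_insert.mp hx with rfl | hx
          · exact Finset.mem_filter.mpr ⟨Finset.mem_range.mpr (by omega), hdis⟩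
          · exact Finset.filter_subset_filter _ (Finset.range_subset_range.2 (by omega)) hx
        have hc1 := Finset.card_le_card hsub1
        have hc2 := Finset.card_le_card hsub2
        rw [Finset.card_insert_of_notMem (by simp)] at hc2
        rw [ped_apply, ped_apply] at hped_eq
        omega
      have hle : (P (Q.symm ⟨j, by omega⟩) : ℕ) ≤ (P (Q.symm ⟨j+1, hj⟩) : ℕ) := by
        by_contra hcon
        exact hnd ⟨hj, by omega⟩
      have hne : Q.symm ⟨j, by omega⟩ ≠ Q.symm ⟨j+1, hj⟩ := by
        intro h
        have := Q.symm.injective h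
        simp [Fin.mk.injEq] at this
      have hPlt : (P (Q.symm ⟨j, by omega⟩) : ℕ) < (P (Q.symm ⟨j+1, hj⟩) : ℕ) := by
        rcases Nat.eq_or_lt_of_le hle with h | h
        · exact absurd (P.injective (Fin.val_injective h)) hne
        · exact h
      by_cases hcj : (Q c : ℕ) = j
      · have hc' : Q.symm ⟨j, by omega⟩ = c := by
          rw [show (⟨j, by omega⟩ : Fin n) = Q c from by ext; simp [hcj]]
          exact Q.symm_apply_apply c
        rwa [hc'] at hPlt
      · exact lt_trans (ih (by omega) (by omega) (by omega)) hPlt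
  have hPcd : (P c : ℕ) < (P d : ℕ) := by
    have := claim (Q d : ℕ) (Q d).isLt (by exact_mod_cast hcd) le_rfl
    simpa [Fin.eta] using this
  exact (keyf_lt_iff P _ c d).mpr (Or.inr ⟨heq, hPcd⟩)

lemma Qf_fOf (hn : μ.card = n) (P Q : Cell μ ≃ Fin n) {g : Fin n → ℕ} (hg : Monotone g) :
    Qf hn P (fOf P Q g) = Q := by
  symm
  apply sortEquiv_unique
  intro c d
  constructor
  · exact fun h => key_forward P Q hg h
  · intro hkey
    rcases lt_trichotomy (Q c) (Q d) with h | h | h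
    · exact h
    · have : c = d := Q.injective h
      subst this
      omega
    · exact absurd (key_forward P Q hg h) (by omega)

lemma gOf_fOf (hn : μ.card = n) (P Q : Cell μ ≃ Fin n) {g : Fin n → ℕ} (hg : Monotone g) :
    gOf hn P (fOf P Q g) = g := by
  funext l
  unfold gOf
  rw [Qf_fOf hn P Q hg]
  unfold fOf
  rw [Equiv.apply_symm_apply]
  omega

lemma mySigma_ext {A G : Type*} {p : A → Prop} {q : A → G → Prop}
    (x y : Σ a : {a // p a}, {g : G // q a.1 g}) (h1 : x.1.1 = y.1.1) (h2 : x.2.1 = y.2.1) :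
    x = y := by
  obtain ⟨⟨a, ha⟩, ⟨g, hg⟩⟩ := x
  obtain ⟨⟨b, hb⟩, ⟨g', hg'⟩⟩ := y
  simp only at h1 h2
  subst h1
  subst h2
  rfl

lemma fiber_card (m a k : ℕ) :
    Nat.card {g : Fin m → ℕ // Monotone g ∧ (∑ i, g i) + a = k} =
      if a ≤ k then pn m (k - a) else 0 := by
  split_ifs with h
  · rw [pn]
    exact Nat.card_congr (Equiv.subtypeEquivRight fun g => by
      constructor <;> rintro ⟨h1, h2⟩ <;> exact ⟨h1, by omega⟩)
  · rw [Nat.card_eq_zero]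
    left
    constructor
    rintro ⟨g, _, hs⟩
    omega

/-- The master bijection. -/
noncomputable def masterEquiv (hn : μ.card = n) (P : Cell μ ≃ Fin n) (hP : IsSYT μ n P)
    (k : ℕ) :
    {f : Cell μ → ℕ // IsRPP μ f ∧ vol μ f = k} ≃
      Σ Q : {Q : Cell μ ≃ Fin n // IsSYT μ n Q},
        {g : Fin n → ℕ // Monotone g ∧ (∑ i, g i) + vol μ (ped P Q.1) = k} where
  toFun x := ⟨⟨Qf hn P x.1, Qf_SYT hn P hP x.2.1⟩,
    ⟨gOf hn P x.1, gOf_mono hn P x.1, by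
      show (∑ i, gOf hn P x.1 i) + vol μ (ped P (Qf hn P x.1)) = k
      have := vol_decomp hn P x.1
      have := x.2.2
      omega⟩⟩
  invFun y := ⟨fOf P y.1.1 y.2.1, fOf_RPP P y.1.1 y.1.2 y.2.2.1, by
    rw [vol_fOf]
    exact y.2.2.2⟩
  left_inv x := by
    apply Subtype.ext
    funext c
    show fOf P (Qf hn P x.1) (gOf hn P x.1) c = x.1 c
    unfold fOf gOf
    rw [Equiv.symm_apply_apply]
    have := ped_le' hn P (f := x.1) c
    omega
  right_inv y := by
    refine mySigma_ext (p := fun Q : Cell μ ≃ Fin n => IsSYT μ n Q)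
      (q := fun (Q : Cell μ ≃ Fin n) (g : Fin n → ℕ) =>
        Monotone g ∧ (∑ i, g i) + vol μ (ped P Q) = k) _ _ ?_ ?_
    · show Qf hn P (fOf P y.1.1 y.2.1) = y.1.1
      exact Qf_fOf hn P y.1.1 y.2.2.1
    · show gOf hn P (fOf P y.1.1 y.2.1) = y.2.1
      exact gOf_fOf hn P y.1.1 y.2.2.1

lemma rpp_card (hn : μ.card = n) (P : Cell μ ≃ Fin n) (hP : IsSYT μ n P) (k : ℕ) :
    Nat.card {f : Cell μ → ℕ // IsRPP μ f ∧ vol μ f = k} =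
      ∑ Q ∈ Finset.univ.filter (fun Q : Cell μ ≃ Fin n => IsSYT μ n Q),
        (if vol μ (ped P Q) ≤ k then pn n (k - vol μ (ped P Q)) else 0) := by
  rw [Nat.card_congr (masterEquiv hn P hP k)]
  haveI : ∀ Q : {Q : Cell μ ≃ Fin n // IsSYT μ n Q},
      Finite {g : Fin n → ℕ // Monotone g ∧ (∑ i, g i) + vol μ (ped P Q.1) = k} :=
    fun Q => finite_mono_sum n _ k Monotone
  haveI : ∀ Q : {Q : Cell μ ≃ Fin n // IsSYT μ n Q},
      Fintype {g : Fin n → ℕ // Monotone g ∧ (∑ i, g i) + vol μ (ped P Q.1) = k} :=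
    fun Q => Fintype.ofFinite _
  rw [Nat.card_eq_fintype_card, Fintype.card_sigma]
  rw [Finset.sum_subtype (p := fun Q : Cell μ ≃ Fin n => IsSYT μ n Q)
    (Finset.univ.filter (fun Q : Cell μ ≃ Fin n => IsSYT μ n Q))
    (by simp) (fun Q => if vol μ (ped P Q) ≤ k then pn n (k - vol μ (ped P Q)) else 0)]
  refine Finset.sum_congr rfl fun Q _ => ?_
  rw [← Nat.card_eq_fintype_card, fiber_card]

lemma piP_coe (P : Cell μ ≃ Fin n) :
    ((piP μ n P : Polynomial ℤ) : PowerSeries ℤ) =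
      ∑ Q ∈ Finset.univ.filter (fun Q : Cell μ ≃ Fin n => IsSYT μ n Q),
        (PowerSeries.X : PowerSeries ℤ) ^ vol μ (ped P Q) := by
  unfold piP
  calc ((↑(∑ Q ∈ Finset.univ.filter (fun Q : Cell μ ≃ Fin n => IsSYT μ n Q),
        (Polynomial.X : Polynomial ℤ) ^ vol μ (ped P Q))) : PowerSeries ℤ)
      = Polynomial.coeToPowerSeries.ringHom
          (∑ Q ∈ Finset.univ.filter (fun Q : Cell μ ≃ Fin n => IsSYT μ n Q),
            (Polynomial.X : Polynomial ℤ) ^ vol μ (ped P Q)) := by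
        rw [Polynomial.coeToPowerSeries.ringHom_apply]
    _ = ∑ Q ∈ Finset.univ.filter (fun Q : Cell μ ≃ Fin n => IsSYT μ n Q),
          (PowerSeries.X : PowerSeries ℤ) ^ vol μ (ped P Q) := by
        rw [map_sum]
        refine Finset.sum_congr rfl fun Q _ => ?_
        rw [Polynomial.coeToPowerSeries.ringHom_apply, Polynomial.coe_pow, Polynomial.coe_X]

lemma series_eq (hn : μ.card = n) (P : Cell μ ≃ Fin n) (hP : IsSYT μ n P) :
    (PowerSeries.mk fun k =>
        ((Set.ncard {f : Cell μ → ℕ | IsRPP μ f ∧ vol μ f = k} : ℕ) : ℤ)) =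
      (piP μ n P : PowerSeries ℤ) * mkpn n := by
  ext k
  rw [PowerSeries.coeff_mk]
  have hL : Set.ncard {f : Cell μ → ℕ | IsRPP μ f ∧ vol μ f = k} =
      Nat.card {f : Cell μ → ℕ // IsRPP μ f ∧ vol μ f = k} :=
    (Nat.card_coe_set_eq _).symm
  rw [hL, rpp_card hn P hP k, piP_coe P, Finset.sum_mul, map_sum, Nat.cast_sum]
  refine Finset.sum_congr rfl fun Q _ => ?_
  rw [mul_comm, PowerSeries.coeff_mul_X_pow']
  simp only [mkpn, PowerSeries.coeff_mk]
  split_ifs with h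
  · rfl
  · rfl

end Main

/-- `Σ_k r_λ(k) x^k = π_λ(x) / ((1−x)(1−x²)⋯(1−xⁿ))` as formal
power series, stated multiplied out: the generating series of reverse plane
partitions of shape `λ` by volume times `(1−x)⋯(1−xⁿ)` equals `π_λ(x)`. -/
theorem stmt10 (μ : YoungDiagram) (n : ℕ) (hn : μ.card = n)
    (P : Cell μ ≃ Fin n) (hP : IsSYT μ n P) :
    (PowerSeries.mk fun k => ((Set.ncard {f : Cell μ → ℕ | IsRPP μ f ∧ vol μ f = k} : ℕ) : ℤ)) *
      ∏ k ∈ Finset.range n, (1 - PowerSeries.X ^ (k + 1)) =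
      (piP μ n P : PowerSeries ℤ) := by
  rw [series_eq hn P hP, mul_assoc, mkpn_prod, mul_one]
end

section
/- For any Young diagram λ ⊢ n and any standard tableau P of shape λ, π_λ(1) = |st_λ| (the number of standard Young tableaux of shape λ), and hence by the identity π_λ(x) = Π_{k=1}^n (1−x^k) / Π_{α∈λ}(1−x^{h_α}), taking the limit x → 1 recovers the hook length formula |st_λ| = n! / Π_{α∈λ} h_α. -/
/-- The hook length of a node `c` of `μ`: the number of nodes in its row weakly
to the right plus the number of nodes in its column strictly below. -/
def hook (μ : YoungDiagram) (c : ℕ × ℕ) : ℕ :=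
  (μ.cells.filter fun d => d.1 = c.1 ∧ c.2 ≤ d.2).card +
  (μ.cells.filter fun d => d.2 = c.2 ∧ c.1 < d.1).card

open Finset Polynomial

namespace HLF
variable {F : Type*} [Field F] {ι : Type*} [DecidableEq ι]

lemma basis_eq_C_mul_nodal (s : Finset ι) (v : ι → F) (i : ι) :
    Lagrange.basis s v i
      = C (∏ j ∈ s.erase i, (v i - v j)⁻¹) * Lagrange.nodal (s.erase i) v := by
  rw [Lagrange.basis, Lagrange.nodal_eq]
  simp only [Lagrange.basisDivisor]
  rw [prod_mul_distrib, ← map_prod]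

lemma coeff_basis (s : Finset ι) (v : ι → F) (i : ι) (hi : i ∈ s) :
    (Lagrange.basis s v i).coeff (s.card - 1) = ∏ j ∈ s.erase i, (v i - v j)⁻¹ := by
  rw [basis_eq_C_mul_nodal, coeff_C_mul]
  have h1 : (Lagrange.nodal (s.erase i) v).natDegree = s.card - 1 := by
    rw [Lagrange.natDegree_nodal, card_erase_of_mem hi]
  have hm : (Lagrange.nodal (s.erase i) v).Monic := Lagrange.nodal_monic
  rw [← h1, hm.coeff_natDegree, mul_one]

lemma lag_sum (s : Finset ι) (v : ι → F) (hv : Set.InjOn v s) (hs : 2 ≤ s.card) :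
    ∑ i ∈ s, v i * ∏ j ∈ s.erase i, (v i - v j)⁻¹
      = if s.card = 2 then 1 else 0 := by
  have hX := Lagrange.eq_interpolate (f := (X : F[X])) hv
    (by rw [degree_X]; exact_mod_cast (by omega : 1 < s.card))
  have h := congrArg (fun p : F[X] => p.coeff (s.card - 1)) hX
  simp only [Lagrange.interpolate_apply, eval_X] at h
  rw [coeff_X, finset_sum_coeff] at h
  have h2 : ∀ i ∈ s, (C (v i) * Lagrange.basis s v i).coeff (s.card - 1)
      = v i * ∏ j ∈ s.erase i, (v i - v j)⁻¹ := by
    intro i hi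
    rw [coeff_C_mul, coeff_basis s v i hi]
  rw [Finset.sum_congr rfl h2] at h
  rw [← h]
  have hiff : (1 = s.card - 1) ↔ s.card = 2 := by omega
  simp [hiff]

lemma sum_powerset_inner (s : Finset ι) (v : ι → F) (hv : Set.InjOn v s)
    (T : Finset ι) (hT : T ∈ s.powerset) :
    ∑ i ∈ T, v i * ∏ j ∈ T.erase i, (-(v i - v j)⁻¹)
      = if T.card = 1 then (∑ i ∈ T, v i) else if T.card = 2 then -1 else 0 := by
  have hTs : T ⊆ s := mem_powerset.mp hT
  have hsign : ∀ i ∈ T, ∏ j ∈ T.erase i, (-(v i - v j)⁻¹)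
      = (-1 : F) ^ (T.card - 1) * ∏ j ∈ T.erase i, (v i - v j)⁻¹ := by
    intro i hi
    rw [← card_erase_of_mem hi, ← prod_const, ← prod_mul_distrib]
    exact Finset.prod_congr rfl fun j _ => by ring
  rw [Finset.sum_congr rfl (fun i hi => by
    rw [hsign i hi, ← mul_assoc, mul_comm (v i), mul_assoc]), ← Finset.mul_sum]
  rcases Nat.lt_or_ge T.card 2 with h2 | h2
  · interval_cases h : T.card
    · rw [Finset.card_eq_zero.mp h]
      simp
    · simp only [h]
      norm_num
      refine Finset.sum_congr rfl fun i hi => ?_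
      have he : T.erase i = ∅ := by
        rw [← Finset.card_eq_zero, card_erase_of_mem hi, h]
      simp [he]
  · rw [lag_sum T v (hv.mono (by exact_mod_cast hTs)) h2]
    rcases Nat.lt_or_ge T.card 3 with h3 | h3
    · have hc2 : T.card = 2 := by omega
      simp [hc2]
    · have h1 : T.card ≠ 1 := by omega
      have h2' : T.card ≠ 2 := by omega
      simp [h1, h2']

lemma key_identity (s : Finset ι) (v : ι → F) (hv : Set.InjOn v s) :
    ∑ i ∈ s, v i * ∏ j ∈ s.erase i, ((v i - v j - 1) / (v i - v j))
      = (∑ i ∈ s, v i) - (s.card.choose 2 : ℕ) := by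
  have step1 : ∀ i ∈ s, v i * ∏ j ∈ s.erase i, ((v i - v j - 1) / (v i - v j))
      = ∑ S ∈ (s.erase i).powerset, v i * ∏ j ∈ S, (-(v i - v j)⁻¹) := by
    intro i hi
    rw [← Finset.mul_sum]
    congr 1
    have hfac : ∀ j ∈ s.erase i, (v i - v j - 1) / (v i - v j) = (-(v i - v j)⁻¹) + 1 := by
      intro j hj
      have hne : v i - v j ≠ 0 := by
        rw [sub_ne_zero]
        exact fun h => (mem_erase.mp hj).1 (hv (mem_erase.mp hj).2 hi h.symm)
      field_simp
      ring
    rw [Finset.prod_congr rfl hfac, Finset.prod_add]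
    exact Finset.sum_congr rfl fun S _ => by rw [prod_const_one, mul_one]
  calc ∑ i ∈ s, v i * ∏ j ∈ s.erase i, ((v i - v j - 1) / (v i - v j))
      = ∑ i ∈ s, ∑ S ∈ (s.erase i).powerset, v i * ∏ j ∈ S, (-(v i - v j)⁻¹) :=
        Finset.sum_congr rfl step1
    _ = ∑ p ∈ s.sigma (fun i => (s.erase i).powerset),
          v p.1 * ∏ j ∈ p.2, (-(v p.1 - v j)⁻¹) :=
        Finset.sum_sigma' s (fun i => (s.erase i).powerset)
          (fun i S => v i * ∏ j ∈ S, (-(v i - v j)⁻¹))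
    _ = ∑ q ∈ s.powerset.sigma (fun T => (T : Finset ι)),
          v q.2 * ∏ j ∈ q.1.erase q.2, (-(v q.2 - v j)⁻¹) := by
        refine Finset.sum_nbij' (fun p => ⟨insert p.1 p.2, p.1⟩)
          (fun q => ⟨q.2, q.1.erase q.2⟩) ?_ ?_ ?_ ?_ ?_
        · rintro ⟨i, S⟩ hp
          simp only [Finset.mem_sigma, Finset.mem_powerset] at hp ⊢
          refine ⟨Finset.insert_subset (hp.1) ((hp.2.trans (erase_subset i s))), ?_⟩
          exact Finset.mem_insert_self _ _
        · rintro ⟨T, i⟩ hq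
          simp only [Finset.mem_sigma, Finset.mem_powerset] at hq ⊢
          exact ⟨hq.1 hq.2, fun x hx => Finset.mem_erase.mpr
            ⟨(Finset.mem_erase.mp hx).1, hq.1 (Finset.mem_erase.mp hx).2⟩⟩
        · rintro ⟨i, S⟩ hp
          simp only [Finset.mem_sigma, Finset.mem_powerset] at hp
          have hiS : i ∉ S := fun h => (Finset.mem_erase.mp (hp.2 h)).1 rfl
          simp [Finset.erase_insert hiS]
        · rintro ⟨T, i⟩ hq
          simp only [Finset.mem_sigma, Finset.mem_powerset] at hq
          simp [Finset.insert_erase hq.2]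
        · rintro ⟨i, S⟩ hp
          simp only [Finset.mem_sigma, Finset.mem_powerset] at hp
          have hiS : i ∉ S := fun h => (Finset.mem_erase.mp (hp.2 h)).1 rfl
          simp [Finset.erase_insert hiS]
    _ = ∑ T ∈ s.powerset, ∑ i ∈ T, v i * ∏ j ∈ T.erase i, (-(v i - v j)⁻¹) :=
        (Finset.sum_sigma' s.powerset (fun T => (T : Finset ι))
          (fun T i => v i * ∏ j ∈ T.erase i, (-(v i - v j)⁻¹))).symm
    _ = ∑ T ∈ s.powerset,
          (if T.card = 1 then (∑ i ∈ T, v i) else if T.card = 2 then -1 else 0) :=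
        Finset.sum_congr rfl (sum_powerset_inner s v hv)
    _ = (∑ i ∈ s, v i) - (s.card.choose 2 : ℕ) := by
        rw [Finset.sum_powerset]
        have hj : ∀ jj ∈ range (s.card + 1),
            (∑ T ∈ powersetCard jj s,
              if T.card = 1 then (∑ i ∈ T, v i) else if T.card = 2 then (-1 : F) else 0)
            = (if jj = 1 then (∑ i ∈ s, v i) else 0)
              + (if jj = 2 then -((s.card.choose 2 : ℕ) : F) else 0) := by
          intro jj _
          have hc : ∀ T ∈ powersetCard jj s, T.card = jj :=
            fun T hT => (Finset.mem_powersetCard.mp hT).2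
          rcases eq_or_ne jj 1 with rfl | h1
          · rw [Finset.sum_congr rfl (fun T hT => by rw [if_pos (hc T hT)])]
            rw [Finset.powersetCard_one, Finset.sum_map]
            simp
          rcases eq_or_ne jj 2 with rfl | h2
          · rw [Finset.sum_congr rfl (fun T hT => by
              rw [if_neg (by rw [hc T hT]; omega), if_pos (hc T hT)])]
            rw [Finset.sum_const, Finset.card_powersetCard]
            simp [h1]
          · rw [Finset.sum_congr rfl (fun T hT => by
              rw [if_neg (by rw [hc T hT]; exact h1), if_neg (by rw [hc T hT]; exact h2)])]
            simp [h1, h2]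
        rw [Finset.sum_congr rfl hj, Finset.sum_add_distrib]
        rw [Finset.sum_ite_eq' (range (s.card + 1)) 1 (fun _ => ∑ i ∈ s, v i)]
        rw [Finset.sum_ite_eq' (range (s.card + 1)) 2
          (fun _ => -((s.card.choose 2 : ℕ) : F))]
        rcases Nat.lt_or_ge s.card 2 with hsc | hsc
        · interval_cases h : s.card
          · rw [Finset.card_eq_zero.mp h]
            simp
          · simp [h, sub_eq_add_neg]
        · have h1 : (1 : ℕ) ∈ range (s.card + 1) := Finset.mem_range.mpr (by omega)
          have h2 : (2 : ℕ) ∈ range (s.card + 1) := Finset.mem_range.mpr (by omega)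
          rw [if_pos h1, if_pos h2, sub_eq_add_neg]



def nrows (μ : YoungDiagram) : ℕ := μ.colLen 0

def ell (μ : YoungDiagram) (K i : ℕ) : ℕ := μ.rowLen i + (K - 1 - i)

def mfun (μ : YoungDiagram) (K j : ℕ) : ℕ := j + (K - μ.colLen j)

variable (μ : YoungDiagram) (K : ℕ)

lemma rowLen_pos_iff (i : ℕ) : 0 < μ.rowLen i ↔ i < nrows μ := by
  rw [← YoungDiagram.mem_iff_lt_rowLen]
  exact YoungDiagram.mem_iff_lt_colLen

lemma colLen_le_nrows (j : ℕ) : μ.colLen j ≤ nrows μ :=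
  μ.colLen_anti 0 j (Nat.zero_le j)

lemma rowLen_eq_zero_of_le {i : ℕ} (h : nrows μ ≤ i) : μ.rowLen i = 0 := by
  have := (rowLen_pos_iff μ i).mp
  omega

lemma cells_eq_biUnion (hK : nrows μ ≤ K) :
    μ.cells = (range K).biUnion (fun i => {i} ×ˢ range (μ.rowLen i)) := by
  ext ⟨a, b⟩
  simp only [Finset.mem_biUnion, Finset.mem_range, Finset.mem_product,
    Finset.mem_singleton, YoungDiagram.mem_cells]
  constructor
  · intro h
    have hb : b < μ.rowLen a := YoungDiagram.mem_iff_lt_rowLen.mp h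
    have ha : 0 < μ.rowLen a := by omega
    have := (rowLen_pos_iff μ a).mp ha
    exact ⟨a, by omega, rfl, by simpa using hb⟩
  · rintro ⟨i, hi, rfl, hb⟩
    exact YoungDiagram.mem_iff_lt_rowLen.mpr (by simpa using hb)

lemma prod_cells {M : Type*} [CommMonoid M] (hK : nrows μ ≤ K) (f : ℕ × ℕ → M) :
    ∏ c ∈ μ.cells, f c = ∏ i ∈ range K, ∏ j ∈ range (μ.rowLen i), f (i, j) := by
  rw [cells_eq_biUnion μ K hK, Finset.prod_biUnion]
  · refine Finset.prod_congr rfl fun i _ => ?_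
    rw [Finset.prod_product]
    simp
  · intro a _ b _ hab
    simp only [Finset.disjoint_left, Finset.mem_product, Finset.mem_singleton]
    rintro ⟨x, y⟩ ⟨rfl, _⟩ ⟨h, _⟩
    exact hab h

lemma card_eq_sum_rowLens (hK : nrows μ ≤ K) :
    μ.card = ∑ i ∈ range K, μ.rowLen i := by
  show μ.cells.card = _
  rw [cells_eq_biUnion μ K hK, Finset.card_biUnion]
  · refine Finset.sum_congr rfl fun i _ => ?_
    rw [Finset.card_product]
    simp
  · intro a _ b _ hab
    simp only [Finset.disjoint_left, Finset.mem_product, Finset.mem_singleton]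
    rintro ⟨x, y⟩ ⟨rfl, _⟩ ⟨h, _⟩
    exact hab h

lemma hook_filter_row (i j : ℕ) :
    (μ.cells.filter fun d => d.1 = i ∧ j ≤ d.2) = {i} ×ˢ Finset.Ico j (μ.rowLen i) := by
  ext ⟨a, b⟩
  simp only [Finset.mem_filter, YoungDiagram.mem_cells, Finset.mem_product,
    Finset.mem_singleton, Finset.mem_Ico]
  constructor
  · rintro ⟨hm, rfl, hj⟩
    exact ⟨rfl, hj, YoungDiagram.mem_iff_lt_rowLen.mp hm⟩
  · rintro ⟨rfl, hj, hb⟩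
    exact ⟨YoungDiagram.mem_iff_lt_rowLen.mpr hb, rfl, hj⟩

lemma hook_filter_col (i j : ℕ) :
    (μ.cells.filter fun d => d.2 = j ∧ i < d.1) = Finset.Ioo i (μ.colLen j) ×ˢ {j} := by
  ext ⟨a, b⟩
  simp only [Finset.mem_filter, YoungDiagram.mem_cells, Finset.mem_product,
    Finset.mem_singleton, Finset.mem_Ioo]
  constructor
  · rintro ⟨hm, rfl, hi⟩
    exact ⟨⟨hi, YoungDiagram.mem_iff_lt_colLen.mp hm⟩, rfl⟩
  · rintro ⟨⟨hi, ha⟩, rfl⟩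
    exact ⟨YoungDiagram.mem_iff_lt_colLen.mpr ha, rfl, hi⟩

lemma hook_eq (i j : ℕ) :
    hook μ (i, j) = (μ.rowLen i - j) + (μ.colLen j - (i + 1)) := by
  unfold hook
  rw [hook_filter_row, hook_filter_col]
  simp [Nat.card_Ico, Nat.card_Ioo]
  omega

lemma mem_of_lt_rowLen {i j : ℕ} (h : j < μ.rowLen i) : i < μ.colLen j :=
  YoungDiagram.mem_iff_lt_colLen.mp (YoungDiagram.mem_iff_lt_rowLen.mpr h)

lemma hook_add_m (hK : nrows μ ≤ K) {i j : ℕ} (hi : i < K) (hj : j < μ.rowLen i) :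
    hook μ (i, j) + mfun μ K j = ell μ K i := by
  have h1 : i < μ.colLen j := mem_of_lt_rowLen μ hj
  have h2 : μ.colLen j ≤ K := le_trans (colLen_le_nrows μ j) hK
  rw [hook_eq]
  unfold mfun ell
  omega

lemma m_strictMono (hK : nrows μ ≤ K) {a b : ℕ} (hab : a < b) :
    mfun μ K a < mfun μ K b := by
  have h1 : μ.colLen b ≤ μ.colLen a := μ.colLen_anti a b (le_of_lt hab)
  have h2 : μ.colLen a ≤ K := le_trans (colLen_le_nrows μ a) hK
  unfold mfun
  omega

lemma ell_strictAnti (hK : nrows μ ≤ K) {i i' : ℕ} (hi' : i' < K) (hii : i < i') :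
    ell μ K i' < ell μ K i := by
  have h1 : μ.rowLen i' ≤ μ.rowLen i := μ.rowLen_anti i i' (le_of_lt hii)
  unfold ell
  omega

lemma m_ne_ell (hK : nrows μ ≤ K) {j i' : ℕ} (hi' : i' < K) :
    mfun μ K j ≠ ell μ K i' := by
  have h2 : μ.colLen j ≤ K := le_trans (colLen_le_nrows μ j) hK
  rcases Nat.lt_or_ge j (μ.rowLen i') with h | h
  · have h1 : i' < μ.colLen j := mem_of_lt_rowLen μ h
    unfold mfun ell
    omega
  · have h1 : μ.colLen j ≤ i' := by
      by_contra hc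
      push_neg at hc
      have := YoungDiagram.mem_iff_lt_rowLen.mp (YoungDiagram.mem_iff_lt_colLen.mpr hc)
      omega
    unfold mfun ell
    omega

lemma row_prod (hK : nrows μ ≤ K) (i : ℕ) (hi : i < K) :
    (∏ j ∈ range (μ.rowLen i), hook μ (i, j))
      * (∏ i' ∈ Ioo i K, (ell μ K i - ell μ K i'))
      = (ell μ K i).factorial := by
  set L := ell μ K i with hL
  have hm_lt : ∀ j < μ.rowLen i, mfun μ K j < L := by
    intro j hj
    have h := hook_add_m μ K hK hi hj
    have hpos : 0 < hook μ (i, j) := by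
      rw [hook_eq]
      have h1 : i < μ.colLen j := mem_of_lt_rowLen μ hj
      omega
    omega
  have hA : ∀ j ∈ range (μ.rowLen i), hook μ (i, j) = L - mfun μ K j := by
    intro j hj
    have := hook_add_m μ K hK hi (mem_range.mp hj)
    omega
  have hAinj : ∀ x ∈ range (μ.rowLen i), ∀ y ∈ range (μ.rowLen i),
      hook μ (i, x) = hook μ (i, y) → x = y := by
    intro x hx y hy hxy
    rw [hA x hx, hA y hy] at hxy
    have hx' := hm_lt x (mem_range.mp hx)
    have hy' := hm_lt y (mem_range.mp hy)
    rcases Nat.lt_trichotomy x y with h | h | h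
    · have := m_strictMono μ K hK h; omega
    · exact h
    · have := m_strictMono μ K hK h; omega
  have hBinj : ∀ x ∈ Ioo i K, ∀ y ∈ Ioo i K,
      L - ell μ K x = L - ell μ K y → x = y := by
    intro x hx y hy hxy
    simp only [mem_Ioo] at hx hy
    have hx' := ell_strictAnti μ K hK hx.2 hx.1
    have hy' := ell_strictAnti μ K hK hy.2 hy.1
    rcases Nat.lt_trichotomy x y with h | h | h
    · have := ell_strictAnti μ K hK hy.2 h; omega
    · exact h
    · have := ell_strictAnti μ K hK hx.2 h; omega
  set A := (range (μ.rowLen i)).image (fun j => hook μ (i, j)) with hAdef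
  set B := (Ioo i K).image (fun i' => L - ell μ K i') with hBdef
  have hDisj : Disjoint A B := by
    rw [Finset.disjoint_left]
    intro t htA htB
    obtain ⟨j, hj, rfl⟩ := Finset.mem_image.mp htA
    obtain ⟨i', hi', heq⟩ := Finset.mem_image.mp htB
    rw [hA j hj] at heq
    simp only [mem_Ioo] at hi'
    have h1 := hm_lt j (mem_range.mp hj)
    have h2 := ell_strictAnti μ K hK hi'.2 hi'.1
    have : mfun μ K j = ell μ K i' := by omega
    exact m_ne_ell μ K hK hi'.2 this
  have hsub : A ∪ B ⊆ Finset.Icc 1 L := by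
    intro t ht
    rcases Finset.mem_union.mp ht with h | h
    · obtain ⟨j, hj, rfl⟩ := Finset.mem_image.mp h
      rw [hA j hj]
      have := hm_lt j (mem_range.mp hj)
      simp only [Finset.mem_Icc]
      omega
    · obtain ⟨i', hi', rfl⟩ := Finset.mem_image.mp h
      simp only [mem_Ioo] at hi'
      have := ell_strictAnti μ K hK hi'.2 hi'.1
      simp only [Finset.mem_Icc]
      omega
  have hcardA : A.card = μ.rowLen i := by
    rw [hAdef, Finset.card_image_of_injOn (fun x hx y hy => hAinj x hx y hy),
      Finset.card_range]
  have hcardB : B.card = K - i - 1 := by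
    rw [hBdef, Finset.card_image_of_injOn (fun x hx y hy => hBinj x hx y hy),
      Nat.card_Ioo]
  have hcardU : (A ∪ B).card = L := by
    rw [Finset.card_union_of_disjoint hDisj, hcardA, hcardB, hL]
    unfold ell
    omega
  have hUnion : A ∪ B = Finset.Icc 1 L := by
    apply Finset.eq_of_subset_of_card_le hsub
    rw [hcardU, Nat.card_Icc]
    omega
  calc (∏ j ∈ range (μ.rowLen i), hook μ (i, j))
      * (∏ i' ∈ Ioo i K, (ell μ K i - ell μ K i'))
      = (∏ t ∈ A, t) * (∏ t ∈ B, t) := by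
        rw [hAdef, hBdef, Finset.prod_image hAinj, Finset.prod_image hBinj]
    _ = ∏ t ∈ A ∪ B, t := (Finset.prod_union hDisj).symm
    _ = ∏ t ∈ Finset.Icc 1 L, t := by rw [hUnion]
    _ = L.factorial := by
        rw [← Finset.Ico_add_one_right_eq_Icc, Finset.prod_Ico_eq_prod_range]
        have hL1 : L + 1 - 1 = L := by omega
        rw [hL1, ← Finset.prod_range_add_one_eq_factorial]
        exact Finset.prod_congr rfl fun x _ => by omega

lemma hook_prod_mul_delta (hK : nrows μ ≤ K) :
    (∏ c ∈ μ.cells, hook μ c)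
      * (∏ i ∈ range K, ∏ i' ∈ Ioo i K, (ell μ K i - ell μ K i'))
      = ∏ i ∈ range K, (ell μ K i).factorial := by
  rw [prod_cells μ K hK (hook μ), ← Finset.prod_mul_distrib]
  exact Finset.prod_congr rfl fun i hi => row_prod μ K hK i (mem_range.mp hi)


open Classical in
noncomputable def nSYT (μ : YoungDiagram) (n : ℕ) : ℕ :=
  (Finset.univ.filter fun Q : Cell μ ≃ Fin n => IsSYT μ n Q).card

def IsCorner (μ : YoungDiagram) (c : ℕ × ℕ) : Prop :=
  c ∈ μ ∧ (c.1 + 1, c.2) ∉ μ ∧ (c.1, c.2 + 1) ∉ μ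

def corners (μ : YoungDiagram) : Finset (ℕ × ℕ) :=
  μ.cells.filter fun c => (c.1 + 1, c.2) ∉ μ ∧ (c.1, c.2 + 1) ∉ μ

lemma mem_corners {μ : YoungDiagram} {c : ℕ × ℕ} : c ∈ corners μ ↔ IsCorner μ c := by
  simp [corners, IsCorner, YoungDiagram.mem_cells, and_assoc]

lemma corner_maximal {μ : YoungDiagram} {c : ℕ × ℕ} (hc : IsCorner μ c)
    {e : ℕ × ℕ} (he : e ∈ μ) (hce : c ≤ e) : e = c := by
  obtain ⟨h1, h2, h3⟩ := hc
  have ha : c.1 ≤ e.1 := hce.1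
  have hb : c.2 ≤ e.2 := hce.2
  rcases Nat.lt_or_ge c.1 e.1 with h | h
  · exact absurd (μ.up_left_mem (show c.1 + 1 ≤ e.1 by omega) hb he) h2
  rcases Nat.lt_or_ge c.2 e.2 with h' | h'
  · exact absurd (μ.up_left_mem ha (show c.2 + 1 ≤ e.2 by omega) he) h3
  · exact Prod.ext (by omega) (by omega)

def eraseC (μ : YoungDiagram) (c : ℕ × ℕ) (h : IsCorner μ c) : YoungDiagram where
  cells := μ.cells.erase c
  isLowerSet := by
    intro a b hba ha
    simp only [Finset.coe_erase, Set.mem_diff, Set.mem_singleton_iff] at ha ⊢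
    obtain ⟨ha1, ha2⟩ := ha
    have haμ : a ∈ μ := ha1
    have hbμ : b ∈ μ := μ.isLowerSet hba haμ
    refine ⟨by exact hbμ, ?_⟩
    rintro rfl
    exact ha2 (corner_maximal h haμ hba)

lemma mem_eraseC {μ : YoungDiagram} {c : ℕ × ℕ} {h : IsCorner μ c} {d : ℕ × ℕ} :
    d ∈ eraseC μ c h ↔ d ∈ μ ∧ d ≠ c := by
  show d ∈ (eraseC μ c h).cells ↔ _
  show d ∈ μ.cells.erase c ↔ _
  rw [Finset.mem_erase, YoungDiagram.mem_cells, and_comm]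

lemma cells_eraseC {μ : YoungDiagram} {c : ℕ × ℕ} {h : IsCorner μ c} :
    (eraseC μ c h).cells = μ.cells.erase c := rfl

lemma card_eraseC {μ : YoungDiagram} {c : ℕ × ℕ} (h : IsCorner μ c) :
    (eraseC μ c h).card = μ.card - 1 := by
  show (μ.cells.erase c).card = μ.cells.card - 1
  exact Finset.card_erase_of_mem (by rw [YoungDiagram.mem_cells]; exact h.1)

lemma corner_of_SYT {μ : YoungDiagram} {m : ℕ} (T : Cell μ ≃ Fin (m + 1))
    (hT : IsSYT μ (m + 1) T) : IsCorner μ (T.symm (Fin.last m)).1 := by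
  set d := T.symm (Fin.last m) with hd
  have hdm : d.1 ∈ μ := by rw [← YoungDiagram.mem_cells]; exact d.2
  refine ⟨hdm, ?_, ?_⟩
  · intro hmem
    set e : Cell μ := ⟨(d.1.1 + 1, d.1.2), by rw [YoungDiagram.mem_cells]; exact hmem⟩
    have hle : d.1 ≤ e.1 := ⟨by simp [e], by simp [e]⟩
    have h1 : T d ≤ T e := hT d e hle
    have h2 : T d = Fin.last m := by rw [hd, Equiv.apply_symm_apply]
    have h3 : T e = Fin.last m := le_antisymm (Fin.le_last _) (h2 ▸ h1)
    have h4 : e = d := T.injective (by rw [h2, h3])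
    have := congrArg (fun x : Cell μ => x.1.1) h4
    simp [e] at this
  · intro hmem
    set e : Cell μ := ⟨(d.1.1, d.1.2 + 1), by rw [YoungDiagram.mem_cells]; exact hmem⟩
    have hle : d.1 ≤ e.1 := ⟨by simp [e], by simp [e]⟩
    have h1 : T d ≤ T e := hT d e hle
    have h2 : T d = Fin.last m := by rw [hd, Equiv.apply_symm_apply]
    have h3 : T e = Fin.last m := le_antisymm (Fin.le_last _) (h2 ▸ h1)
    have h4 : e = d := T.injective (by rw [h2, h3])
    have := congrArg (fun x : Cell μ => x.1.2) h4
    simp [e] at this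

section Bij
variable {μ : YoungDiagram} {m : ℕ} (d : Cell μ) (hd : IsCorner μ d.1)

def downE (T : Cell μ ≃ Fin (m + 1)) (hT : T.symm (Fin.last m) = d) :
    Cell (eraseC μ d.1 hd) ≃ Fin m where
  toFun e :=
    (T ⟨e.1, Finset.mem_of_mem_erase e.2⟩).castPred (by
      intro hlast
      have h2 : (⟨e.1, Finset.mem_of_mem_erase e.2⟩ : Cell μ) = T.symm (Fin.last m) := by
        rw [← hlast, Equiv.symm_apply_apply]
      rw [hT] at h2
      exact (Finset.mem_erase.mp e.2).1 (congrArg Subtype.val h2))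
  invFun x :=
    ⟨(T.symm x.castSucc).1, by
      apply Finset.mem_erase.mpr
      refine ⟨?_, (T.symm x.castSucc).2⟩
      intro hv
      have h1 : T.symm x.castSucc = d := Subtype.ext hv
      rw [← hT] at h1
      have h2 := T.symm.injective h1
      exact (Fin.castSucc_lt_last x).ne h2⟩
  left_inv e := by
    apply Subtype.ext
    simp only [Fin.castSucc_castPred, Equiv.symm_apply_apply]
  right_inv x := by
    simp only [Subtype.coe_eta, Equiv.apply_symm_apply, Fin.castPred_castSucc]

lemma coe_downE (T : Cell μ ≃ Fin (m + 1)) (hT : T.symm (Fin.last m) = d)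
    (e : Cell (eraseC μ d.1 hd)) :
    ((downE d hd T hT) e : ℕ) = (T ⟨e.1, Finset.mem_of_mem_erase e.2⟩ : ℕ) := rfl

def upE (T' : Cell (eraseC μ d.1 hd) ≃ Fin m) : Cell μ ≃ Fin (m + 1) where
  toFun e :=
    if h : e.1 = d.1 then Fin.last m
    else (T' ⟨e.1, Finset.mem_erase.mpr ⟨h, e.2⟩⟩).castSucc
  invFun x :=
    if h : x = Fin.last m then d
    else ⟨(T'.symm (x.castPred h)).1, Finset.mem_of_mem_erase (T'.symm (x.castPred h)).2⟩
  left_inv e := by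
    dsimp only
    by_cases h : e.1 = d.1
    · rw [dif_pos h, dif_pos rfl]
      exact (Subtype.ext h).symm
    · rw [dif_neg h, dif_neg (Fin.castSucc_lt_last _).ne]
      apply Subtype.ext
      simp only [Fin.castPred_castSucc, Equiv.symm_apply_apply]
  right_inv x := by
    dsimp only
    by_cases h : x = Fin.last m
    · rw [dif_pos h, dif_pos rfl, h]
    · rw [dif_neg h, dif_neg (Finset.mem_erase.mp (T'.symm (x.castPred h)).2).1]
      exact (congrArg Fin.castSucc (Equiv.apply_symm_apply T' (x.castPred h))).trans
        (Fin.castSucc_castPred x h)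

lemma upE_apply_eq (T' : Cell (eraseC μ d.1 hd) ≃ Fin m) (e : Cell μ) (h : e.1 = d.1) :
    upE d hd T' e = Fin.last m := dif_pos h

lemma upE_apply_ne (T' : Cell (eraseC μ d.1 hd) ≃ Fin m) (e : Cell μ) (h : ¬ e.1 = d.1) :
    upE d hd T' e = (T' ⟨e.1, Finset.mem_erase.mpr ⟨h, e.2⟩⟩).castSucc := dif_neg h

lemma downE_SYT (T : Cell μ ≃ Fin (m + 1)) (hT : T.symm (Fin.last m) = d)
    (hsyt : IsSYT μ (m + 1) T) : IsSYT (eraseC μ d.1 hd) m (downE d hd T hT) := by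
  intro a b hab
  rw [Fin.le_def, coe_downE, coe_downE]
  exact Fin.le_def.mp
    (hsyt ⟨a.1, Finset.mem_of_mem_erase a.2⟩ ⟨b.1, Finset.mem_of_mem_erase b.2⟩ hab)

lemma upE_SYT (T' : Cell (eraseC μ d.1 hd) ≃ Fin m)
    (hsyt : IsSYT (eraseC μ d.1 hd) m T') : IsSYT μ (m + 1) (upE d hd T') := by
  intro a b hab
  by_cases hb : b.1 = d.1
  · rw [upE_apply_eq d hd T' b hb]
    exact Fin.le_last _
  · by_cases ha : a.1 = d.1
    · exfalso
      have hbm : b.1 ∈ μ := by rw [← YoungDiagram.mem_cells]; exact b.2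
      have hda : IsCorner μ a.1 := by rw [ha]; exact hd
      have heq : b.1 = a.1 := corner_maximal hda hbm hab
      exact hb (heq.trans ha)
    · rw [upE_apply_ne d hd T' a ha, upE_apply_ne d hd T' b hb, Fin.le_def,
        Fin.coe_castSucc, Fin.coe_castSucc]
      exact Fin.le_def.mp
        (hsyt ⟨a.1, Finset.mem_erase.mpr ⟨ha, a.2⟩⟩ ⟨b.1, Finset.mem_erase.mpr ⟨hb, b.2⟩⟩ hab)

lemma upE_symm_last (T' : Cell (eraseC μ d.1 hd) ≃ Fin m) :
    (upE d hd T').symm (Fin.last m) = d := by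
  rw [Equiv.symm_apply_eq]
  exact (upE_apply_eq d hd T' d rfl).symm

lemma up_down (T : Cell μ ≃ Fin (m + 1)) (hT : T.symm (Fin.last m) = d) :
    upE d hd (downE d hd T hT) = T := by
  apply Equiv.ext
  intro a
  by_cases h : a.1 = d.1
  · rw [upE_apply_eq d hd _ a h]
    rw [show a = d from Subtype.ext h, ← hT, Equiv.apply_symm_apply]
  · apply Fin.val_injective
    rw [upE_apply_ne d hd _ a h, Fin.coe_castSucc, coe_downE]
end Bij

section Bij2
variable {μ : YoungDiagram} {m : ℕ} (d : Cell μ) (hd : IsCorner μ d.1)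

lemma down_up (T' : Cell (eraseC μ d.1 hd) ≃ Fin m) :
    downE d hd (upE d hd T') (upE_symm_last d hd T') = T' := by
  apply Equiv.ext
  intro a
  have ha : a.1 ≠ d.1 := (Finset.mem_erase.mp a.2).1
  apply Fin.val_injective
  rw [coe_downE, upE_apply_ne d hd T' _ ha, Fin.coe_castSucc]

end Bij2

open Classical in
lemma fiber_card {μ : YoungDiagram} {m : ℕ} (d : Cell μ) (hd : IsCorner μ d.1) :
    (Finset.univ.filter fun T : Cell μ ≃ Fin (m + 1) =>
        IsSYT μ (m + 1) T ∧ T.symm (Fin.last m) = d).card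
      = nSYT (eraseC μ d.1 hd) m := by
  unfold nSYT
  exact Finset.card_bij'
    (fun T hT => downE d hd T (Finset.mem_filter.mp hT).2.2)
    (fun T' _ => upE d hd T')
    (fun T hT => Finset.mem_filter.mpr ⟨Finset.mem_univ _,
      downE_SYT d hd T (Finset.mem_filter.mp hT).2.2 (Finset.mem_filter.mp hT).2.1⟩)
    (fun T' hT' => Finset.mem_filter.mpr ⟨Finset.mem_univ _,
      upE_SYT d hd T' (Finset.mem_filter.mp hT').2, upE_symm_last d hd T'⟩)
    (fun T hT => up_down d hd T (Finset.mem_filter.mp hT).2.2)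
    (fun T' _ => down_up d hd T')

open Classical in
lemma fiber_card_zero {μ : YoungDiagram} {m : ℕ} (d : Cell μ) (hd : ¬ IsCorner μ d.1) :
    (Finset.univ.filter fun T : Cell μ ≃ Fin (m + 1) =>
        IsSYT μ (m + 1) T ∧ T.symm (Fin.last m) = d).card = 0 := by
  rw [Finset.card_eq_zero, Finset.filter_eq_empty_iff]
  intro T _
  rintro ⟨hsyt, hlast⟩
  exact hd (hlast ▸ corner_of_SYT T hsyt)

open Classical in
lemma nSYT_rec (μ : YoungDiagram) (m : ℕ) :
    nSYT μ (m + 1)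
      = ∑ c ∈ (corners μ).attach, nSYT (eraseC μ c.1 (mem_corners.mp c.2)) m := by
  have hstep : ∀ db : Cell μ,
      ((Finset.univ.filter fun Q : Cell μ ≃ Fin (m+1) => IsSYT μ (m+1) Q).filter
        (fun T => T.symm (Fin.last m) = db)).card
      = if h : IsCorner μ db.1 then nSYT (eraseC μ db.1 h) m else 0 := by
    intro db
    rw [Finset.filter_filter]
    by_cases h : IsCorner μ db.1
    · rw [dif_pos h, fiber_card db h]
    · rw [dif_neg h, fiber_card_zero db h]
  have h0 : nSYT μ (m + 1)
      = ∑ db ∈ μ.cells.attach,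
          ((Finset.univ.filter fun Q : Cell μ ≃ Fin (m+1) => IsSYT μ (m+1) Q).filter
            (fun T => T.symm (Fin.last m) = db)).card := by
    unfold nSYT
    exact Finset.card_eq_sum_card_fiberwise (fun T _ => Finset.mem_attach _ _)
  rw [h0, Finset.sum_congr rfl fun db _ => hstep db]
  rw [Finset.sum_attach μ.cells
    (fun c => if h : IsCorner μ c then nSYT (eraseC μ c h) m else 0)]
  have hsub : corners μ ⊆ μ.cells := Finset.filter_subset _ _
  rw [show (∑ c ∈ (corners μ).attach, nSYT (eraseC μ c.1 (mem_corners.mp c.2)) m)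
      = ∑ c ∈ (corners μ).attach,
          (fun c => if h : IsCorner μ c then nSYT (eraseC μ c h) m else 0) c.1 from
    Finset.sum_congr rfl fun c _ => by simp only [dif_pos (mem_corners.mp c.2)]]
  rw [Finset.sum_attach (corners μ)
    (fun c => if h : IsCorner μ c then nSYT (eraseC μ c h) m else 0)]
  exact (Finset.sum_subset hsub (fun c _ hc => by
    rw [dif_neg]
    exact fun h => hc (mem_corners.mpr h))).symm

lemma nSYT_zero (μ : YoungDiagram) (h : μ.card = 0) : nSYT μ 0 = 1 := by
  classical
  have hcells : μ.cells = ∅ := Finset.card_eq_zero.mp h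
  haveI : IsEmpty (Cell μ) := ⟨fun c => absurd c.2 (by simp [hcells])⟩
  unfold nSYT
  have hfilt : (Finset.univ.filter fun Q : Cell μ ≃ Fin 0 => IsSYT μ 0 Q)
      = Finset.univ :=
    Finset.filter_true_of_mem (fun T _ => fun a => (IsEmpty.false a).elim)
  rw [hfilt, Finset.card_univ, Fintype.card_equiv (Equiv.equivOfIsEmpty _ _)]
  simp

lemma nrows_le_card (μ : YoungDiagram) : μ.colLen 0 ≤ μ.card := by
  rw [YoungDiagram.colLen_eq_card]
  exact Finset.card_le_card (Finset.filter_subset _ _)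



lemma rowLen_eq_of {ν : YoungDiagram} {i L : ℕ} (h : ∀ j, (i, j) ∈ ν ↔ j < L) :
    ν.rowLen i = L := by
  have h1 := h (ν.rowLen i)
  have h2 := h L
  rw [YoungDiagram.mem_iff_lt_rowLen] at h1 h2
  omega

lemma isCorner_iff (μ : YoungDiagram) (i j : ℕ) :
    IsCorner μ (i, j)
      ↔ 0 < μ.rowLen i ∧ j = μ.rowLen i - 1 ∧ μ.rowLen (i + 1) < μ.rowLen i := by
  unfold IsCorner
  dsimp only
  simp only [YoungDiagram.mem_iff_lt_rowLen]
  constructor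
  · rintro ⟨h1, h2, h3⟩
    omega
  · rintro ⟨h1, h2, h3⟩
    refine ⟨by omega, by omega, by omega⟩

lemma nrows_eraseC_le (μ : YoungDiagram) (c : ℕ × ℕ) (h : IsCorner μ c) :
    nrows (eraseC μ c h) ≤ nrows μ := by
  by_contra hlt
  push_neg at hlt
  have h1 : ((nrows μ, 0) : ℕ × ℕ) ∈ eraseC μ c h :=
    YoungDiagram.mem_iff_lt_colLen.mpr hlt
  have h2 := (mem_eraseC.mp h1).1
  have h3 := YoungDiagram.mem_iff_lt_colLen.mp h2
  exact lt_irrefl _ h3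

lemma rowLen_eraseC (μ : YoungDiagram) (c : ℕ × ℕ) (h : IsCorner μ c) (i : ℕ) :
    (eraseC μ c h).rowLen i = if i = c.1 then μ.rowLen i - 1 else μ.rowLen i := by
  have hcor := (isCorner_iff μ c.1 c.2).mp (by exact h)
  obtain ⟨hpos, hc2, hdrop⟩ := hcor
  apply rowLen_eq_of
  intro j
  rw [mem_eraseC]
  by_cases hi : i = c.1
  · subst hi
    rw [if_pos rfl, YoungDiagram.mem_iff_lt_rowLen]
    constructor
    · rintro ⟨h1, h2⟩
      have hne : j ≠ c.2 := fun hj => h2 (by rw [hj])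
      omega
    · intro hj
      refine ⟨by omega, ?_⟩
      intro heq
      have : j = c.2 := congrArg Prod.snd heq
      omega
  · rw [if_neg hi, YoungDiagram.mem_iff_lt_rowLen]
    constructor
    · rintro ⟨h1, _⟩
      exact h1
    · intro hj
      exact ⟨hj, fun heq => hi (congrArg Prod.fst heq)⟩

lemma sum_range_choose2 (K : ℕ) : ∑ i ∈ range K, i = K.choose 2 := by
  induction K with
  | zero => simp
  | succ n ihn =>
      rw [Finset.sum_range_succ, ihn]
      have h := Nat.choose_succ_succ n 1
      rw [Nat.choose_one_right] at h
      norm_num at h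
      omega

lemma sum_ell (μ : YoungDiagram) (K : ℕ) (hK : nrows μ ≤ K) :
    ∑ i ∈ range K, ell μ K i = μ.card + K.choose 2 := by
  unfold ell
  rw [Finset.sum_add_distrib, ← card_eq_sum_rowLens μ K hK]
  congr 1
  have h1 : ∀ i ∈ range K, K - 1 - i = (fun j => j) (K - 1 - i) := fun _ _ => rfl
  rw [show (∑ i ∈ range K, (K - 1 - i)) = ∑ i ∈ range K, i from
    Finset.sum_range_reflect (fun j => j) K, sum_range_choose2]

lemma prod_split (K i₀ : ℕ) (hi₀ : i₀ < K) (y : ℕ → ℚ) :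
    (∏ a ∈ range K, ∏ b ∈ Ioo a K, (y a - y b))
      = (∏ b ∈ Ioo i₀ K, (y i₀ - y b))
        * ((∏ a ∈ range i₀, (y a - y i₀))
            * ∏ a ∈ (range K).erase i₀, ∏ b ∈ (Ioo a K).erase i₀, (y a - y b)) := by
  rw [← Finset.mul_prod_erase (range K) _ (Finset.mem_range.mpr hi₀)]
  congr 1
  have hsplit : ∀ a ∈ (range K).erase i₀,
      (∏ b ∈ Ioo a K, (y a - y b))
        = (if a < i₀ then (y a - y i₀) else 1)
          * ∏ b ∈ (Ioo a K).erase i₀, (y a - y b) := by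
    intro a ha
    by_cases hai : a < i₀
    · rw [if_pos hai]
      exact (Finset.mul_prod_erase (Ioo a K) (fun b => y a - y b)
        (Finset.mem_Ioo.mpr ⟨hai, hi₀⟩)).symm
    · rw [if_neg hai, one_mul,
        Finset.erase_eq_of_notMem (fun hmem => hai (Finset.mem_Ioo.mp hmem).1)]
  rw [Finset.prod_congr rfl hsplit, Finset.prod_mul_distrib]
  congr 1
  have he : (range K).erase i₀ = range i₀ ∪ Ioo i₀ K := by
    ext j
    simp only [Finset.mem_erase, Finset.mem_range, Finset.mem_union, Finset.mem_Ioo]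
    omega
  have hdisj : Disjoint (range i₀) (Ioo i₀ K) := by
    rw [Finset.disjoint_left]
    intro j hj1 hj2
    simp only [Finset.mem_range] at hj1
    simp only [Finset.mem_Ioo] at hj2
    omega
  rw [he, Finset.prod_union hdisj]
  rw [Finset.prod_congr rfl (fun a ha => if_pos (Finset.mem_range.mp ha))]
  rw [Finset.prod_congr rfl
    (fun a ha => if_neg (by simp only [Finset.mem_Ioo] at ha; omega))]
  rw [Finset.prod_const_one, mul_one]

lemma DL (K i₀ : ℕ) (hi₀ : i₀ < K) (x x' : ℕ → ℚ)
    (hx' : ∀ j, x' j = if j = i₀ then x j - 1 else x j) :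
    (∏ a ∈ range K, ∏ b ∈ Ioo a K, (x' a - x' b))
        * ∏ j ∈ (range K).erase i₀, (x i₀ - x j)
      = (∏ a ∈ range K, ∏ b ∈ Ioo a K, (x a - x b))
        * ∏ j ∈ (range K).erase i₀, (x i₀ - x j - 1) := by
  rw [prod_split K i₀ hi₀ x', prod_split K i₀ hi₀ x]
  have h1 : (∏ b ∈ Ioo i₀ K, (x' i₀ - x' b)) = ∏ b ∈ Ioo i₀ K, (x i₀ - 1 - x b) :=
    Finset.prod_congr rfl fun b hb => by
      rw [hx' i₀, hx' b, if_pos rfl, if_neg (Finset.mem_Ioo.mp hb).1.ne']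
  have h2 : (∏ a ∈ range i₀, (x' a - x' i₀)) = ∏ a ∈ range i₀, (x a - (x i₀ - 1)) :=
    Finset.prod_congr rfl fun a ha => by
      rw [hx' a, hx' i₀, if_pos rfl, if_neg (Finset.mem_range.mp ha).ne]
  have h3 : (∏ a ∈ (range K).erase i₀, ∏ b ∈ (Ioo a K).erase i₀, (x' a - x' b))
      = ∏ a ∈ (range K).erase i₀, ∏ b ∈ (Ioo a K).erase i₀, (x a - x b) :=
    Finset.prod_congr rfl fun a ha => Finset.prod_congr rfl fun b hb => by
      rw [hx' a, hx' b, if_neg (Finset.mem_erase.mp ha).1,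
        if_neg (Finset.mem_erase.mp hb).1]
  rw [h1, h2, h3]
  have he : (range K).erase i₀ = range i₀ ∪ Ioo i₀ K := by
    ext j
    simp only [Finset.mem_erase, Finset.mem_range, Finset.mem_union, Finset.mem_Ioo]
    omega
  have hdisj : Disjoint (range i₀) (Ioo i₀ K) := by
    rw [Finset.disjoint_left]
    intro j hj1 hj2
    simp only [Finset.mem_range] at hj1
    simp only [Finset.mem_Ioo] at hj2
    omega
  have hDd : (∏ j ∈ (range K).erase i₀, (x i₀ - x j))
      = (∏ j ∈ range i₀, (x i₀ - x j)) * ∏ j ∈ Ioo i₀ K, (x i₀ - x j) := by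
    rw [he, Finset.prod_union hdisj]
  have hN : (∏ j ∈ (range K).erase i₀, (x i₀ - x j - 1))
      = (∏ j ∈ range i₀, (x i₀ - x j - 1)) * ∏ j ∈ Ioo i₀ K, (x i₀ - x j - 1) := by
    rw [he, Finset.prod_union hdisj]
  rw [hDd, hN]
  have hIoo : (∏ b ∈ Ioo i₀ K, (x i₀ - 1 - x b)) * (∏ b ∈ Ioo i₀ K, (x i₀ - x b))
      = (∏ b ∈ Ioo i₀ K, (x i₀ - x b)) * (∏ b ∈ Ioo i₀ K, (x i₀ - x b - 1)) := by
    rw [← Finset.prod_mul_distrib, ← Finset.prod_mul_distrib]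
    exact Finset.prod_congr rfl fun b _ => by ring
  have hrange : (∏ a ∈ range i₀, (x a - (x i₀ - 1))) * (∏ a ∈ range i₀, (x i₀ - x a))
      = (∏ a ∈ range i₀, (x a - x i₀)) * (∏ a ∈ range i₀, (x i₀ - x a - 1)) := by
    rw [← Finset.prod_mul_distrib, ← Finset.prod_mul_distrib]
    exact Finset.prod_congr rfl fun a _ => by ring
  calc (∏ b ∈ Ioo i₀ K, (x i₀ - 1 - x b))
        * ((∏ a ∈ range i₀, (x a - (x i₀ - 1)))
          * ∏ a ∈ (range K).erase i₀, ∏ b ∈ (Ioo a K).erase i₀, (x a - x b))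
        * ((∏ j ∈ range i₀, (x i₀ - x j)) * ∏ j ∈ Ioo i₀ K, (x i₀ - x j))
      = ((∏ b ∈ Ioo i₀ K, (x i₀ - 1 - x b)) * (∏ b ∈ Ioo i₀ K, (x i₀ - x b)))
        * ((∏ a ∈ range i₀, (x a - (x i₀ - 1))) * (∏ a ∈ range i₀, (x i₀ - x a)))
        * (∏ a ∈ (range K).erase i₀, ∏ b ∈ (Ioo a K).erase i₀, (x a - x b)) := by
        ring
    _ = ((∏ b ∈ Ioo i₀ K, (x i₀ - x b)) * (∏ b ∈ Ioo i₀ K, (x i₀ - x b - 1)))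
        * ((∏ a ∈ range i₀, (x a - x i₀)) * (∏ a ∈ range i₀, (x i₀ - x a - 1)))
        * (∏ a ∈ (range K).erase i₀, ∏ b ∈ (Ioo a K).erase i₀, (x a - x b)) := by
        rw [hIoo, hrange]
    _ = (∏ b ∈ Ioo i₀ K, (x i₀ - x b))
        * ((∏ a ∈ range i₀, (x a - x i₀))
          * ∏ a ∈ (range K).erase i₀, ∏ b ∈ (Ioo a K).erase i₀, (x a - x b))
        * ((∏ j ∈ range i₀, (x i₀ - x j - 1)) * ∏ j ∈ Ioo i₀ K, (x i₀ - x j - 1)) := by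
        ring

open Classical in
lemma corner_term (μ : YoungDiagram) (m : ℕ) (hcard : μ.card = m + 1)
    (c : ℕ × ℕ) (hc : IsCorner μ c)
    (ih : nSYT (eraseC μ c hc) m
        * ∏ e ∈ (eraseC μ c hc).cells, hook (eraseC μ c hc) e = m.factorial) :
    (nSYT (eraseC μ c hc) m : ℚ) * (∏ e ∈ μ.cells, (hook μ e : ℚ))
      = (m.factorial : ℚ) * ((ell μ (m+1) c.1 : ℚ)
          * ∏ j ∈ (range (m+1)).erase c.1,
              (((ell μ (m+1) c.1 : ℚ) - (ell μ (m+1) j : ℚ) - 1)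
                / ((ell μ (m+1) c.1 : ℚ) - (ell μ (m+1) j : ℚ)))) := by
  set K := m + 1 with hKdef
  set μ' := eraseC μ c hc with hμ'def
  have hK : nrows μ ≤ K := hcard ▸ nrows_le_card μ
  have hcor := (isCorner_iff μ c.1 c.2).mp (by exact hc)
  obtain ⟨hrpos, hc2, hdrop⟩ := hcor
  have hi₀ : c.1 < K := lt_of_lt_of_le ((rowLen_pos_iff μ c.1).mp hrpos) hK
  have hK' : nrows μ' ≤ K := le_trans (nrows_eraseC_le μ c hc) hK
  have hrowLen' : ∀ i, μ'.rowLen i = if i = c.1 then μ.rowLen i - 1 else μ.rowLen i :=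
    rowLen_eraseC μ c hc
  have hx'eq : ∀ j, ((ell μ' K j : ℕ) : ℚ)
      = if j = c.1 then ((ell μ K j : ℕ) : ℚ) - 1 else ((ell μ K j : ℕ) : ℚ) := by
    intro j
    by_cases h : j = c.1
    · rw [if_pos h]
      have hposj : 0 < μ.rowLen j := by rw [h]; exact hrpos
      have h1 : ell μ' K j + 1 = ell μ K j := by
        unfold ell
        rw [hrowLen' j, if_pos h]
        omega
      have h2 := congrArg (Nat.cast : ℕ → ℚ) h1
      push_cast at h2
      linarith
    · rw [if_neg h]
      have h1 : ell μ' K j = ell μ K j := by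
        unfold ell
        rw [hrowLen' j, if_neg h]
      rw [h1]
  -- nonzero facts
  have hxinj : ∀ a b : ℕ, a < K → b < K → a ≠ b →
      ((ell μ K a : ℕ) : ℚ) ≠ ((ell μ K b : ℕ) : ℚ) := by
    intro a b ha hb hab
    rcases Nat.lt_or_ge a b with h | h
    · have := ell_strictAnti μ K hK hb h
      intro hcast
      have := Nat.cast_inj.mp hcast
      omega
    · have hba : b < a := by omega
      have := ell_strictAnti μ K hK ha hba
      intro hcast
      have := Nat.cast_inj.mp hcast
      omega
  have hAne : (∏ a ∈ range K, ∏ b ∈ Ioo a K, ((ell μ K a : ℚ) - (ell μ K b : ℚ))) ≠ 0 := by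
    rw [Finset.prod_ne_zero_iff]
    intro a ha
    rw [Finset.prod_ne_zero_iff]
    intro b hb
    have h1 := (Finset.mem_Ioo.mp hb).1
    have h2 := (Finset.mem_Ioo.mp hb).2
    exact sub_ne_zero.mpr (hxinj a b (Finset.mem_range.mp ha) h2 (by omega))
  have hF'ne : (∏ i ∈ range K, ((ell μ' K i).factorial : ℚ)) ≠ 0 := by
    rw [Finset.prod_ne_zero_iff]
    intro i _
    exact Nat.cast_ne_zero.mpr (Nat.factorial_ne_zero _)
  have hDdne : (∏ j ∈ (range K).erase c.1, ((ell μ K c.1 : ℚ) - (ell μ K j : ℚ))) ≠ 0 := by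
    rw [Finset.prod_ne_zero_iff]
    intro j hj
    exact sub_ne_zero.mpr
      (hxinj c.1 j hi₀ (Finset.mem_range.mp (Finset.mem_erase.mp hj).2)
        (Ne.symm (Finset.mem_erase.mp hj).1))
  -- product formulas (lemma A), cast to ℚ
  have hDcast : ((∏ a ∈ range K, ∏ b ∈ Ioo a K, (ell μ K a - ell μ K b) : ℕ) : ℚ)
      = ∏ a ∈ range K, ∏ b ∈ Ioo a K, ((ell μ K a : ℚ) - (ell μ K b : ℚ)) := by
    rw [Nat.cast_prod]
    refine Finset.prod_congr rfl fun a _ => ?_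
    rw [Nat.cast_prod]
    refine Finset.prod_congr rfl fun b hb => ?_
    have hlt := ell_strictAnti μ K hK (Finset.mem_Ioo.mp hb).2 (Finset.mem_Ioo.mp hb).1
    rw [Nat.cast_sub (le_of_lt hlt)]
  have hAQ : (∏ e ∈ μ.cells, (hook μ e : ℚ))
      * (∏ a ∈ range K, ∏ b ∈ Ioo a K, ((ell μ K a : ℚ) - (ell μ K b : ℚ)))
      = ∏ i ∈ range K, ((ell μ K i).factorial : ℚ) := by
    rw [← hDcast, ← Nat.cast_prod, ← Nat.cast_mul, hook_prod_mul_delta μ K hK,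
      Nat.cast_prod]
  have hD'cast : ((∏ a ∈ range K, ∏ b ∈ Ioo a K, (ell μ' K a - ell μ' K b) : ℕ) : ℚ)
      = ∏ a ∈ range K, ∏ b ∈ Ioo a K, ((ell μ' K a : ℚ) - (ell μ' K b : ℚ)) := by
    rw [Nat.cast_prod]
    refine Finset.prod_congr rfl fun a _ => ?_
    rw [Nat.cast_prod]
    refine Finset.prod_congr rfl fun b hb => ?_
    have hlt := ell_strictAnti μ' K hK' (Finset.mem_Ioo.mp hb).2 (Finset.mem_Ioo.mp hb).1
    rw [Nat.cast_sub (le_of_lt hlt)]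
  have hA'Q : (∏ e ∈ μ'.cells, (hook μ' e : ℚ))
      * (∏ a ∈ range K, ∏ b ∈ Ioo a K, ((ell μ' K a : ℚ) - (ell μ' K b : ℚ)))
      = ∏ i ∈ range K, ((ell μ' K i).factorial : ℚ) := by
    rw [← hD'cast, ← Nat.cast_prod, ← Nat.cast_mul, hook_prod_mul_delta μ' K hK',
      Nat.cast_prod]
  -- F = x i₀ * F'
  have hellpos : 0 < ell μ K c.1 := by unfold ell; omega
  have hellpred : ell μ' K c.1 = ell μ K c.1 - 1 := by
    unfold ell
    rw [hrowLen' c.1, if_pos rfl]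
    omega
  have hfact : (ell μ K c.1).factorial = ell μ K c.1 * (ell μ' K c.1).factorial := by
    rw [hellpred]
    exact (Nat.mul_factorial_pred hellpos.ne').symm
  have hsamefact : ∀ j ∈ (range K).erase c.1,
      ((ell μ K j).factorial : ℚ) = ((ell μ' K j).factorial : ℚ) := by
    intro j hj
    have h1 : ell μ' K j = ell μ K j := by
      unfold ell
      rw [hrowLen' j, if_neg (Finset.mem_erase.mp hj).1]
    rw [h1]
  have hF : (∏ i ∈ range K, ((ell μ K i).factorial : ℚ))
      = (ell μ K c.1 : ℚ) * ∏ i ∈ range K, ((ell μ' K i).factorial : ℚ) := by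
    rw [← Finset.mul_prod_erase (range K) (fun i => ((ell μ K i).factorial : ℚ))
        (Finset.mem_range.mpr hi₀),
      ← Finset.mul_prod_erase (range K) (fun i => ((ell μ' K i).factorial : ℚ))
        (Finset.mem_range.mpr hi₀),
      Finset.prod_congr rfl hsamefact, hfact]
    push_cast
    ring
  -- DL
  have hDLa : (∏ a ∈ range K, ∏ b ∈ Ioo a K, ((ell μ' K a : ℚ) - (ell μ' K b : ℚ)))
        * ∏ j ∈ (range K).erase c.1, ((ell μ K c.1 : ℚ) - (ell μ K j : ℚ))
      = (∏ a ∈ range K, ∏ b ∈ Ioo a K, ((ell μ K a : ℚ) - (ell μ K b : ℚ)))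
        * ∏ j ∈ (range K).erase c.1, ((ell μ K c.1 : ℚ) - (ell μ K j : ℚ) - 1) :=
    DL K c.1 hi₀ (fun i => ((ell μ K i : ℕ) : ℚ)) (fun i => ((ell μ' K i : ℕ) : ℚ)) hx'eq
  -- IH in ℚ
  have ihQ : (nSYT μ' m : ℚ) * (∏ e ∈ μ'.cells, (hook μ' e : ℚ)) = (m.factorial : ℚ) := by
    exact_mod_cast congrArg (Nat.cast : ℕ → ℚ) ih
  have hNF' : (nSYT μ' m : ℚ) * (∏ i ∈ range K, ((ell μ' K i).factorial : ℚ))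
      = (m.factorial : ℚ)
        * (∏ a ∈ range K, ∏ b ∈ Ioo a K, ((ell μ' K a : ℚ) - (ell μ' K b : ℚ))) := by
    rw [← hA'Q, ← mul_assoc, ihQ]
  have hAF' : (∏ a ∈ range K, ∏ b ∈ Ioo a K, ((ell μ K a : ℚ) - (ell μ K b : ℚ)))
      * (∏ i ∈ range K, ((ell μ' K i).factorial : ℚ)) ≠ 0 := mul_ne_zero hAne hF'ne
  have hkey : (nSYT μ' m : ℚ) * (∏ e ∈ μ.cells, (hook μ e : ℚ))
        * (∏ j ∈ (range K).erase c.1, ((ell μ K c.1 : ℚ) - (ell μ K j : ℚ)))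
        * ((∏ a ∈ range K, ∏ b ∈ Ioo a K, ((ell μ K a : ℚ) - (ell μ K b : ℚ)))
          * (∏ i ∈ range K, ((ell μ' K i).factorial : ℚ)))
      = (m.factorial : ℚ) * (ell μ K c.1 : ℚ)
        * (∏ j ∈ (range K).erase c.1, ((ell μ K c.1 : ℚ) - (ell μ K j : ℚ) - 1))
        * ((∏ a ∈ range K, ∏ b ∈ Ioo a K, ((ell μ K a : ℚ) - (ell μ K b : ℚ)))
          * (∏ i ∈ range K, ((ell μ' K i).factorial : ℚ))) := by
    calc (nSYT μ' m : ℚ) * (∏ e ∈ μ.cells, (hook μ e : ℚ))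
        * (∏ j ∈ (range K).erase c.1, ((ell μ K c.1 : ℚ) - (ell μ K j : ℚ)))
        * ((∏ a ∈ range K, ∏ b ∈ Ioo a K, ((ell μ K a : ℚ) - (ell μ K b : ℚ)))
          * (∏ i ∈ range K, ((ell μ' K i).factorial : ℚ)))
        = ((nSYT μ' m : ℚ) * (∏ i ∈ range K, ((ell μ' K i).factorial : ℚ)))
          * (((∏ e ∈ μ.cells, (hook μ e : ℚ))
              * (∏ a ∈ range K, ∏ b ∈ Ioo a K, ((ell μ K a : ℚ) - (ell μ K b : ℚ))))
            * (∏ j ∈ (range K).erase c.1, ((ell μ K c.1 : ℚ) - (ell μ K j : ℚ)))) := by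
          ring
      _ = ((m.factorial : ℚ)
            * (∏ a ∈ range K, ∏ b ∈ Ioo a K, ((ell μ' K a : ℚ) - (ell μ' K b : ℚ))))
          * ((∏ i ∈ range K, ((ell μ K i).factorial : ℚ))
            * (∏ j ∈ (range K).erase c.1, ((ell μ K c.1 : ℚ) - (ell μ K j : ℚ)))) := by
          rw [hNF', hAQ]
      _ = (m.factorial : ℚ) * (∏ i ∈ range K, ((ell μ K i).factorial : ℚ))
          * ((∏ a ∈ range K, ∏ b ∈ Ioo a K, ((ell μ' K a : ℚ) - (ell μ' K b : ℚ)))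
            * (∏ j ∈ (range K).erase c.1, ((ell μ K c.1 : ℚ) - (ell μ K j : ℚ)))) := by
          ring
      _ = (m.factorial : ℚ) * (∏ i ∈ range K, ((ell μ K i).factorial : ℚ))
          * ((∏ a ∈ range K, ∏ b ∈ Ioo a K, ((ell μ K a : ℚ) - (ell μ K b : ℚ)))
            * (∏ j ∈ (range K).erase c.1, ((ell μ K c.1 : ℚ) - (ell μ K j : ℚ) - 1))) := by
          rw [hDLa]
      _ = (m.factorial : ℚ)
          * ((ell μ K c.1 : ℚ) * ∏ i ∈ range K, ((ell μ' K i).factorial : ℚ))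
          * ((∏ a ∈ range K, ∏ b ∈ Ioo a K, ((ell μ K a : ℚ) - (ell μ K b : ℚ)))
            * (∏ j ∈ (range K).erase c.1, ((ell μ K c.1 : ℚ) - (ell μ K j : ℚ) - 1))) := by
          rw [hF]
      _ = (m.factorial : ℚ) * (ell μ K c.1 : ℚ)
          * (∏ j ∈ (range K).erase c.1, ((ell μ K c.1 : ℚ) - (ell μ K j : ℚ) - 1))
          * ((∏ a ∈ range K, ∏ b ∈ Ioo a K, ((ell μ K a : ℚ) - (ell μ K b : ℚ)))
            * (∏ i ∈ range K, ((ell μ' K i).factorial : ℚ))) := by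
          ring
  have h2 : (nSYT μ' m : ℚ) * (∏ e ∈ μ.cells, (hook μ e : ℚ))
        * (∏ j ∈ (range K).erase c.1, ((ell μ K c.1 : ℚ) - (ell μ K j : ℚ)))
      = (m.factorial : ℚ) * (ell μ K c.1 : ℚ)
        * (∏ j ∈ (range K).erase c.1, ((ell μ K c.1 : ℚ) - (ell μ K j : ℚ) - 1)) :=
    mul_right_cancel₀ hAF' hkey
  apply mul_right_cancel₀ hDdne
  rw [Finset.prod_div_distrib]
  field_simp
  calc (nSYT μ' m : ℚ) * (∏ e ∈ μ.cells, (hook μ e : ℚ))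
      * (∏ j ∈ (range K).erase c.1, ((ell μ K c.1 : ℚ) - (ell μ K j : ℚ)))
      = (m.factorial : ℚ) * (ell μ K c.1 : ℚ)
        * (∏ j ∈ (range K).erase c.1, ((ell μ K c.1 : ℚ) - (ell μ K j : ℚ) - 1)) := h2
    _ = (m.factorial : ℚ) * ((ell μ K c.1 : ℚ)
        * (∏ j ∈ (range K).erase c.1, ((ell μ K c.1 : ℚ) - (ell μ K j : ℚ) - 1))) := by
        ring
  ring

open Classical in
lemma term_zero (μ : YoungDiagram) (m : ℕ) (hK : nrows μ ≤ m + 1) (i : ℕ)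
    (hi : i < m + 1) (hnc : ¬ (0 < μ.rowLen i ∧ μ.rowLen (i + 1) < μ.rowLen i)) :
    (ell μ (m+1) i : ℚ) * ∏ j ∈ (range (m+1)).erase i,
        (((ell μ (m+1) i : ℚ) - (ell μ (m+1) j : ℚ) - 1)
          / ((ell μ (m+1) i : ℚ) - (ell μ (m+1) j : ℚ))) = 0 := by
  rcases Nat.lt_or_ge (i + 1) (m + 1) with hi1 | hi1
  · have hanti : μ.rowLen (i + 1) ≤ μ.rowLen i := μ.rowLen_anti i (i + 1) (by omega)
    have heq : μ.rowLen (i + 1) = μ.rowLen i := by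
      rcases Nat.eq_zero_or_pos (μ.rowLen i) with hr | hr
      · omega
      · have h2 : ¬ μ.rowLen (i + 1) < μ.rowLen i := fun hh => hnc ⟨hr, hh⟩
        omega
    apply mul_eq_zero_of_right
    apply Finset.prod_eq_zero
      (Finset.mem_erase.mpr ⟨by omega, Finset.mem_range.mpr hi1⟩)
    have hd : ell μ (m+1) i = ell μ (m+1) (i + 1) + 1 := by
      unfold ell
      omega
    rw [hd]
    push_cast
    have hz : ((ell μ (m+1) (i+1) : ℚ) + 1) - (ell μ (m+1) (i+1) : ℚ) - 1 = 0 := by ring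
    rw [hz, zero_div]
  · have hrow0 : μ.rowLen i = 0 := by
      rcases Nat.eq_zero_or_pos (μ.rowLen i) with h | h
      · exact h
      · exfalso
        have h2 : ¬ μ.rowLen (i + 1) < μ.rowLen i := fun hh => hnc ⟨h, hh⟩
        have h3 : μ.rowLen (i + 1) = 0 := rowLen_eq_zero_of_le μ (by omega)
        omega
    have hz : ell μ (m+1) i = 0 := by
      unfold ell
      omega
    rw [hz]
    simp

open Classical in
lemma main : ∀ n : ℕ, ∀ μ : YoungDiagram, μ.card = n →
    nSYT μ n * ∏ e ∈ μ.cells, hook μ e = n.factorial := by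
  intro n
  induction n with
  | zero =>
    intro μ h
    have hcells : μ.cells = ∅ := Finset.card_eq_zero.mp h
    rw [nSYT_zero μ h, hcells]
    simp
  | succ m ih =>
    intro μ hcard
    have hK : nrows μ ≤ m + 1 := hcard ▸ nrows_le_card μ
    have hxinj : Set.InjOn (fun i => ((ell μ (m+1) i : ℕ) : ℚ)) (range (m+1)) := by
      intro a ha b hb hab
      simp only [Finset.coe_range, Set.mem_Iio] at ha hb
      by_contra hne
      rcases Nat.lt_or_ge a b with h | h
      · have hlt := ell_strictAnti μ (m+1) hK hb h
        have := Nat.cast_inj.mp hab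
        omega
      · have hba : b < a := by omega
        have hlt := ell_strictAnti μ (m+1) hK ha hba
        have := Nat.cast_inj.mp hab
        omega
    have hQ : (nSYT μ (m+1) : ℚ) * (∏ e ∈ μ.cells, (hook μ e : ℚ))
        = (((m+1).factorial : ℕ) : ℚ) := by
      rw [nSYT_rec μ m]
      push_cast
      rw [Finset.sum_mul]
      have hper : ∀ c ∈ (corners μ).attach,
          (nSYT (eraseC μ c.1 (mem_corners.mp c.2)) m : ℚ)
            * (∏ e ∈ μ.cells, (hook μ e : ℚ))
          = (m.factorial : ℚ) * ((ell μ (m+1) c.1.1 : ℚ)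
              * ∏ j ∈ (range (m+1)).erase c.1.1,
                  (((ell μ (m+1) c.1.1 : ℚ) - (ell μ (m+1) j : ℚ) - 1)
                    / ((ell μ (m+1) c.1.1 : ℚ) - (ell μ (m+1) j : ℚ)))) := by
        intro c _
        exact corner_term μ m hcard c.1 (mem_corners.mp c.2)
          (ih _ (by rw [card_eraseC (mem_corners.mp c.2), hcard]; omega))
      rw [Finset.sum_congr rfl hper, ← Finset.mul_sum]
      have hsum : (∑ c ∈ (corners μ).attach, ((ell μ (m+1) c.1.1 : ℚ)
              * ∏ j ∈ (range (m+1)).erase c.1.1,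
                  (((ell μ (m+1) c.1.1 : ℚ) - (ell μ (m+1) j : ℚ) - 1)
                    / ((ell μ (m+1) c.1.1 : ℚ) - (ell μ (m+1) j : ℚ)))))
          = ((m : ℚ) + 1) := by
        rw [Finset.sum_attach (corners μ) (fun e => ((ell μ (m+1) e.1 : ℚ)
              * ∏ j ∈ (range (m+1)).erase e.1,
                  (((ell μ (m+1) e.1 : ℚ) - (ell μ (m+1) j : ℚ) - 1)
                    / ((ell μ (m+1) e.1 : ℚ) - (ell μ (m+1) j : ℚ)))))]
        have hbij : (∑ e ∈ corners μ, ((ell μ (m+1) e.1 : ℚ)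
              * ∏ j ∈ (range (m+1)).erase e.1,
                  (((ell μ (m+1) e.1 : ℚ) - (ell μ (m+1) j : ℚ) - 1)
                    / ((ell μ (m+1) e.1 : ℚ) - (ell μ (m+1) j : ℚ)))))
            = ∑ i ∈ (range (m+1)).filter
                (fun i => 0 < μ.rowLen i ∧ μ.rowLen (i+1) < μ.rowLen i),
                ((ell μ (m+1) i : ℚ)
                  * ∏ j ∈ (range (m+1)).erase i,
                      (((ell μ (m+1) i : ℚ) - (ell μ (m+1) j : ℚ) - 1)
                        / ((ell μ (m+1) i : ℚ) - (ell μ (m+1) j : ℚ)))) := by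
          refine Finset.sum_nbij' (fun e => e.1) (fun i => (i, μ.rowLen i - 1))
            ?_ ?_ ?_ ?_ ?_
          · intro e he
            have hcor := (isCorner_iff μ e.1 e.2).mp (by exact mem_corners.mp he)
            rw [Finset.mem_filter, Finset.mem_range]
            exact ⟨lt_of_lt_of_le ((rowLen_pos_iff μ e.1).mp hcor.1) hK,
              hcor.1, hcor.2.2⟩
          · intro i hi
            rw [Finset.mem_filter] at hi
            exact mem_corners.mpr ((isCorner_iff μ i (μ.rowLen i - 1)).mpr
              ⟨hi.2.1, rfl, hi.2.2⟩)
          · intro e he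
            have hcor := (isCorner_iff μ e.1 e.2).mp (by exact mem_corners.mp he)
            exact Prod.ext rfl hcor.2.1.symm
          · intro i _
            rfl
          · intro e _
            rfl
        rw [hbij]
        rw [Finset.sum_subset (Finset.filter_subset _ (range (m+1)))
          (fun i hi hni => term_zero μ m hK i (Finset.mem_range.mp hi)
            (fun hcr => hni (Finset.mem_filter.mpr ⟨hi, hcr⟩)))]
        have hki := key_identity (range (m+1)) (fun i => ((ell μ (m+1) i : ℕ) : ℚ)) hxinj
        rw [hki]
        rw [Finset.card_range, ← Nat.cast_sum, sum_ell μ (m+1) hK, hcard]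
        push_cast
        ring
      rw [hsum]
      rw [Nat.factorial_succ]
      push_cast
      ring
    exact_mod_cast hQ

end HLF

open Classical in
/-- `π_λ(1) = |st_λ|`, and the hook length formula
`|st_λ| = n! / Π_{α∈λ} h_α` (stated multiplied out). -/
theorem stmt15 (μ : YoungDiagram) (n : ℕ) (hn : μ.card = n)
    (P : Cell μ ≃ Fin n) (hP : IsSYT μ n P) :
    Polynomial.eval 1 (piP μ n P) =
      ((Finset.univ.filter fun Q : Cell μ ≃ Fin n => IsSYT μ n Q).card : ℤ) ∧
    (Finset.univ.filter fun Q : Cell μ ≃ Fin n => IsSYT μ n Q).card *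
        ∏ c ∈ μ.cells, hook μ c = Nat.factorial n := by
  constructor
  · rw [piP, Polynomial.eval_finset_sum]
    simp only [Polynomial.eval_pow, Polynomial.eval_X, one_pow]
    rw [Finset.sum_const, nsmul_eq_mul, mul_one]
  · exact HLF.main n μ hn
end
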